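/- arXiv:1910.13472 — 13 statements merged into one kernel-verified Lean document; each statement's English description precedes it below -/
import Mathlib

section
/- Let F_q be a finite field and let C ⊆ F_q^n be a linear code of dimension k ≥ 1. Let r ≥ 1 and suppose the coordinate set {1,…,n} is partitioned into disjoint blocks, each of size r+1, such that for every coordinate i, any two codewords c, c′ ∈ C that agree on all coordinates of the block containing i other than i itself also satisfy c_i = c′_i. Then the minimum distance d of C satisfies d ≤ n − k − ⌈k/r⌉ + 2; equivalently, there exists a nonzero codeword of Hamming weight at most n − k − ⌈k/r⌉ + 2. -/
open Finset

section Aux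

variable {F : Type} [Field F] {n : ℕ} (C : Submodule F (Fin n → F))

/-- Codewords vanishing on `S`. -/
def KK (S : Finset (Fin n)) : Submodule F (Fin n → F) where
  carrier := {c | c ∈ C ∧ ∀ j ∈ S, c j = 0}
  add_mem' := by
    rintro a b ⟨ha, ha0⟩ ⟨hb, hb0⟩
    exact ⟨C.add_mem ha hb, fun j hj => by simp [ha0 j hj, hb0 j hj]⟩
  zero_mem' := ⟨C.zero_mem, fun j _ => rfl⟩
  smul_mem' := by
    rintro m a ⟨ha, ha0⟩
    exact ⟨C.smul_mem m ha, fun j hj => by simp [ha0 j hj]⟩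

lemma mem_KK {S : Finset (Fin n)} {c : Fin n → F} :
    c ∈ KK C S ↔ c ∈ C ∧ ∀ j ∈ S, c j = 0 := Iff.rfl

lemma KK_mono {S T : Finset (Fin n)} (h : S ⊆ T) : KK C T ≤ KK C S :=
  fun c hc => ⟨hc.1, fun j hj => hc.2 j (h hj)⟩

lemma KK_dim_le [DecidableEq (Fin n)] (S T T' : Finset (Fin n)) (hTT' : T ⊆ T')
    (hT : ∀ c ∈ C, (∀ j ∈ S, c j = 0) → (∀ j ∈ T, c j = 0) → ∀ j ∈ T', c j = 0) :
    Module.finrank F (KK C S) ≤ Module.finrank F (KK C (S ∪ T')) + T.card := by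
  classical
  let φ : (KK C S) →ₗ[F] ({ x // x ∈ T } → F) :=
    { toFun := fun c => fun j => (c : Fin n → F) j.1
      map_add' := fun a b => rfl
      map_smul' := fun m a => rfl }
  have hker : LinearMap.ker φ = (KK C (S ∪ T')).comap (KK C S).subtype := by
    ext c
    simp only [LinearMap.mem_ker, Submodule.mem_comap]
    constructor
    · intro h
      have hv : ∀ j ∈ T, (c : Fin n → F) j = 0 := fun j hj => congrFun h ⟨j, hj⟩
      refine ⟨c.2.1, fun j hj => ?_⟩
      rcases Finset.mem_union.mp hj with h1 | h1
      · exact c.2.2 j h1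
      · exact hT c c.2.1 c.2.2 hv j h1
    · intro h
      funext j
      exact h.2 j.1 (Finset.mem_union_right _ (hTT' j.2))
  have h1 := LinearMap.finrank_range_add_finrank_ker φ
  have h2 : Module.finrank F (LinearMap.ker φ) = Module.finrank F (KK C (S ∪ T')) := by
    rw [hker]
    exact LinearEquiv.finrank_eq (Submodule.comapSubtypeEquivOfLe
      (show KK C (S ∪ T') ≤ KK C S from KK_mono C Finset.subset_union_left))
  have h3 : Module.finrank F (LinearMap.range φ) ≤ T.card := by
    have := Submodule.finrank_le (LinearMap.range φ)
    rwa [Module.finrank_fintype_fun_eq_card, Fintype.card_coe] at this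
  omega

lemma KK_ne_bot {S : Finset (Fin n)} (h : 1 ≤ Module.finrank F (KK C S)) :
    ∃ c : Fin n → F, c ∈ KK C S ∧ c ≠ 0 := by
  have hne : KK C S ≠ ⊥ := by
    intro hb
    rw [hb, finrank_bot] at h
    omega
  obtain ⟨c, hc, hc0⟩ := (Submodule.ne_bot_iff _).mp hne
  exact ⟨c, hc, hc0⟩

end Aux

/-- Singleton-type bound for locally recoverable codes whose recovery
sets come from a partition of the coordinates into blocks of size `r + 1`. -/
theorem stmt_0
    (F : Type) [Field F] [Fintype F] [DecidableEq F]
    (n : ℕ) (C : Submodule F (Fin n → F))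
    (k : ℕ) (hk : k = Module.finrank F C) (hk1 : 1 ≤ k)
    (r : ℕ) (hr : 1 ≤ r)
    (ι : Type) [DecidableEq ι] (blk : Fin n → ι)
    -- every block (i.e. every fiber of `blk` containing a coordinate) has size r + 1
    (hblk : ∀ i : Fin n,
      (Finset.univ.filter (fun j : Fin n => blk j = blk i)).card = r + 1)
    -- local recoverability: the value at coordinate i of a codeword is determined by
    -- the values at the other coordinates of the block containing i
    (hrec : ∀ i : Fin n, ∀ c c' : Fin n → F, c ∈ C → c' ∈ C →
      (∀ j : Fin n, blk j = blk i → j ≠ i → c j = c' j) → c i = c' i) :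
    ∃ c : Fin n → F, c ∈ C ∧ c ≠ 0 ∧
      (hammingNorm c : ℤ) ≤ (n : ℤ) - k - ⌈(k : ℚ) / (r : ℚ)⌉ + 2 := by
  classical
  -- notation for blocks
  set B : Fin n → Finset (Fin n) :=
    fun i => Finset.univ.filter (fun j : Fin n => blk j = blk i) with hB
  have hmemB : ∀ i : Fin n, i ∈ B i := fun i => by simp [hB]
  -- the key codimension bound for a block
  have hblock_dim : ∀ (S : Finset (Fin n)) (i : Fin n),
      Module.finrank F (KK C S) ≤ Module.finrank F (KK C (S ∪ B i)) + r := by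
    intro S i
    have hcard : ((B i).erase i).card = r := by
      rw [Finset.card_erase_of_mem (hmemB i), hblk i]
      omega
    have := KK_dim_le C S ((B i).erase i) (B i) (Finset.erase_subset _ _) ?_
    · rwa [hcard] at this
    · intro c hc _ hvan j hj
      by_cases hne : j = i
      · subst hne
        have h0 : (0 : Fin n → F) ∈ C := C.zero_mem
        have := hrec j c 0 hc h0 (fun j' hj' hji => by
          have : j' ∈ (B j).erase j := Finset.mem_erase.mpr ⟨hji, by simp [hB, hj']⟩
          simpa using hvan j' this)
        simpa using this
      · exact hvan j (Finset.mem_erase.mpr ⟨hne, hj⟩)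
  -- greedy construction
  have key : ∀ d : ℕ, ∀ S : Finset (Fin n), ∀ t : ℕ,
      (∀ j ∈ S, ∀ j' : Fin n, blk j' = blk j → j' ∈ S) →
      S.card = t * (r + 1) → Module.finrank F (KK C S) = d → 1 ≤ d → k ≤ t * r + d →
      ∃ (S' : Finset (Fin n)) (t' d' : ℕ) (i : Fin n),
        S'.card = t' * (r + 1) ∧ Module.finrank F (KK C S') = d' ∧
        1 ≤ d' ∧ d' ≤ r ∧ k ≤ t' * r + d' ∧
        Disjoint S' (B i) ∧
        Module.finrank F (KK C (S' ∪ B i)) = 0 := by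
    intro d
    induction d using Nat.strong_induction_on with
    | _ d IH =>
      intro S t hclosed hcard hdim hd1 hkd
      -- find a nonzero codeword vanishing on S
      obtain ⟨c, hcK, hc0⟩ := KK_ne_bot C (by omega : 1 ≤ Module.finrank F (KK C S))
      obtain ⟨i, hci⟩ : ∃ i, c i ≠ 0 := by
        by_contra h
        push_neg at h
        exact hc0 (funext fun i => h i)
      have hiS : i ∉ S := fun h => hci (hcK.2 i h)
      have hdisj : Disjoint S (B i) := by
        rw [Finset.disjoint_left]
        intro j hjS hjB
        have hjB' : blk j = blk i := by simpa [hB] using hjB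
        exact hiS (hclosed j hjS i hjB'.symm)
      set d' := Module.finrank F (KK C (S ∪ B i)) with hd'
      have hlt : d' < d := by
        rw [← hdim]
        apply Submodule.finrank_lt_finrank_of_lt
        refine lt_of_le_of_ne (KK_mono C Finset.subset_union_left) ?_
        intro heq
        have : c ∈ KK C (S ∪ B i) := heq ▸ hcK
        exact hci (this.2 i (Finset.mem_union_right _ (hmemB i)))
      have hge : d ≤ d' + r := hdim ▸ hblock_dim S i
      rcases Nat.eq_zero_or_pos d' with h0 | hpos
      · exact ⟨S, t, d, i, hcard, hdim, hd1, by omega, hkd, hdisj, h0 ▸ hd'.symm⟩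
      · -- recurse
        refine IH d' hlt (S ∪ B i) (t + 1) ?_ ?_ hd'.symm hpos
          (by have h : (t + 1) * r = t * r + r := by ring
              omega)
        · intro j hj j' hj'
          rcases Finset.mem_union.mp hj with h1 | h1
          · exact Finset.mem_union_left _ (hclosed j h1 j' hj')
          · have : blk j = blk i := by simpa [hB] using h1
            exact Finset.mem_union_right _ (by simp [hB, hj', this])
        · rw [Finset.card_union_of_disjoint hdisj, hcard, hblk i]
          ring
  -- run the greedy starting from the empty set
  have hKKempty : Module.finrank F (KK C (∅ : Finset (Fin n))) = k := by
    have : KK C (∅ : Finset (Fin n)) = C := by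
      ext c; simp [mem_KK]
    rw [this, hk]
  obtain ⟨S, t, d, i, hScard, hSdim, hd1, hdr, hkd, hdisj, hzero⟩ :=
    key k ∅ 0 (by simp) (by simp) hKKempty hk1 (by omega)
  -- pick d - 1 extra coordinates from the block B i
  obtain ⟨T, hTB, hTcard⟩ := Finset.exists_subset_card_eq
    (show d - 1 ≤ (B i).card by rw [hblk i]; omega)
  -- the final set I := S ∪ T
  have hIdim : 1 ≤ Module.finrank F (KK C (S ∪ T)) := by
    have := KK_dim_le C S T T (le_refl T) (fun c _ _ h => h)
    rw [hSdim, hTcard] at this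
    omega
  obtain ⟨c, hcK, hc0⟩ := KK_ne_bot C hIdim
  refine ⟨c, hcK.1, hc0, ?_⟩
  -- cardinality of I
  have hTdisj : Disjoint S T := hdisj.mono_right hTB
  have hIcard : (S ∪ T).card = t * (r + 1) + (d - 1) := by
    rw [Finset.card_union_of_disjoint hTdisj, hScard, hTcard]
  -- hamming weight bound
  have hsub : Finset.univ.filter (fun j => c j ≠ 0) ⊆ Finset.univ \ (S ∪ T) := by
    intro j hj
    simp only [Finset.mem_filter, Finset.mem_univ, true_and] at hj
    simp only [Finset.mem_sdiff, Finset.mem_univ, true_and]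
    intro hjI
    exact hj (hcK.2 j hjI)
  have hham : hammingNorm c + (S ∪ T).card ≤ n := by
    have h1 : hammingNorm c ≤ (Finset.univ \ (S ∪ T)).card := Finset.card_le_card hsub
    have h2 : (Finset.univ \ (S ∪ T)).card = n - (S ∪ T).card := by
      rw [Finset.card_sdiff_of_subset (Finset.subset_univ _)]
      simp
    have h3 : (S ∪ T).card ≤ n := by
      have := Finset.card_le_card (Finset.subset_univ (S ∪ T))
      simpa using this
    omega
  -- ceiling bound : ⌈k/r⌉ ≤ t + 1
  have hkr : k ≤ (t + 1) * r := by
    have h : (t + 1) * r = t * r + r := by ring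
    omega
  have hceil : ⌈(k : ℚ) / (r : ℚ)⌉ ≤ (t : ℤ) + 1 := by
    rw [Int.ceil_le]
    rw [div_le_iff₀ (by exact_mod_cast hr : (0 : ℚ) < r)]
    have h : ((k : ℚ)) ≤ (((t + 1) * r : ℕ) : ℚ) := by exact_mod_cast hkr
    push_cast at h ⊢
    linarith
  -- final arithmetic
  have hham' : (hammingNorm c : ℤ) + (t * (r + 1) + (d - 1) : ℕ) ≤ n := by
    exact_mod_cast hIcard ▸ hham
  have hd1' : (1 : ℤ) ≤ d := by exact_mod_cast hd1
  have hcast : ((t * (r + 1) + (d - 1) : ℕ) : ℤ) = t * (r + 1) + d - 1 := by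
    push_cast [Nat.cast_sub hd1]
    ring
  rw [hcast] at hham'
  have hkd' : (k : ℤ) ≤ t * r + d := by exact_mod_cast hkd
  have hexp : (t : ℤ) * (r + 1) = t * r + t := by ring
  linarith [hceil, hham', hkd']
end

section
/- Fix a baseline configuration with b − M ≥ 1 and b − N ≥ 1. Then the evaluation map ev : V[M,N] → F_q^n, σ ↦ (σ(P_{i,j}; t_i))_{1≤i≤b, 1≤j≤r+1}, is injective; consequently the baseline code C = ev(V[M,N]) has dimension k = (M+1) + (r−1)(N+1). -/
open Polynomial

lemma deg_le_iff {F : Type} [Field F] {p : Polynomial F} {M : ℕ} :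
    p.degree ≤ (M : ℕ) ↔ p ∈ degreeLT F (M+1) := by
  rw [degreeLT_succ_eq_degreeLE, mem_degreeLE]

lemma key_lin {F : Type} [Field F] {m : ℕ} {ι : Type} [Fintype ι] [DecidableEq ι]
    (j₀ : ι) (hcard : Fintype.card ι = m + 2)
    (Pv : ι → (Fin m → F))
    (hP : LinearIndependent F (fun j' : {j' : ι // j' ≠ j₀} =>
      (((1 : F), Pv j') : F × (Fin m → F))))
    (α : F) (β : Fin m → F)
    (h : ∀ j', j' ≠ j₀ → α + ∑ ℓ, β ℓ * Pv j' ℓ = 0) :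
    α = 0 ∧ ∀ ℓ, β ℓ = 0 := by
  have hcard' : Fintype.card {j' : ι // j' ≠ j₀} = m + 1 := by
    rw [Fintype.card_subtype_compl, hcard]; simp
  have hfr : Module.finrank F (F × (Fin m → F)) = m + 1 := by
    simp [Module.finrank_prod]; ring
  have hspan := hP.span_eq_top_of_card_eq_finrank' (hcard'.trans hfr.symm)
  set L : F × (Fin m → F) →ₗ[F] F :=
    α • (LinearMap.fst F F (Fin m → F)) +
      ∑ ℓ, β ℓ • ((LinearMap.proj ℓ).comp (LinearMap.snd F F (Fin m → F))) with hL
  have hLapp : ∀ p : F × (Fin m → F), L p = α * p.1 + ∑ ℓ, β ℓ * p.2 ℓ := by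
    intro p; simp [hL, LinearMap.sum_apply, smul_eq_mul]
  have hL0 : L = 0 := by
    apply LinearMap.ext_on hspan
    rintro x ⟨j', rfl⟩
    rw [hLapp, LinearMap.zero_apply]
    simpa using h j' j'.2
  constructor
  · have := congrArg (fun f => f ((1 : F), (0 : Fin m → F))) hL0
    simpa [hLapp] using this
  · intro ℓ
    have := congrArg (fun f => f ((0 : F), Pi.single ℓ (1 : F))) hL0
    simp [hLapp] at this
    simpa [Pi.single_apply, Finset.sum_ite_eq'] using this


/-- for a baseline configuration with `b - M ≥ 1` and `b - N ≥ 1`, the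
evaluation map on `V[M,N]` is injective, and hence the baseline code has dimension
`(M+1) + (r-1)(N+1)`. -/
theorem stmt_2 (F : Type) [Field F] [Fintype F] [DecidableEq F]
    (r b M N : ℕ) (hr : 2 ≤ r) (hb : 1 ≤ b)
    (hM : M + 1 ≤ b) (hN : N + 1 ≤ b)
    (t : Fin b → F) (ht : Function.Injective t)
    (P : Fin b → Fin (r + 1) → (Fin (r - 1) → F))
    -- no r of the r+1 points in each fiber lie on an affine hyperplane
    (hP : ∀ (i : Fin b) (j : Fin (r + 1)), LinearIndependent F
      (fun j' : {j' : Fin (r + 1) // j' ≠ j} =>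
        (((1 : F), P i j') : F × (Fin (r - 1) → F)))) :
    -- injectivity of the evaluation map on V[M,N]
    (∀ (a₀ a₀' : Polynomial F) (a a' : Fin (r - 1) → Polynomial F),
      a₀.degree ≤ (M : ℕ) → a₀'.degree ≤ (M : ℕ) →
      (∀ ℓ, (a ℓ).degree ≤ (N : ℕ)) → (∀ ℓ, (a' ℓ).degree ≤ (N : ℕ)) →
      (∀ (i : Fin b) (j : Fin (r + 1)),
        a₀.eval (t i) + ∑ ℓ : Fin (r - 1), (a ℓ).eval (t i) * P i j ℓ
          = a₀'.eval (t i) + ∑ ℓ : Fin (r - 1), (a' ℓ).eval (t i) * P i j ℓ) →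
      a₀ = a₀' ∧ a = a') ∧
    -- dimension of the baseline code
    Module.finrank F (Submodule.span F
      {w : Fin b × Fin (r + 1) → F |
        ∃ (a₀ : Polynomial F) (a : Fin (r - 1) → Polynomial F),
          a₀.degree ≤ (M : ℕ) ∧ (∀ ℓ, (a ℓ).degree ≤ (N : ℕ)) ∧
          w = fun p => a₀.eval (t p.1)
            + ∑ ℓ : Fin (r - 1), (a ℓ).eval (t p.1) * P p.1 p.2 ℓ})
      = (M + 1) + (r - 1) * (N + 1) := by
  classical
  have hinj : (∀ (a₀ a₀' : Polynomial F) (a a' : Fin (r - 1) → Polynomial F),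
      a₀.degree ≤ (M : ℕ) → a₀'.degree ≤ (M : ℕ) →
      (∀ ℓ, (a ℓ).degree ≤ (N : ℕ)) → (∀ ℓ, (a' ℓ).degree ≤ (N : ℕ)) →
      (∀ (i : Fin b) (j : Fin (r + 1)),
        a₀.eval (t i) + ∑ ℓ : Fin (r - 1), (a ℓ).eval (t i) * P i j ℓ
          = a₀'.eval (t i) + ∑ ℓ : Fin (r - 1), (a' ℓ).eval (t i) * P i j ℓ) →
      a₀ = a₀' ∧ a = a') := by
    intro a₀ a₀' a a' h0 h0' ha ha' heq
    have hpt : ∀ i : Fin b, (a₀ - a₀').eval (t i) = 0 ∧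
        ∀ ℓ, (a ℓ - a' ℓ).eval (t i) = 0 := by
      intro i
      have hcard : Fintype.card (Fin (r + 1)) = (r - 1) + 2 := by
        simp; omega
      have hk := key_lin (0 : Fin (r + 1)) hcard (P i) (hP i 0)
        (a₀.eval (t i) - a₀'.eval (t i))
        (fun ℓ => (a ℓ).eval (t i) - (a' ℓ).eval (t i)) ?_
      · refine ⟨by simpa using hk.1, fun ℓ => by simpa using hk.2 ℓ⟩
      · intro j' _
        have h := heq i j'
        simp only [sub_mul, Finset.sum_sub_distrib]
        linear_combination h
    have hzero : ∀ p : Polynomial F, p.degree ≤ (M : ℕ) ∨ p.degree ≤ (N : ℕ) →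
        (∀ i : Fin b, p.eval (t i) = 0) → p = 0 := by
      intro p hdeg hev
      refine Polynomial.eq_zero_of_natDegree_lt_card_of_eval_eq_zero p ht hev ?_
      rw [Fintype.card_fin]
      rcases hdeg with h | h <;>
        exact lt_of_le_of_lt (Polynomial.natDegree_le_iff_degree_le.mpr h) (by omega)
    have e0 : a₀ - a₀' = 0 := by
      refine hzero _ (Or.inl ?_) (fun i => (hpt i).1)
      exact le_trans (Polynomial.degree_sub_le _ _) (max_le h0 h0')
    have e1 : ∀ ℓ, a ℓ - a' ℓ = 0 := fun ℓ => by
      refine hzero _ (Or.inr ?_) (fun i => (hpt i).2 ℓ)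
      exact le_trans (Polynomial.degree_sub_le _ _) (max_le (ha ℓ) (ha' ℓ))
    exact ⟨sub_eq_zero.mp e0, funext fun ℓ => sub_eq_zero.mp (e1 ℓ)⟩
  refine ⟨hinj, ?_⟩
  -- the evaluation linear map
  let ev : ((degreeLT F (M+1)) × (Fin (r-1) → degreeLT F (N+1))) →ₗ[F]
      (Fin b × Fin (r+1) → F) :=
    { toFun := fun x => fun p => (x.1 : F[X]).eval (t p.1)
        + ∑ ℓ, ((x.2 ℓ : F[X]).eval (t p.1)) * P p.1 p.2 ℓ
      map_add' := by
        intro x y; funext p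
        simp [Finset.sum_add_distrib, add_mul]
        ring
      map_smul' := by
        intro c x; funext p
        simp only [Prod.smul_fst, Prod.smul_snd, Pi.smul_apply, SetLike.val_smul,
          eval_smul, smul_eq_mul, RingHom.id_apply, Pi.add_apply]
        rw [mul_add, Finset.mul_sum]
        simp [mul_assoc] }
  have hset : {w : Fin b × Fin (r + 1) → F |
        ∃ (a₀ : Polynomial F) (a : Fin (r - 1) → Polynomial F),
          a₀.degree ≤ (M : ℕ) ∧ (∀ ℓ, (a ℓ).degree ≤ (N : ℕ)) ∧
          w = fun p => a₀.eval (t p.1)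
            + ∑ ℓ : Fin (r - 1), (a ℓ).eval (t p.1) * P p.1 p.2 ℓ}
      = Set.range ev := by
    ext w
    constructor
    · rintro ⟨a₀, a, h0, ha, rfl⟩
      exact ⟨(⟨a₀, deg_le_iff.mp h0⟩, fun ℓ => ⟨a ℓ, deg_le_iff.mp (ha ℓ)⟩), rfl⟩
    · rintro ⟨x, rfl⟩
      exact ⟨x.1, fun ℓ => x.2 ℓ, deg_le_iff.mpr x.1.2,
        fun ℓ => deg_le_iff.mpr (x.2 ℓ).2, rfl⟩
  rw [hset, ← LinearMap.coe_range, Submodule.span_eq]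
  have hFD : Module.Finite F (degreeLT F (M+1)) :=
    Module.Finite.equiv (degreeLTEquiv F (M+1)).symm
  have hFD' : Module.Finite F (degreeLT F (N+1)) :=
    Module.Finite.equiv (degreeLTEquiv F (N+1)).symm
  have hevinj : Function.Injective ev := by
    intro x y hxy
    obtain ⟨h1, h2⟩ := hinj x.1 y.1 (fun ℓ => x.2 ℓ) (fun ℓ => y.2 ℓ)
      (deg_le_iff.mpr x.1.2) (deg_le_iff.mpr y.1.2)
      (fun ℓ => deg_le_iff.mpr (x.2 ℓ).2) (fun ℓ => deg_le_iff.mpr (y.2 ℓ).2)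
      (fun i j => congrFun hxy (i, j))
    exact Prod.ext (Subtype.ext h1) (funext fun ℓ => Subtype.ext (congrFun h2 ℓ))
  rw [LinearMap.finrank_range_of_inj hevinj]
  have hMr : Module.finrank F (degreeLT F (M+1)) = M + 1 := by
    rw [(degreeLTEquiv F (M+1)).finrank_eq]; simp
  have hNr : Module.finrank F (degreeLT F (N+1)) = N + 1 := by
    rw [(degreeLTEquiv F (N+1)).finrank_eq]; simp
  rw [Module.finrank_prod, hMr, Module.finrank_pi_fintype]
  simp [hNr, Finset.sum_const, Fintype.card_fin]
end

section
/- Fix a baseline configuration with b − M ≥ 1 and b − N ≥ 1. Then every σ ∈ V[M,N] with not all coefficient polynomials a_0,…,a_{r−1} zero produces a codeword (σ(P_{i,j}; t_i)) of Hamming weight at least min{(b−M)(r+1), 2(b−N)}; in particular the minimum distance d of the baseline code satisfies d ≥ min{(b−M)(r+1), 2(b−N)}. -/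
open Polynomial Finset

lemma myCountNonzeroEval {F : Type} [Field F] [DecidableEq F] {b M : ℕ}
    (t : Fin b → F) (ht : Function.Injective t)
    (p : Polynomial F) (hp : p ≠ 0) (hdeg : p.degree ≤ (M : ℕ)) :
    b - M ≤ (univ.filter fun i : Fin b => p.eval (t i) ≠ 0).card := by
  have h1 : (univ.filter fun i : Fin b => p.eval (t i) = 0).card ≤ M := by
    calc (univ.filter fun i : Fin b => p.eval (t i) = 0).card
        ≤ p.roots.toFinset.card := by
          apply Finset.card_le_card_of_injOn (fun i => t i)
          · intro i hi
            simp only [coe_filter, mem_coe, mem_filter, Set.mem_setOf_eq] at hi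
            simp [Multiset.mem_toFinset, mem_roots, hp, IsRoot, hi.2]
          · exact fun a _ b _ h => ht h
      _ ≤ Multiset.card p.roots := p.roots.toFinset_card_le
      _ ≤ p.natDegree := p.card_roots'
      _ ≤ M := natDegree_le_iff_degree_le.mpr hdeg
  have h2 := Finset.card_filter_add_card_filter_not
    (s := (univ : Finset (Fin b))) (p := fun i => p.eval (t i) = 0)
  simp only [Finset.card_univ, Fintype.card_fin] at h2
  simp only [ne_eq]
  omega

lemma myAffineCount {F : Type} [Field F] [Fintype F] [DecidableEq F] {r : ℕ} (hr : 2 ≤ r)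
    (Q : Fin (r + 1) → (Fin (r - 1) → F))
    (hQ : ∀ j, LinearIndependent F (fun j' : {j' : Fin (r + 1) // j' ≠ j} =>
      (((1 : F), Q j') : F × (Fin (r - 1) → F))))
    (c₀ : F) (c : Fin (r - 1) → F) (ℓ : Fin (r - 1)) (hc : c ℓ ≠ 0) :
    2 ≤ (univ.filter fun j => c₀ + ∑ l, c l * Q j l ≠ 0).card := by
  by_contra hcon
  push_neg at hcon
  have hle : (univ.filter fun j => c₀ + ∑ l, c l * Q j l ≠ 0).card ≤ 1 := by omega
  obtain ⟨j, hj⟩ := Finset.card_le_one_iff_subset_singleton.mp hle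
  have hvan : ∀ j' : Fin (r + 1), j' ≠ j → c₀ + ∑ l, c l * Q j' l = 0 := by
    intro j' hj'
    by_contra h
    have : j' ∈ ({j} : Finset (Fin (r + 1))) := hj (by simp [h])
    simp at this
    exact hj' this
  -- the linear functional
  let φ : (F × (Fin (r - 1) → F)) →ₗ[F] F :=
    { toFun := fun x => c₀ * x.1 + ∑ l, c l * x.2 l
      map_add' := by
        intro x y
        simp only [Prod.fst_add, Prod.snd_add, Pi.add_apply, mul_add,
          Finset.sum_add_distrib]
        ring
      map_smul' := by
        intro m x
        simp only [Prod.smul_fst, Prod.smul_snd, Pi.smul_apply, smul_eq_mul,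
          RingHom.id_apply, mul_add, Finset.mul_sum]
        congr 1
        · ring
        · exact Finset.sum_congr rfl fun i _ => by ring }
  obtain ⟨j'', hj''⟩ := Fintype.exists_ne_of_one_lt_card (by simp; omega) j
  have : Nonempty {j' : Fin (r + 1) // j' ≠ j} := ⟨⟨j'', hj''⟩⟩
  have hcard : Fintype.card {j' : Fin (r + 1) // j' ≠ j} = r := by
    simp [Fintype.card_subtype_compl]
  have hspan : Submodule.span F (Set.range fun j' : {j' : Fin (r + 1) // j' ≠ j} =>
      (((1 : F), Q j') : F × (Fin (r - 1) → F))) = ⊤ := by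
    apply (hQ j).span_eq_top_of_card_eq_finrank
    rw [hcard, Module.finrank_prod, Module.finrank_self, Module.finrank_pi, Fintype.card_fin]
    omega
  have hφ : φ = 0 := by
    apply LinearMap.ext_on hspan
    rintro x ⟨j', rfl⟩
    have := hvan j' j'.2
    simpa [φ] using this
  have : φ (0, Pi.single ℓ 1) = 0 := by rw [hφ]; rfl
  simp [φ, Finset.sum_eq_single ℓ, Pi.single_apply] at this
  exact hc this


lemma myHamming {F : Type} [DecidableEq F] [Zero F] {b c : ℕ} (w : Fin b × Fin c → F) :
    hammingNorm w = ∑ i : Fin b, (univ.filter fun j => w (i, j) ≠ 0).card := by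
  simp only [hammingNorm, Finset.card_filter, Fintype.sum_prod_type]



/-- for a baseline configuration with `b - M ≥ 1` and `b - N ≥ 1`, every
`σ ∈ V[M,N]` with not all coefficient polynomials zero produces a codeword of Hamming
weight at least `min ((b-M)(r+1)) (2(b-N))`; in particular the minimum distance of the
baseline code is at least this quantity. -/
theorem stmt_3 (F : Type) [Field F] [Fintype F] [DecidableEq F]
    (r b M N : ℕ) (hr : 2 ≤ r) (hb : 1 ≤ b)
    (hM : M + 1 ≤ b) (hN : N + 1 ≤ b)
    (t : Fin b → F) (ht : Function.Injective t)
    (P : Fin b → Fin (r + 1) → (Fin (r - 1) → F))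
    -- no r of the r+1 points in each fiber lie on an affine hyperplane
    (hP : ∀ (i : Fin b) (j : Fin (r + 1)), LinearIndependent F
      (fun j' : {j' : Fin (r + 1) // j' ≠ j} =>
        (((1 : F), P i j') : F × (Fin (r - 1) → F)))) :
    -- weight of the codeword of any nonzero σ ∈ V[M,N]
    (∀ (a₀ : Polynomial F) (a : Fin (r - 1) → Polynomial F),
      a₀.degree ≤ (M : ℕ) → (∀ ℓ, (a ℓ).degree ≤ (N : ℕ)) →
      ¬ (a₀ = 0 ∧ a = 0) →
      min ((b - M) * (r + 1)) (2 * (b - N)) ≤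
        hammingNorm (fun p : Fin b × Fin (r + 1) =>
          a₀.eval (t p.1) + ∑ ℓ : Fin (r - 1), (a ℓ).eval (t p.1) * P p.1 p.2 ℓ)) ∧
    -- in particular, the minimum distance of the baseline code is at least this bound
    (∀ w ∈ Submodule.span F
      {w : Fin b × Fin (r + 1) → F |
        ∃ (a₀ : Polynomial F) (a : Fin (r - 1) → Polynomial F),
          a₀.degree ≤ (M : ℕ) ∧ (∀ ℓ, (a ℓ).degree ≤ (N : ℕ)) ∧
          w = fun p => a₀.eval (t p.1)
            + ∑ ℓ : Fin (r - 1), (a ℓ).eval (t p.1) * P p.1 p.2 ℓ},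
      w ≠ 0 → min ((b - M) * (r + 1)) (2 * (b - N)) ≤ hammingNorm w) := by
  have key : ∀ (a₀ : Polynomial F) (a : Fin (r - 1) → Polynomial F),
      a₀.degree ≤ (M : ℕ) → (∀ ℓ, (a ℓ).degree ≤ (N : ℕ)) →
      ¬ (a₀ = 0 ∧ a = 0) →
      min ((b - M) * (r + 1)) (2 * (b - N)) ≤
        hammingNorm (fun p : Fin b × Fin (r + 1) =>
          a₀.eval (t p.1) + ∑ ℓ : Fin (r - 1), (a ℓ).eval (t p.1) * P p.1 p.2 ℓ) := by
    intro a₀ a hd0 hd hne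
    rw [myHamming]
    by_cases ha : a = 0
    · have ha₀ : a₀ ≠ 0 := fun h => hne ⟨h, ha⟩
      have hG := myCountNonzeroEval t ht a₀ ha₀ hd0
      refine le_trans (min_le_left _ _) ?_
      calc (b - M) * (r + 1)
          ≤ (univ.filter fun i : Fin b => a₀.eval (t i) ≠ 0).card * (r + 1) :=
            Nat.mul_le_mul_right _ hG
        _ = ∑ _i ∈ (univ.filter fun i : Fin b => a₀.eval (t i) ≠ 0), (r + 1) := by
            rw [Finset.sum_const, smul_eq_mul]
        _ ≤ ∑ i ∈ (univ.filter fun i : Fin b => a₀.eval (t i) ≠ 0),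
              (univ.filter fun j : Fin (r + 1) =>
                a₀.eval (t i) + ∑ ℓ : Fin (r - 1), (a ℓ).eval (t i) * P i j ℓ ≠ 0).card := by
            apply Finset.sum_le_sum
            intro i hi
            rw [Finset.mem_filter] at hi
            have hall : ∀ j : Fin (r + 1),
                a₀.eval (t i) + ∑ ℓ : Fin (r - 1), (a ℓ).eval (t i) * P i j ℓ ≠ 0 := by
              intro j
              simpa [ha] using hi.2
            rw [Finset.filter_true_of_mem fun j _ => hall j]
            simp
        _ ≤ ∑ i : Fin b, (univ.filter fun j : Fin (r + 1) =>
              a₀.eval (t i) + ∑ ℓ : Fin (r - 1), (a ℓ).eval (t i) * P i j ℓ ≠ 0).card :=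
            Finset.sum_le_sum_of_subset (Finset.subset_univ _)
    · obtain ⟨ℓ, hℓ⟩ := Function.ne_iff.mp ha
      have hG := myCountNonzeroEval t ht (a ℓ) (by simpa using hℓ) (hd ℓ)
      refine le_trans (min_le_right _ _) ?_
      calc 2 * (b - N)
          ≤ 2 * (univ.filter fun i : Fin b => (a ℓ).eval (t i) ≠ 0).card :=
            Nat.mul_le_mul_left _ hG
        _ = ∑ _i ∈ (univ.filter fun i : Fin b => (a ℓ).eval (t i) ≠ 0), 2 := by
            rw [Finset.sum_const, smul_eq_mul, mul_comm]
        _ ≤ ∑ i ∈ (univ.filter fun i : Fin b => (a ℓ).eval (t i) ≠ 0),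
              (univ.filter fun j : Fin (r + 1) =>
                a₀.eval (t i) + ∑ ℓ : Fin (r - 1), (a ℓ).eval (t i) * P i j ℓ ≠ 0).card := by
            apply Finset.sum_le_sum
            intro i hi
            rw [Finset.mem_filter] at hi
            exact myAffineCount hr (P i) (hP i) (a₀.eval (t i))
              (fun l => (a l).eval (t i)) ℓ hi.2
        _ ≤ ∑ i : Fin b, (univ.filter fun j : Fin (r + 1) =>
              a₀.eval (t i) + ∑ ℓ : Fin (r - 1), (a ℓ).eval (t i) * P i j ℓ ≠ 0).card :=
            Finset.sum_le_sum_of_subset (Finset.subset_univ _)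
  refine ⟨key, ?_⟩
  intro w hw
  have hprop : w = 0 ∨ ∃ (a₀ : Polynomial F) (a : Fin (r - 1) → Polynomial F),
      a₀.degree ≤ (M : ℕ) ∧ (∀ ℓ, (a ℓ).degree ≤ (N : ℕ)) ∧
      w = fun p : Fin b × Fin (r + 1) => a₀.eval (t p.1)
        + ∑ ℓ : Fin (r - 1), (a ℓ).eval (t p.1) * P p.1 p.2 ℓ := by
    induction hw using Submodule.span_induction with
    | mem x hx => exact Or.inr hx
    | zero => exact Or.inl rfl
    | add x y hx hy ihx ihy =>
      rcases ihx with rfl | ⟨a₀, a, h1, h2, rfl⟩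
      · simpa using ihy
      rcases ihy with rfl | ⟨b₀, bb, h1', h2', rfl⟩
      · right
        exact ⟨a₀, a, h1, h2, by simp⟩
      · right
        refine ⟨a₀ + b₀, a + bb, le_trans (degree_add_le _ _) (max_le h1 h1'),
          fun l => le_trans (degree_add_le _ _) (max_le (h2 l) (h2' l)), ?_⟩
        funext p
        simp only [Pi.add_apply, eval_add, add_mul, Finset.sum_add_distrib]
        ring
    | smul c x hx ih =>
      rcases ih with rfl | ⟨a₀, a, h1, h2, rfl⟩
      · left; simp
      · right
        refine ⟨c • a₀, c • a, le_trans (degree_smul_le _ _) h1,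
          fun l => le_trans (degree_smul_le _ _) (h2 l), ?_⟩
        funext p
        simp only [Pi.smul_apply, smul_eq_mul, eval_smul, mul_add, Finset.mul_sum, mul_assoc]
  intro hw0
  rcases hprop with rfl | ⟨a₀, a, h1, h2, rfl⟩
  · exact absurd rfl hw0
  · apply key a₀ a h1 h2
    rintro ⟨rfl, rfl⟩
    apply hw0
    funext p
    simp
end

section
/- Fix a baseline configuration with b − M ≥ 1 and b − N ≥ 1, and suppose (b−M)(r+1) ≤ 2(b−N). Then the minimum distance of the baseline code is exactly (b−M)(r+1): every nonzero codeword has Hamming weight at least (b−M)(r+1), and the function σ(x;t) = ∏_{i=1}^{M} (t − t_i) ∈ V[M,N] produces a codeword of Hamming weight exactly (b−M)(r+1). -/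
set_option maxHeartbeats 1000000

open Polynomial Finset

section Aux
variable {F : Type} [Field F] [Fintype F] [DecidableEq F]

/-- the hamming norm of a function on a product splits as a sum of fiberwise counts -/
lemma aux_hamming_sum {b m : ℕ} (w : Fin b × Fin m → F) :
    hammingNorm w = ∑ i : Fin b, (Finset.univ.filter fun j => w (i, j) ≠ 0).card := by
  rw [hammingNorm]
  simp_rw [Finset.card_filter]
  rw [← Finset.univ_product_univ, Finset.sum_product]

/-- hamming norm of a codeword depending only on the first coordinate -/
lemma aux_hamming_fst {b m : ℕ} (g : Fin b → F) :
    hammingNorm (fun p : Fin b × Fin m => g p.1) = m * (Finset.univ.filter fun i => g i ≠ 0).card := by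
  rw [aux_hamming_sum]
  have h1 : ∀ i : Fin b,
      (Finset.univ.filter fun j : Fin m => (fun p : Fin b × Fin m => g p.1) (i, j) ≠ 0).card
        = if g i ≠ 0 then m else 0 := by
    intro i
    by_cases h : g i ≠ 0 <;> simp [h]
  simp only [h1]
  rw [← Finset.sum_filter, Finset.sum_const, smul_eq_mul, mul_comm]

/-- counting points where a polynomial of bounded degree vanishes along an injective family -/
lemma aux_card_roots {b d : ℕ} (t : Fin b → F) (ht : Function.Injective t)
    (p : Polynomial F) (hp : p ≠ 0) (hd : p.degree ≤ (d : ℕ)) :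
    (Finset.univ.filter fun i : Fin b => p.eval (t i) = 0).card ≤ d := by
  calc (Finset.univ.filter fun i : Fin b => p.eval (t i) = 0).card
      ≤ p.roots.toFinset.card := by
        apply Finset.card_le_card_of_injOn t
        · intro i hi
          simp only [Finset.coe_filter, Set.mem_setOf_eq, Finset.mem_filter, Finset.mem_univ, true_and] at hi
          simp [Multiset.mem_toFinset, Polynomial.mem_roots', hp, Polynomial.IsRoot, hi]
        · exact ht.injOn
    _ ≤ Multiset.card p.roots := p.roots.toFinset_card_le
    _ ≤ p.natDegree := p.card_roots'
    _ ≤ d := Polynomial.natDegree_le_iff_degree_le.mpr hd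

/-- a nonzero affine functional is nonvanishing at ≥ 2 of the r+1 points -/
lemma aux_two_le {r : ℕ} (hr : 2 ≤ r) (Q : Fin (r + 1) → (Fin (r - 1) → F))
    (hP : ∀ j : Fin (r + 1), LinearIndependent F
      (fun j' : {j' : Fin (r + 1) // j' ≠ j} => (((1 : F), Q j') : F × (Fin (r - 1) → F))))
    (c₀ : F) (c : Fin (r - 1) → F) (hc : ¬ (c₀ = 0 ∧ ∀ ℓ, c ℓ = 0)) :
    2 ≤ (Finset.univ.filter fun j => c₀ + ∑ ℓ, c ℓ * Q j ℓ ≠ 0).card := by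
  by_contra h
  push_neg at h
  have h1 : (Finset.univ.filter fun j => c₀ + ∑ ℓ, c ℓ * Q j ℓ ≠ 0).card ≤ 1 := by omega
  obtain ⟨j0, hj0⟩ := Finset.card_le_one_iff_subset_singleton.mp h1
  have hzero : ∀ j, j ≠ j0 → c₀ + ∑ ℓ, c ℓ * Q j ℓ = 0 := by
    intro j hj
    by_contra hne
    have : j ∈ (Finset.univ.filter fun j => c₀ + ∑ ℓ, c ℓ * Q j ℓ ≠ 0) := by
      simp [hne]
    exact hj (Finset.mem_singleton.mp (hj0 this))
  -- the affine functional as a linear map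
  let φ : (F × (Fin (r - 1) → F)) →ₗ[F] F :=
    { toFun := fun v => c₀ * v.1 + ∑ ℓ, c ℓ * v.2 ℓ
      map_add' := by
        intro x y
        simp only [Prod.fst_add, Prod.snd_add, Pi.add_apply, mul_add,
          Finset.sum_add_distrib]
        ring
      map_smul' := by
        intro m x
        simp only [Prod.smul_fst, Prod.smul_snd, smul_eq_mul, Pi.smul_apply,
          RingHom.id_apply, Finset.mul_sum]
        rw [mul_add, Finset.mul_sum]
        congr 1
        · ring
        · exact Finset.sum_congr rfl fun ℓ _ => by ring }
  have hcard : Fintype.card {j' : Fin (r + 1) // j' ≠ j0} = r := by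
    rw [Fintype.card_subtype_compl, Fintype.card_subtype_eq, Fintype.card_fin]
    omega
  have hrank : Module.finrank F (F × (Fin (r - 1) → F)) = r := by
    simp only [Module.finrank_prod, Module.finrank_self, Module.finrank_pi,
      Fintype.card_fin]
    omega
  have hspan := (hP j0).span_eq_top_of_card_eq_finrank' (hcard.trans hrank.symm)
  have hφ : φ = (0 : (F × (Fin (r - 1) → F)) →ₗ[F] F) := by
    apply LinearMap.ext_on hspan
    rintro x ⟨j', rfl⟩
    show c₀ * 1 + ∑ ℓ, c ℓ * Q j' ℓ = 0
    simpa [mul_one] using hzero j' j'.2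
  apply hc
  constructor
  · have := congrFun (congrArg (fun f => f.toFun) hφ) ((1 : F), (0 : Fin (r - 1) → F))
    simpa [φ] using this
  · intro ℓ
    have := congrFun (congrArg (fun f => f.toFun) hφ) ((0 : F), Pi.single ℓ (1 : F))
    simpa [φ, Pi.single_apply, Finset.sum_ite_eq'] using this
end Aux

/-- for a baseline configuration with `b - M ≥ 1`, `b - N ≥ 1` and
`(b-M)(r+1) ≤ 2(b-N)`, the minimum distance of the baseline code is exactly
`(b-M)(r+1)`: every nonzero codeword has weight at least `(b-M)(r+1)`, and the
function `σ(x;t) = ∏_{i=1}^{M} (t - t_i) ∈ V[M,N]` produces a codeword of the code of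
Hamming weight exactly `(b-M)(r+1)`. -/
theorem stmt_4 (F : Type) [Field F] [Fintype F] [DecidableEq F]
    (r b M N : ℕ) (hr : 2 ≤ r) (hb : 1 ≤ b)
    (hM : M + 1 ≤ b) (hN : N + 1 ≤ b)
    (hmin : (b - M) * (r + 1) ≤ 2 * (b - N))
    (t : Fin b → F) (ht : Function.Injective t)
    (P : Fin b → Fin (r + 1) → (Fin (r - 1) → F))
    -- no r of the r+1 points in each fiber lie on an affine hyperplane
    (hP : ∀ (i : Fin b) (j : Fin (r + 1)), LinearIndependent F
      (fun j' : {j' : Fin (r + 1) // j' ≠ j} =>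
        (((1 : F), P i j') : F × (Fin (r - 1) → F)))) :
    -- every nonzero codeword has Hamming weight at least (b-M)(r+1)
    (∀ w ∈ Submodule.span F
      {w : Fin b × Fin (r + 1) → F |
        ∃ (a₀ : Polynomial F) (a : Fin (r - 1) → Polynomial F),
          a₀.degree ≤ (M : ℕ) ∧ (∀ ℓ, (a ℓ).degree ≤ (N : ℕ)) ∧
          w = fun p => a₀.eval (t p.1)
            + ∑ ℓ : Fin (r - 1), (a ℓ).eval (t p.1) * P p.1 p.2 ℓ},
      w ≠ 0 → (b - M) * (r + 1) ≤ hammingNorm w) ∧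
    -- the codeword of σ(x;t) = ∏_{i=1}^{M} (t - t_i) belongs to the code and has
    -- weight exactly (b-M)(r+1)
    ((fun p : Fin b × Fin (r + 1) =>
        (∏ i : Fin M, (Polynomial.X - Polynomial.C (t (Fin.castLE (by omega) i)))).eval
          (t p.1))
      ∈ Submodule.span F
        {w : Fin b × Fin (r + 1) → F |
          ∃ (a₀ : Polynomial F) (a : Fin (r - 1) → Polynomial F),
            a₀.degree ≤ (M : ℕ) ∧ (∀ ℓ, (a ℓ).degree ≤ (N : ℕ)) ∧
            w = fun p => a₀.eval (t p.1)
              + ∑ ℓ : Fin (r - 1), (a ℓ).eval (t p.1) * P p.1 p.2 ℓ}) ∧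
    hammingNorm (fun p : Fin b × Fin (r + 1) =>
        (∏ i : Fin M, (Polynomial.X - Polynomial.C (t (Fin.castLE (by omega) i)))).eval
          (t p.1))
      = (b - M) * (r + 1) := by
  have hMb : M ≤ b := by omega
  -- the evaluation set is already a submodule
  let Sub : Submodule F (Fin b × Fin (r + 1) → F) :=
    { carrier := {w : Fin b × Fin (r + 1) → F |
        ∃ (a₀ : Polynomial F) (a : Fin (r - 1) → Polynomial F),
          a₀.degree ≤ (M : ℕ) ∧ (∀ ℓ, (a ℓ).degree ≤ (N : ℕ)) ∧
          w = fun p => a₀.eval (t p.1)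
            + ∑ ℓ : Fin (r - 1), (a ℓ).eval (t p.1) * P p.1 p.2 ℓ}
      zero_mem' := ⟨0, 0, by simp, by simp, by funext p; simp⟩
      add_mem' := by
        rintro x y ⟨a₀, a, ha₀, ha, rfl⟩ ⟨b₀, bb, hb₀, hbb, rfl⟩
        refine ⟨a₀ + b₀, a + bb,
          le_trans (Polynomial.degree_add_le _ _) (max_le ha₀ hb₀),
          fun ℓ => le_trans (Polynomial.degree_add_le _ _) (max_le (ha ℓ) (hbb ℓ)), ?_⟩
        funext p
        simp only [Pi.add_apply, Polynomial.eval_add, add_mul, Finset.sum_add_distrib]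
        ring
      smul_mem' := by
        rintro cc x ⟨a₀, a, ha₀, ha, rfl⟩
        refine ⟨cc • a₀, fun ℓ => cc • a ℓ,
          le_trans (Polynomial.degree_smul_le _ _) ha₀,
          fun ℓ => le_trans (Polynomial.degree_smul_le _ _) (ha ℓ), ?_⟩
        funext p
        simp only [Pi.smul_apply, Polynomial.eval_smul, smul_eq_mul, mul_add,
          Finset.mul_sum]
        congr 1
        exact Finset.sum_congr rfl fun ℓ _ => by ring }
  have hspan : ∀ w ∈ Submodule.span F
      {w : Fin b × Fin (r + 1) → F |
        ∃ (a₀ : Polynomial F) (a : Fin (r - 1) → Polynomial F),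
          a₀.degree ≤ (M : ℕ) ∧ (∀ ℓ, (a ℓ).degree ≤ (N : ℕ)) ∧
          w = fun p => a₀.eval (t p.1)
            + ∑ ℓ : Fin (r - 1), (a ℓ).eval (t p.1) * P p.1 p.2 ℓ},
      ∃ (a₀ : Polynomial F) (a : Fin (r - 1) → Polynomial F),
          a₀.degree ≤ (M : ℕ) ∧ (∀ ℓ, (a ℓ).degree ≤ (N : ℕ)) ∧
          w = fun p => a₀.eval (t p.1)
            + ∑ ℓ : Fin (r - 1), (a ℓ).eval (t p.1) * P p.1 p.2 ℓ := by
    intro w hw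
    exact (Submodule.span_le (p := Sub)).mpr (le_refl _) hw
  refine ⟨?_, ?_, ?_⟩
  · -- lower bound on the weight of nonzero codewords
    intro w hw hw0
    obtain ⟨a₀, a, ha₀, ha, rfl⟩ := hspan w hw
    rw [aux_hamming_sum]
    by_cases hA : ∃ ℓ, a ℓ ≠ 0
    · obtain ⟨ℓ₀, hℓ₀⟩ := hA
      have hroot := aux_card_roots t ht (a ℓ₀) hℓ₀ (ha ℓ₀)
      have hsplit := Finset.card_filter_add_card_filter_not
        (s := (Finset.univ : Finset (Fin b))) (p := fun i => (a ℓ₀).eval (t i) = 0)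
      rw [Finset.card_univ, Fintype.card_fin] at hsplit
      have hT : b - N ≤ (Finset.univ.filter fun i : Fin b =>
          ¬ (a ℓ₀).eval (t i) = 0).card := by omega
      calc (b - M) * (r + 1) ≤ 2 * (b - N) := hmin
        _ ≤ 2 * (Finset.univ.filter fun i : Fin b =>
            ¬ (a ℓ₀).eval (t i) = 0).card := by
              exact Nat.mul_le_mul_left 2 hT
        _ = ∑ i ∈ (Finset.univ.filter fun i : Fin b =>
            ¬ (a ℓ₀).eval (t i) = 0), 2 := by
              rw [Finset.sum_const, smul_eq_mul, mul_comm]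
        _ ≤ ∑ i ∈ (Finset.univ.filter fun i : Fin b =>
            ¬ (a ℓ₀).eval (t i) = 0),
            (Finset.univ.filter fun j : Fin (r + 1) =>
              (fun p : Fin b × Fin (r + 1) => a₀.eval (t p.1)
                + ∑ ℓ : Fin (r - 1), (a ℓ).eval (t p.1) * P p.1 p.2 ℓ) (i, j) ≠ 0).card := by
              apply Finset.sum_le_sum
              intro i hi
              simp only [Finset.mem_filter, Finset.mem_univ, true_and] at hi
              exact aux_two_le hr (P i) (hP i) (a₀.eval (t i))
                (fun ℓ => (a ℓ).eval (t i)) (fun hcc => hi (hcc.2 ℓ₀))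
        _ ≤ ∑ i : Fin b, (Finset.univ.filter fun j : Fin (r + 1) =>
              (fun p : Fin b × Fin (r + 1) => a₀.eval (t p.1)
                + ∑ ℓ : Fin (r - 1), (a ℓ).eval (t p.1) * P p.1 p.2 ℓ) (i, j) ≠ 0).card := by
              exact Finset.sum_le_sum_of_subset (Finset.filter_subset _ _)
    · push_neg at hA
      have ha₀0 : a₀ ≠ 0 := by
        intro h0
        apply hw0
        funext p
        simp [h0, hA]
      have hroot := aux_card_roots t ht a₀ ha₀0 ha₀
      have hsplit := Finset.card_filter_add_card_filter_not
        (s := (Finset.univ : Finset (Fin b))) (p := fun i => a₀.eval (t i) = 0)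
      rw [Finset.card_univ, Fintype.card_fin] at hsplit
      have hT : b - M ≤ (Finset.univ.filter fun i : Fin b =>
          ¬ a₀.eval (t i) = 0).card := by omega
      calc (b - M) * (r + 1)
          ≤ (Finset.univ.filter fun i : Fin b =>
            ¬ a₀.eval (t i) = 0).card * (r + 1) := Nat.mul_le_mul_right _ hT
        _ = ∑ i ∈ (Finset.univ.filter fun i : Fin b =>
            ¬ a₀.eval (t i) = 0), (r + 1) := by
              rw [Finset.sum_const, smul_eq_mul]
        _ ≤ ∑ i ∈ (Finset.univ.filter fun i : Fin b =>
            ¬ a₀.eval (t i) = 0),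
            (Finset.univ.filter fun j : Fin (r + 1) =>
              (fun p : Fin b × Fin (r + 1) => a₀.eval (t p.1)
                + ∑ ℓ : Fin (r - 1), (a ℓ).eval (t p.1) * P p.1 p.2 ℓ) (i, j) ≠ 0).card := by
              apply Finset.sum_le_sum
              intro i hi
              simp only [Finset.mem_filter, Finset.mem_univ, true_and] at hi
              have : (Finset.univ.filter fun j : Fin (r + 1) =>
                  (fun p : Fin b × Fin (r + 1) => a₀.eval (t p.1)
                    + ∑ ℓ : Fin (r - 1), (a ℓ).eval (t p.1) * P p.1 p.2 ℓ) (i, j) ≠ 0)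
                  = Finset.univ := by
                apply Finset.filter_true_of_mem
                intro j _
                simp [hA, hi]
              rw [this, Finset.card_univ, Fintype.card_fin]
        _ ≤ ∑ i : Fin b, (Finset.univ.filter fun j : Fin (r + 1) =>
              (fun p : Fin b × Fin (r + 1) => a₀.eval (t p.1)
                + ∑ ℓ : Fin (r - 1), (a ℓ).eval (t p.1) * P p.1 p.2 ℓ) (i, j) ≠ 0).card := by
              exact Finset.sum_le_sum_of_subset (Finset.filter_subset _ _)
  · -- membership of the distinguished codeword
    apply Submodule.subset_span
    refine ⟨∏ i : Fin M, (Polynomial.X - Polynomial.C (t (Fin.castLE (by omega) i))),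
      0, ?_, by simp, ?_⟩
    · refine le_trans (Polynomial.degree_prod_le _ _) ?_
      have hdeg1 : ∀ i : Fin M, (Polynomial.X -
          Polynomial.C (t (Fin.castLE (by omega : M ≤ b) i))).degree = 1 :=
        fun i => Polynomial.degree_X_sub_C _
      rw [Finset.sum_congr rfl fun i _ => hdeg1 i, Finset.sum_const, Finset.card_univ,
        Fintype.card_fin, nsmul_eq_mul, mul_one]
    · funext p
      simp
  · -- exact weight of the distinguished codeword
    have heval : ∀ i : Fin b,
        ((∏ i' : Fin M, (Polynomial.X -
          Polynomial.C (t (Fin.castLE (by omega : M ≤ b) i')))).eval (t i) ≠ 0)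
        ↔ M ≤ (i : ℕ) := by
      intro i
      rw [Polynomial.eval_prod]
      simp only [Polynomial.eval_sub, Polynomial.eval_X, Polynomial.eval_C]
      rw [Finset.prod_ne_zero_iff]
      constructor
      · intro h
        by_contra hlt
        push_neg at hlt
        have := h ⟨(i : ℕ), hlt⟩ (Finset.mem_univ _)
        apply this
        rw [sub_eq_zero]
        exact congrArg t (Fin.ext rfl)
      · intro h i' _
        rw [sub_ne_zero]
        intro heq
        have := ht heq
        have : (i : ℕ) = (i' : ℕ) := by rw [this]; rfl
        omega
    have hcardM : (Finset.univ.filter fun i : Fin b => M ≤ (i : ℕ)).card = b - M := by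
      have hsplit := Finset.card_filter_add_card_filter_not
        (s := (Finset.univ : Finset (Fin b))) (p := fun i => ((i : ℕ) < M))
      rw [Finset.card_univ, Fintype.card_fin] at hsplit
      have himg : (Finset.univ.filter fun i : Fin b => (i : ℕ) < M)
          = Finset.univ.image (Fin.castLE hMb) := by
        ext i
        simp only [Finset.mem_filter, Finset.mem_image, Finset.mem_univ, true_and]
        constructor
        · intro hi; exact ⟨⟨(i : ℕ), hi⟩, Fin.ext rfl⟩
        · rintro ⟨i', rfl⟩; exact i'.2
      rw [himg, Finset.card_image_of_injective _ (Fin.castLE_injective hMb),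
        Finset.card_univ, Fintype.card_fin] at hsplit
      have : (Finset.univ.filter fun i : Fin b => M ≤ (i : ℕ))
          = (Finset.univ.filter fun i : Fin b => ¬ ((i : ℕ) < M)) := by
        apply Finset.filter_congr
        intro i _
        simp [not_lt]
      rw [this]
      omega
    refine Eq.trans (aux_hamming_fst (m := r + 1)
        (fun i : Fin b => (∏ i' : Fin M, (Polynomial.X -
          Polynomial.C (t (Fin.castLE (by omega : M ≤ b) i')))).eval (t i))) ?_
    have hfe : (Finset.univ.filter fun i : Fin b =>
        (∏ i' : Fin M, (Polynomial.X -
          Polynomial.C (t (Fin.castLE (by omega : M ≤ b) i')))).eval (t i) ≠ 0)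
        = Finset.univ.filter fun i : Fin b => M ≤ (i : ℕ) := by
      apply Finset.filter_congr
      intro i _
      exact heval i
    rw [hfe, hcardM, mul_comm]
end

section
/- Let r, b, M, N be integers with r ≥ 3, b ≥ 1, 0 ≤ M ≤ b−1 and 0 ≤ N ≤ b−1. If min{(b−M)(r+1), 2(b−N)} = (r+1)(b−(N+1)) − (M−N) − ⌈(M−N)/r⌉ + 2, then either (r = 3, M = b−1 and N = b−2), or (M = N = b−1). In other words, the only cases in which the lower bound min{(b−M)(r+1), 2(b−N)} for the distance of a baseline code coincides with the Singleton-type upper bound (r+1)(b−(N+1)) − (M−N) − ⌈(M−N)/r⌉ + 2 are r = 3, M = b−1, N = b−2 (where the common value is 4) and M = N = b−1 (where the common value is 2). -/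
/-- the only cases where the lower bound `min ((b-M)(r+1)) (2(b-N))` for
the distance of a baseline code meets the Singleton-type upper bound
`(r+1)(b-(N+1)) - (M-N) - ⌈(M-N)/r⌉ + 2` are `r = 3, M = b-1, N = b-2` and
`M = N = b-1`. -/
theorem stmt_5 (r b M N : ℤ) (hr : 3 ≤ r) (hb : 1 ≤ b)
    (hM0 : 0 ≤ M) (hM : M ≤ b - 1) (hN0 : 0 ≤ N) (hN : N ≤ b - 1)
    (h : min ((b - M) * (r + 1)) (2 * (b - N))
        = (r + 1) * (b - (N + 1)) - (M - N) - ⌈((M : ℚ) - (N : ℚ)) / (r : ℚ)⌉ + 2) :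
    (r = 3 ∧ M = b - 1 ∧ N = b - 2) ∨ (M = b - 1 ∧ N = b - 1) := by
  have hr0 : (0:ℤ) < r := by linarith
  have hrQ : (0:ℚ) < (r:ℚ) := by exact_mod_cast hr0
  set t : ℤ := ⌈((M : ℚ) - (N : ℚ)) / (r : ℚ)⌉ with ht
  have h2 : t * r < M - N + r := by
    have h' := Int.ceil_lt_add_one (((M : ℚ) - (N : ℚ)) / (r : ℚ))
    rw [← ht] at h'
    have h'' : ((t:ℚ) - 1) * (r:ℚ) < (M:ℚ) - (N:ℚ) := by
      rw [← lt_div_iff₀ hrQ]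
      linarith
    have h''' : (t - 1) * r < M - N := by exact_mod_cast (show (((t - 1) * r : ℤ) : ℚ) < ((M - N : ℤ) : ℚ) by push_cast; linarith)
    linarith
  have hrr : (9:ℤ) ≤ r * r := by nlinarith
  rcases le_total ((b - M) * (r + 1)) (2 * (b - N)) with hle | hle
  · rw [min_eq_left hle] at h
    -- t = r*(b-1-N) - r*(b-1-M) - r + 1
    have ht' : t = r * (b - 1 - N) - r * (b - 1 - M) - r + 1 := by linarith
    have h5 : (r * (b - 1 - N) - r * (b - 1 - M) - r + 1) * r < M - N + r := by
      rw [← ht']; exact h2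
    -- c ≤ a + 1 :  b - 1 - N ≤ b - M
    have key : b - 1 - N ≤ b - M := by
      by_contra hk
      push_neg at hk
      nlinarith [h5, hrr, mul_le_mul_of_nonneg_left hrr (by linarith : (0:ℤ) ≤ (b - 1 - N) - (b - M) - 1)]
    have ha : M = b - 1 := by
      by_contra hk
      have hk' : b - M ≥ 2 := by omega
      nlinarith [hle, key, hr]
    have hr3 : r = 3 := by
      have : b - N ≤ 2 := by omega
      have : (b - M) * (r + 1) = r + 1 := by rw [ha]; ring
      omega
    have hN2 : N = b - 2 := by
      have : (b - M) * (r + 1) = r + 1 := by rw [ha]; ring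
      omega
    exact Or.inl ⟨hr3, ha, hN2⟩
  · rw [min_eq_right hle] at h
    -- t = (r-2)*(b-1-N) + (b-1-M)
    have ht' : t = r * (b - 1 - N) - 2 * (b - 1 - N) + (b - 1 - M) := by linarith
    have h5 : (r * (b - 1 - N) - 2 * (b - 1 - N) + (b - 1 - M)) * r < M - N + r := by
      rw [← ht']; exact h2
    have hq : 2 * r + 1 ≤ r * r := by nlinarith
    -- c ≤ 1
    have hc : b - 1 - N ≤ 1 := by
      by_contra hk
      push_neg at hk
      nlinarith [h5, hq, mul_nonneg (by linarith : (0:ℤ) ≤ b - 1 - M) (by linarith : (0:ℤ) ≤ r + 1),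
        mul_le_mul_of_nonneg_left (hq) (by linarith : (0:ℤ) ≤ b - 1 - N - 2)]
    have hcases : N = b - 1 ∨ N = b - 2 := by omega
    rcases hcases with hc0 | hc1
    · -- c = 0 : a(r+1) < r so a = 0
      right
      constructor
      · by_contra hk
        have hk' : 1 ≤ b - 1 - M := by omega
        subst hc0
        nlinarith [h5, mul_le_mul_of_nonneg_left (by linarith : (1:ℤ) ≤ b - 1 - M) (by linarith : (0:ℤ) ≤ r)]
      · exact hc0
    · -- c = 1 : r² - 3r + (r+1)a < 1 forces r = 3, a = 0
      left
      subst hc1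
      have ha : M = b - 1 := by
        by_contra hk
        have hk' : 1 ≤ b - 1 - M := by omega
        nlinarith [h5, hrr, mul_le_mul_of_nonneg_left (by linarith : (1:ℤ) ≤ b - 1 - M) (by linarith : (0:ℤ) ≤ r + 1)]
      have hr3 : r = 3 := by
        by_contra hk
        have hk' : 4 ≤ r := by omega
        nlinarith [h5, ha]
      exact ⟨hr3, ha, rfl⟩
end

section
/- Let F_q be a finite field and b ≥ 2 an integer. Fix a baseline configuration with r = 3, M = b−1 and N = b−2 (so the P_{i,j} are four points of F_q² in each of b fibers, no three of which are collinear). Then the baseline code C has length n = 4b, dimension k = 3b−2, minimum distance d = 4, and is locally recoverable with locality 3 (for each point P_{i,j}, the value σ(P_{i,j}; t_i) of any σ ∈ V[M,N] is determined by the values of σ at the other three points of the same fiber). Moreover d = n − k − ⌈k/3⌉ + 2, i.e., C is an optimal locally recoverable code. -/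
open Polynomial

/-- A linear functional vanishing at the three points (with ones prepended) vanishes. -/
lemma stmt6_fiber_aux {F : Type} [Field F] (Q : Fin 4 → Fin 2 → F) (j : Fin 4)
    (hQ : LinearIndependent F (fun j' : {j' : Fin 4 // j' ≠ j} =>
      (((1 : F), Q j') : F × (Fin 2 → F))))
    (c₀ : F) (c : Fin 2 → F)
    (h : ∀ j' : Fin 4, j' ≠ j → c₀ + ∑ ℓ : Fin 2, c ℓ * Q j' ℓ = 0) :
    c₀ = 0 ∧ ∀ ℓ, c ℓ = 0 := by
  let φ : (F × (Fin 2 → F)) →ₗ[F] F :=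
    { toFun := fun v => c₀ * v.1 + ∑ ℓ : Fin 2, c ℓ * v.2 ℓ
      map_add' := by intro x y; simp [Fin.sum_univ_two]; ring
      map_smul' := by intro r x; simp [Fin.sum_univ_two, smul_eq_mul]; ring }
  have hcard : Fintype.card {j' : Fin 4 // j' ≠ j} = 3 := by
    simp [Fintype.card_subtype_compl]
  have hfr : Module.finrank F (F × (Fin 2 → F)) = 3 := by
    simp [Module.finrank_prod, Module.finrank_fin_fun]
  have : Nonempty {j' : Fin 4 // j' ≠ j} := Fintype.card_pos_iff.mp (by rw [hcard]; omega)
  have hspan : Submodule.span F (Set.range fun j' : {j' : Fin 4 // j' ≠ j} =>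
      (((1 : F), Q j') : F × (Fin 2 → F))) = ⊤ :=
    hQ.span_eq_top_of_card_eq_finrank (by rw [hcard, hfr])
  have hφ : φ = 0 := by
    apply LinearMap.ext_on hspan
    rintro _ ⟨j', rfl⟩
    show c₀ * 1 + ∑ ℓ : Fin 2, c ℓ * Q j' ℓ = 0
    rw [mul_one]; exact h j' j'.2
  constructor
  · have := LinearMap.congr_fun hφ ((1 : F), (0 : Fin 2 → F))
    simpa [φ] using this
  · intro ℓ
    have := LinearMap.congr_fun hφ ((0 : F), Pi.single ℓ (1 : F))
    fin_cases ℓ <;> simpa [φ, Fin.sum_univ_two, Pi.single_apply] using this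

lemma stmt6_deg_aux {F : Type} [Field F] (p : F[X]) (m : ℕ) :
    p.degree ≤ (m : WithBot ℕ) ↔ p.degree < ((m + 1 : ℕ) : WithBot ℕ) := by
  constructor
  · intro h
    exact lt_of_le_of_lt h (by exact_mod_cast Nat.lt_succ_self m)
  · intro h
    cases hd : p.degree with
    | bot => exact bot_le
    | coe k =>
      rw [hd] at h
      rw [Nat.cast_withBot] at h ⊢
      exact_mod_cast Nat.lt_succ_iff.mp (by exact_mod_cast h)

lemma stmt6_hamming_aux {F : Type} [Field F] [DecidableEq F] {b : ℕ}
    (w : Fin b × Fin 4 → F) :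
    hammingNorm w = ∑ i : Fin b, ({j : Fin 4 | w (i, j) ≠ 0} : Finset (Fin 4)).card := by
  unfold hammingNorm
  rw [Finset.card_filter, Fintype.sum_prod_type]
  exact Finset.sum_congr rfl fun i _ => (Finset.card_filter _ _).symm

noncomputable def stmt6_E (F : Type) [Field F] (b : ℕ) (t : Fin b → F)
    (P : Fin b → Fin 4 → (Fin 2 → F)) :
    (Polynomial.degreeLT F b × (Fin 2 → Polynomial.degreeLT F (b - 1))) →ₗ[F]
      (Fin b × Fin 4 → F) where
  toFun x := fun p => Polynomial.eval (t p.1) (x.1 : F[X])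
    + ∑ ℓ : Fin 2, Polynomial.eval (t p.1) ((x.2 ℓ : F[X])) * P p.1 p.2 ℓ
  map_add' x y := by
    funext p
    simp [Fin.sum_univ_two]
    ring
  map_smul' r x := by
    funext p
    simp [Fin.sum_univ_two, smul_eq_mul]
    ring

lemma stmt6_span_eq (F : Type) [Field F] (b : ℕ) (hb : 2 ≤ b) (t : Fin b → F)
    (P : Fin b → Fin 4 → (Fin 2 → F)) :
    Submodule.span F
      {w : Fin b × Fin 4 → F |
        ∃ (a₀ : Polynomial F) (a : Fin 2 → Polynomial F),
          a₀.degree ≤ ((b - 1 : ℕ) : WithBot ℕ) ∧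
          (∀ ℓ, (a ℓ).degree ≤ ((b - 2 : ℕ) : WithBot ℕ)) ∧
          w = fun p => a₀.eval (t p.1)
            + ∑ ℓ : Fin 2, (a ℓ).eval (t p.1) * P p.1 p.2 ℓ}
      = LinearMap.range (stmt6_E F b t P) := by
  have hb1 : b - 1 + 1 = b := by omega
  have hb2 : b - 2 + 1 = b - 1 := by omega
  have hset : {w : Fin b × Fin 4 → F |
      ∃ (a₀ : Polynomial F) (a : Fin 2 → Polynomial F),
        a₀.degree ≤ ((b - 1 : ℕ) : WithBot ℕ) ∧
        (∀ ℓ, (a ℓ).degree ≤ ((b - 2 : ℕ) : WithBot ℕ)) ∧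
        w = fun p => a₀.eval (t p.1)
          + ∑ ℓ : Fin 2, (a ℓ).eval (t p.1) * P p.1 p.2 ℓ}
      = Set.range (stmt6_E F b t P) := by
    ext w
    constructor
    · rintro ⟨a₀, a, h₀, ha, rfl⟩
      refine ⟨⟨⟨a₀, ?_⟩, fun ℓ => ⟨a ℓ, ?_⟩⟩, rfl⟩
      · rw [Polynomial.mem_degreeLT, ← hb1]
        exact (stmt6_deg_aux a₀ (b - 1)).mp h₀
      · rw [Polynomial.mem_degreeLT, ← hb2]
        exact (stmt6_deg_aux (a ℓ) (b - 2)).mp (ha ℓ)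
    · rintro ⟨x, rfl⟩
      refine ⟨(x.1 : F[X]), fun ℓ => (x.2 ℓ : F[X]), ?_, fun ℓ => ?_, rfl⟩
      · exact (stmt6_deg_aux _ (b - 1)).mpr (by rw [hb1]; exact Polynomial.mem_degreeLT.mp x.1.2)
      · exact (stmt6_deg_aux _ (b - 2)).mpr (by rw [hb2]; exact Polynomial.mem_degreeLT.mp (x.2 ℓ).2)
  rw [hset]; exact (Submodule.span_eq (LinearMap.range (stmt6_E F b t P))).symm ▸ Submodule.span_eq _

lemma stmt6_E_inj (F : Type) [Field F] (b : ℕ) (hb : 2 ≤ b) (t : Fin b → F)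
    (ht : Function.Injective t) (P : Fin b → Fin 4 → (Fin 2 → F))
    (hP : ∀ (i : Fin b) (j : Fin 4), LinearIndependent F
      (fun j' : {j' : Fin 4 // j' ≠ j} =>
        (((1 : F), P i j') : F × (Fin 2 → F)))) :
    Function.Injective (stmt6_E F b t P) := by
  rw [injective_iff_map_eq_zero]
  intro x hx
  have hval : ∀ i : Fin b, (Polynomial.eval (t i) (x.1 : F[X]) = 0) ∧
      ∀ ℓ, Polynomial.eval (t i) ((x.2 ℓ : F[X])) = 0 := by
    intro i
    refine stmt6_fiber_aux (P i) 0 (hP i 0) _ _ fun j' _ => ?_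
    exact congrFun hx (i, j')
  have hzero : ∀ (p : F[X]), p.degree < (b : WithBot ℕ) →
      (∀ i : Fin b, Polynomial.eval (t i) p = 0) → p = 0 := by
    intro p hdeg hev
    by_cases hp : p = 0
    · exact hp
    · refine Polynomial.eq_zero_of_natDegree_lt_card_of_eval_eq_zero p ht hev ?_
      rw [Fintype.card_fin]
      exact (Polynomial.natDegree_lt_iff_degree_lt hp).mpr hdeg
  have h1 : (x.1 : F[X]) = 0 :=
    hzero _ (Polynomial.mem_degreeLT.mp x.1.2) fun i => (hval i).1
  have h2 : ∀ ℓ, ((x.2 ℓ : F[X])) = 0 := by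
    intro ℓ
    refine hzero _ (lt_of_lt_of_le (Polynomial.mem_degreeLT.mp (x.2 ℓ).2) ?_)
      fun i => (hval i).2 ℓ
    exact_mod_cast Nat.cast_le.mpr (Nat.sub_le b 1)
  ext
  · exact congrArg (Polynomial.coeff · _) h1 ▸ by simp [h1]
  · simp [h2]

lemma stmt6_finrank_degreeLT (F : Type) [Field F] (n : ℕ) :
    Module.finrank F (Polynomial.degreeLT F n) = n :=
  (Polynomial.degreeLTEquiv F n).finrank_eq.trans (Module.finrank_fin_fun F)

instance stmt6_fd (F : Type) [Field F] (n : ℕ) :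
    FiniteDimensional F (Polynomial.degreeLT F n) :=
  Module.Finite.equiv (Polynomial.degreeLTEquiv F n).symm

lemma stmt6_finrank (F : Type) [Field F] (b : ℕ) (hb : 2 ≤ b) :
    Module.finrank F
      (Polynomial.degreeLT F b × (Fin 2 → Polynomial.degreeLT F (b - 1)))
      = 3 * b - 2 := by
  rw [Module.finrank_prod, Module.finrank_pi_fintype]
  simp [stmt6_finrank_degreeLT]
  omega

/-- a baseline code with `r = 3`, `M = b-1`, `N = b-2` (four points in each
of `b` fibers, no three collinear) has length `n = 4b`, dimension `k = 3b-2`, minimum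
distance `d = 4`, is locally recoverable with locality `3`, and satisfies
`d = n - k - ⌈k/3⌉ + 2`, i.e. it is an optimal LR code. -/
theorem stmt_6 (F : Type) [Field F] [Fintype F] [DecidableEq F]
    (b : ℕ) (hb : 2 ≤ b)
    (t : Fin b → F) (ht : Function.Injective t)
    (P : Fin b → Fin 4 → (Fin 2 → F))
    -- no three of the four points in each fiber are collinear
    (hP : ∀ (i : Fin b) (j : Fin 4), LinearIndependent F
      (fun j' : {j' : Fin 4 // j' ≠ j} =>
        (((1 : F), P i j') : F × (Fin 2 → F)))) :
    -- the code has dimension k = 3b - 2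
    Module.finrank F (Submodule.span F
      {w : Fin b × Fin 4 → F |
        ∃ (a₀ : Polynomial F) (a : Fin 2 → Polynomial F),
          a₀.degree ≤ ((b - 1 : ℕ) : WithBot ℕ) ∧
          (∀ ℓ, (a ℓ).degree ≤ ((b - 2 : ℕ) : WithBot ℕ)) ∧
          w = fun p => a₀.eval (t p.1)
            + ∑ ℓ : Fin 2, (a ℓ).eval (t p.1) * P p.1 p.2 ℓ})
      = 3 * b - 2 ∧
    -- every nonzero codeword has Hamming weight at least 4
    (∀ w ∈ Submodule.span F
      {w : Fin b × Fin 4 → F |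
        ∃ (a₀ : Polynomial F) (a : Fin 2 → Polynomial F),
          a₀.degree ≤ ((b - 1 : ℕ) : WithBot ℕ) ∧
          (∀ ℓ, (a ℓ).degree ≤ ((b - 2 : ℕ) : WithBot ℕ)) ∧
          w = fun p => a₀.eval (t p.1)
            + ∑ ℓ : Fin 2, (a ℓ).eval (t p.1) * P p.1 p.2 ℓ},
      w ≠ 0 → 4 ≤ hammingNorm w) ∧
    -- and some nonzero codeword has Hamming weight exactly 4, so d = 4
    (∃ w ∈ Submodule.span F
      {w : Fin b × Fin 4 → F |
        ∃ (a₀ : Polynomial F) (a : Fin 2 → Polynomial F),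
          a₀.degree ≤ ((b - 1 : ℕ) : WithBot ℕ) ∧
          (∀ ℓ, (a ℓ).degree ≤ ((b - 2 : ℕ) : WithBot ℕ)) ∧
          w = fun p => a₀.eval (t p.1)
            + ∑ ℓ : Fin 2, (a ℓ).eval (t p.1) * P p.1 p.2 ℓ},
      w ≠ 0 ∧ hammingNorm w = 4) ∧
    -- local recoverability with locality 3: the value at any point of a fiber is
    -- determined by the values at the other three points of the same fiber
    (∀ (i : Fin b) (j : Fin 4) (a₀ a₀' : Polynomial F) (a a' : Fin 2 → Polynomial F),
      a₀.degree ≤ ((b - 1 : ℕ) : WithBot ℕ) → a₀'.degree ≤ ((b - 1 : ℕ) : WithBot ℕ) →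
      (∀ ℓ, (a ℓ).degree ≤ ((b - 2 : ℕ) : WithBot ℕ)) →
      (∀ ℓ, (a' ℓ).degree ≤ ((b - 2 : ℕ) : WithBot ℕ)) →
      (∀ j' : Fin 4, j' ≠ j →
        a₀.eval (t i) + ∑ ℓ : Fin 2, (a ℓ).eval (t i) * P i j' ℓ
          = a₀'.eval (t i) + ∑ ℓ : Fin 2, (a' ℓ).eval (t i) * P i j' ℓ) →
      a₀.eval (t i) + ∑ ℓ : Fin 2, (a ℓ).eval (t i) * P i j ℓ
        = a₀'.eval (t i) + ∑ ℓ : Fin 2, (a' ℓ).eval (t i) * P i j ℓ) ∧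
    -- optimality: d = n - k - ⌈k/3⌉ + 2 for n = 4b on k = 3b - 2
    (4 : ℤ) = 4 * (b : ℤ) - (3 * (b : ℤ) - 2)
        - ⌈(3 * (b : ℚ) - 2) / 3⌉ + 2 := by
  have hspan := stmt6_span_eq F b hb t P
  refine ⟨?_, ?_, ?_, ?_, ?_⟩
  · -- dimension
    rw [hspan, LinearMap.finrank_range_of_inj (stmt6_E_inj F b hb t ht P hP),
      stmt6_finrank F b hb]
  · -- minimum weight ≥ 4
    intro w hw hw0
    rw [hspan] at hw
    obtain ⟨x, rfl⟩ := hw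
    rw [stmt6_hamming_aux]
    by_cases hc : ∀ ℓ, ((x.2 ℓ : F[X])) = 0
    · obtain ⟨p0, hp0⟩ : ∃ p, stmt6_E F b t P x p ≠ 0 := by
        by_contra h; push_neg at h; exact hw0 (funext h)
      have hval : Polynomial.eval (t p0.1) (x.1 : F[X]) ≠ 0 := by
        intro h; apply hp0; simp [stmt6_E, hc, h]
      have h4 : ({j : Fin 4 | stmt6_E F b t P x (p0.1, j) ≠ 0} : Finset (Fin 4)).card = 4 := by
        have hall : ∀ j : Fin 4, stmt6_E F b t P x (p0.1, j) ≠ 0 := by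
          intro j; simpa [stmt6_E, hc] using hval
        rw [Finset.filter_true_of_mem fun j _ => hall j, Finset.card_univ, Fintype.card_fin]
      calc (4 : ℕ) = ({j : Fin 4 | stmt6_E F b t P x (p0.1, j) ≠ 0} : Finset (Fin 4)).card :=
            h4.symm
        _ ≤ ∑ i : Fin b, ({j : Fin 4 | stmt6_E F b t P x (i, j) ≠ 0} : Finset (Fin 4)).card :=
            Finset.single_le_sum
              (f := fun i => ({j : Fin 4 | stmt6_E F b t P x (i, j) ≠ 0} : Finset (Fin 4)).card)
              (fun i _ => Nat.zero_le _) (Finset.mem_univ p0.1)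
    · push_neg at hc
      obtain ⟨ℓ₀, hℓ₀⟩ := hc
      set Sgood : Finset (Fin b) :=
        {i : Fin b | Polynomial.eval (t i) ((x.2 ℓ₀ : F[X])) ≠ 0} with hSgood
      have hbad : ({i : Fin b | ¬ Polynomial.eval (t i) ((x.2 ℓ₀ : F[X])) ≠ 0} :
          Finset (Fin b)).card ≤ b - 2 := by
        have hmaps : ∀ i ∈ ({i : Fin b | ¬ Polynomial.eval (t i) ((x.2 ℓ₀ : F[X])) ≠ 0} :
            Finset (Fin b)), t i ∈ ((x.2 ℓ₀ : F[X])).roots.toFinset := by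
          intro i hi
          rw [Finset.mem_filter] at hi
          rw [Multiset.mem_toFinset, Polynomial.mem_roots hℓ₀]
          exact not_not.mp hi.2
        calc _ ≤ ((x.2 ℓ₀ : F[X])).roots.toFinset.card :=
              Finset.card_le_card_of_injOn t hmaps (ht.injOn)
          _ ≤ Multiset.card ((x.2 ℓ₀ : F[X])).roots := Multiset.toFinset_card_le _
          _ ≤ ((x.2 ℓ₀ : F[X])).natDegree := Polynomial.card_roots' _
          _ ≤ b - 2 := by
              have hdeg := Polynomial.mem_degreeLT.mp (x.2 ℓ₀).2
              have := (Polynomial.natDegree_lt_iff_degree_lt hℓ₀).mpr hdeg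
              omega
      have hcompl : ({i : Fin b | ¬ Polynomial.eval (t i) ((x.2 ℓ₀ : F[X])) ≠ 0} :
          Finset (Fin b)).card = b - Sgood.card := by
        show (Finset.univ.filter _).card = _
        rw [Finset.filter_not, Finset.card_sdiff_of_subset (Finset.filter_subset _ _),
          Finset.card_univ, Fintype.card_fin]
      have hle : Sgood.card ≤ b := by
        simpa using Finset.card_le_univ Sgood
      have hgood : 2 ≤ Sgood.card := by
        rw [hcompl] at hbad
        omega
      have hfib : ∀ i ∈ Sgood,
          2 ≤ ({j : Fin 4 | stmt6_E F b t P x (i, j) ≠ 0} : Finset (Fin 4)).card := by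
        intro i hi
        by_contra hlt
        push_neg at hlt
        have hcard1 : ({j : Fin 4 | stmt6_E F b t P x (i, j) ≠ 0} : Finset (Fin 4)).card ≤ 1 := by
          omega
        obtain ⟨j, hj⟩ := Finset.card_le_one_iff_subset_singleton.mp hcard1
        have hzero : ∀ j' : Fin 4, j' ≠ j →
            Polynomial.eval (t i) (x.1 : F[X])
              + ∑ ℓ : Fin 2, Polynomial.eval (t i) ((x.2 ℓ : F[X])) * P i j' ℓ = 0 := by
          intro j' hne
          by_contra hv
          have hmem : j' ∈ ({j : Fin 4 | stmt6_E F b t P x (i, j) ≠ 0} : Finset (Fin 4)) := by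
            rw [Finset.mem_filter]
            exact ⟨Finset.mem_univ _, by simpa [stmt6_E] using hv⟩
          exact hne (Finset.mem_singleton.mp (hj hmem))
        have := (stmt6_fiber_aux (P i) j (hP i j) _ _ hzero).2 ℓ₀
        rw [hSgood, Finset.mem_filter] at hi
        exact hi.2 this
      calc (4 : ℕ) = 2 * 2 := rfl
        _ ≤ 2 * Sgood.card := by omega
        _ = ∑ _i ∈ Sgood, 2 := by rw [Finset.sum_const, smul_eq_mul, mul_comm]
        _ ≤ ∑ i ∈ Sgood, ({j : Fin 4 | stmt6_E F b t P x (i, j) ≠ 0} : Finset (Fin 4)).card :=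
            Finset.sum_le_sum hfib
        _ ≤ ∑ i : Fin b, ({j : Fin 4 | stmt6_E F b t P x (i, j) ≠ 0} : Finset (Fin 4)).card :=
            Finset.sum_le_sum_of_subset (Finset.subset_univ _)
  · -- codeword of weight exactly 4
    have hb0 : 0 < b := by omega
    set i₀ : Fin b := ⟨0, hb0⟩ with hi₀
    set a₀ : F[X] := ∏ i ∈ Finset.univ.erase i₀, (X - C (t i)) with ha₀
    have hndeg : a₀.natDegree = b - 1 := by
      rw [ha₀, Polynomial.natDegree_prod _ _ fun i _ => Polynomial.X_sub_C_ne_zero (t i)]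
      simp [Polynomial.natDegree_X_sub_C, Finset.card_erase_of_mem]
    have hdeg : a₀.degree ≤ ((b - 1 : ℕ) : WithBot ℕ) := by
      rw [← hndeg]; exact Polynomial.degree_le_natDegree
    have heval0 : ∀ i : Fin b, i ≠ i₀ → a₀.eval (t i) = 0 := by
      intro i hne
      rw [ha₀, Polynomial.eval_prod]
      exact Finset.prod_eq_zero (Finset.mem_erase.mpr ⟨hne, Finset.mem_univ _⟩) (by simp)
    have heval1 : a₀.eval (t i₀) ≠ 0 := by
      rw [ha₀, Polynomial.eval_prod]
      rw [Finset.prod_ne_zero_iff]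
      intro i hi
      simp only [Polynomial.eval_sub, Polynomial.eval_X, Polynomial.eval_C]
      exact sub_ne_zero.mpr fun h => (Finset.mem_erase.mp hi).1 (ht h.symm)
    refine ⟨fun p => a₀.eval (t p.1), Submodule.subset_span
      ⟨a₀, fun _ => 0, hdeg, by simp, by funext p; simp⟩, ?_, ?_⟩
    · intro h
      exact heval1 (congrFun h (i₀, 0))
    · rw [stmt6_hamming_aux]
      rw [Finset.sum_eq_single i₀]
      · have : ∀ j : Fin 4, (fun p : Fin b × Fin 4 => a₀.eval (t p.1)) (i₀, j) ≠ 0 :=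
          fun j => heval1
        rw [Finset.filter_true_of_mem fun j _ => this j, Finset.card_univ, Fintype.card_fin]
      · intro i _ hne
        rw [Finset.card_eq_zero, Finset.filter_eq_empty_iff]
        intro j _
        simp [heval0 i hne]
      · intro h
        exact absurd (Finset.mem_univ i₀) h
  · -- locality
    intro i j a₀ a₀' a a' h₀ h₀' ha ha' heq
    have key := stmt6_fiber_aux (P i) j (hP i j)
      (a₀.eval (t i) - a₀'.eval (t i))
      (fun ℓ => (a ℓ).eval (t i) - (a' ℓ).eval (t i))
      (by
        intro j' hne
        have := heq j' hne
        simp only [Fin.sum_univ_two] at this ⊢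
        linear_combination this)
    have h1 := sub_eq_zero.mp key.1
    have h2 : ∀ ℓ, (a ℓ).eval (t i) = (a' ℓ).eval (t i) :=
      fun ℓ => sub_eq_zero.mp (key.2 ℓ)
    rw [h1]
    congr 1
    exact Finset.sum_congr rfl fun ℓ _ => by rw [h2 ℓ]
  · -- optimality arithmetic
    have hceil : ⌈(3 * (b : ℚ) - 2) / 3⌉ = (b : ℤ) := by
      have h1 : (3 * (b : ℚ) - 2) / 3 = (-2 / 3 : ℚ) + ((b : ℤ) : ℚ) := by push_cast; ring
      rw [h1, Int.ceil_add_intCast]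
      norm_num
    rw [hceil]
    ring
end

section
/- Fix a baseline configuration with b − M ≥ 1 and b − N ≥ 1. Then the baseline code C is locally recoverable with locality r: for each point P_{i,j}, and every σ ∈ V[M,N], the value σ(P_{i,j}; t_i) is determined by the r values σ(P_{i,j′}; t_i), j′ ≠ j, at the other points of the same fiber (so two elements of V[M,N] agreeing at those r points agree at P_{i,j}). Moreover, the minimum distance d of C satisfies d ≤ (r+1)(b−(N+1)) − (M−N) − ⌈(M−N)/r⌉ + 2. -/
open Polynomial Finset

noncomputable def polyOf {F : Type} [Field F] {n : ℕ} (c : Fin n → F) : Polynomial F :=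
  ∑ i : Fin n, Polynomial.C (c i) * Polynomial.X ^ (i : ℕ)

lemma polyOf_coeff {F : Type} [Field F] {n : ℕ} (c : Fin n → F) (i : Fin n) :
    (polyOf c).coeff i = c i := by
  unfold polyOf
  rw [Polynomial.finset_sum_coeff, Finset.sum_eq_single i]
  · simp
  · intro k _ hk
    simp only [Polynomial.coeff_C_mul, Polynomial.coeff_X_pow]
    rw [if_neg, mul_zero]
    exact fun h => hk (Fin.ext h.symm)
  · simp

lemma polyOf_sub {F : Type} [Field F] {n : ℕ} (c c' : Fin n → F) :
    polyOf (c - c') = polyOf c - polyOf c' := by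
  unfold polyOf
  rw [← Finset.sum_sub_distrib]
  congr 1; funext i
  simp [sub_mul]

lemma polyOf_degree {F : Type} [Field F] {n : ℕ} (c : Fin (n + 1) → F) :
    (polyOf c).degree ≤ (n : ℕ) := by
  refine (Polynomial.degree_sum_le _ _).trans ?_
  refine Finset.sup_le fun i _ => ?_
  refine (Polynomial.degree_C_mul_X_pow_le _ _).trans ?_
  exact_mod_cast Nat.cast_le.2 (Nat.lt_succ_iff.1 i.2)

lemma polyOf_eq_zero {F : Type} [Field F] {n : ℕ} {c : Fin n → F} (h : polyOf c = 0) :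
    c = 0 := by
  funext i
  have := polyOf_coeff c i
  rw [h] at this
  simpa using this.symm

noncomputable def phiMap {F : Type} [Field F] {n : ℕ} (c₀ : F) (c : Fin n → F) :
    (F × (Fin n → F)) →ₗ[F] F where
  toFun v := c₀ * v.1 + ∑ ℓ, c ℓ * v.2 ℓ
  map_add' u v := by
    simp only [Prod.fst_add, Prod.snd_add, Pi.add_apply, mul_add, Finset.sum_add_distrib]
    ring
  map_smul' a v := by
    simp only [Prod.smul_fst, Prod.smul_snd, Pi.smul_apply, smul_eq_mul, RingHom.id_apply,
      mul_add, Finset.mul_sum]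
    rw [mul_left_comm, add_right_inj]
    refine Finset.sum_congr rfl fun ℓ _ => by ring

lemma fiber_zero {F : Type} [Field F] {r : ℕ} (hr : 2 ≤ r)
    (Q : Fin (r + 1) → Fin (r - 1) → F) (j : Fin (r + 1))
    (hQ : LinearIndependent F (fun j' : {j' : Fin (r + 1) // j' ≠ j} =>
      (((1 : F), Q j') : F × (Fin (r - 1) → F))))
    (c₀ : F) (c : Fin (r - 1) → F)
    (h : ∀ j' : Fin (r + 1), j' ≠ j → c₀ + ∑ ℓ, c ℓ * Q j' ℓ = 0)
    (v : F × (Fin (r - 1) → F)) :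
    c₀ * v.1 + ∑ ℓ, c ℓ * v.2 ℓ = 0 := by
  have hcard : Fintype.card {j' : Fin (r + 1) // j' ≠ j}
      = Module.finrank F (F × (Fin (r - 1) → F)) := by
    rw [Fintype.card_subtype_compl]
    simp only [Fintype.card_subtype_eq, Fintype.card_fin]
    rw [Module.finrank_prod, Module.finrank_self, Module.finrank_pi]
    simp only [Fintype.card_fin]
    omega
  have : Nonempty {j' : Fin (r + 1) // j' ≠ j} := by
    haveI : Nontrivial (Fin (r + 1)) := Fin.nontrivial_iff_two_le.mpr (by omega)
    obtain ⟨j', hj'⟩ := exists_ne j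
    exact ⟨⟨j', hj'⟩⟩
  have hspan := hQ.span_eq_top_of_card_eq_finrank hcard
  have hphi : phiMap c₀ c = 0 := by
    apply LinearMap.ext_on hspan
    rintro x ⟨j', rfl⟩
    have := h j' j'.2
    simpa [phiMap] using this
  have := congrFun (congrArg DFunLike.coe hphi) v
  simpa [phiMap] using this

/-- a baseline code with `b - M ≥ 1`, `b - N ≥ 1` is locally recoverable
with locality `r` (the value of any `σ ∈ V[M,N]` at a point of a fiber is determined by
its values at the other `r` points of the fiber), and its minimum distance satisfies
`d ≤ (r+1)(b-(N+1)) - (M-N) - ⌈(M-N)/r⌉ + 2`. -/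
theorem stmt_7 (F : Type) [Field F] [Fintype F] [DecidableEq F]
    (r b M N : ℕ) (hr : 2 ≤ r) (hb : 1 ≤ b)
    (hM : M + 1 ≤ b) (hN : N + 1 ≤ b)
    (t : Fin b → F) (ht : Function.Injective t)
    (P : Fin b → Fin (r + 1) → (Fin (r - 1) → F))
    -- no r of the r+1 points in each fiber lie on an affine hyperplane
    (hP : ∀ (i : Fin b) (j : Fin (r + 1)), LinearIndependent F
      (fun j' : {j' : Fin (r + 1) // j' ≠ j} =>
        (((1 : F), P i j') : F × (Fin (r - 1) → F)))) :
    -- local recoverability with locality r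
    (∀ (i : Fin b) (j : Fin (r + 1)) (a₀ a₀' : Polynomial F)
        (a a' : Fin (r - 1) → Polynomial F),
      a₀.degree ≤ (M : ℕ) → a₀'.degree ≤ (M : ℕ) →
      (∀ ℓ, (a ℓ).degree ≤ (N : ℕ)) → (∀ ℓ, (a' ℓ).degree ≤ (N : ℕ)) →
      (∀ j' : Fin (r + 1), j' ≠ j →
        a₀.eval (t i) + ∑ ℓ : Fin (r - 1), (a ℓ).eval (t i) * P i j' ℓ
          = a₀'.eval (t i) + ∑ ℓ : Fin (r - 1), (a' ℓ).eval (t i) * P i j' ℓ) →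
      a₀.eval (t i) + ∑ ℓ : Fin (r - 1), (a ℓ).eval (t i) * P i j ℓ
        = a₀'.eval (t i) + ∑ ℓ : Fin (r - 1), (a' ℓ).eval (t i) * P i j ℓ) ∧
    -- Singleton-type upper bound on the minimum distance
    (∃ w, w ∈ Submodule.span F
      {w : Fin b × Fin (r + 1) → F |
        ∃ (a₀ : Polynomial F) (a : Fin (r - 1) → Polynomial F),
          a₀.degree ≤ (M : ℕ) ∧ (∀ ℓ, (a ℓ).degree ≤ (N : ℕ)) ∧
          w = fun p => a₀.eval (t p.1)
            + ∑ ℓ : Fin (r - 1), (a ℓ).eval (t p.1) * P p.1 p.2 ℓ} ∧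
      w ≠ 0 ∧
      (hammingNorm w : ℤ) ≤ ((r : ℤ) + 1) * ((b : ℤ) - ((N : ℤ) + 1))
        - ((M : ℤ) - (N : ℤ)) - ⌈((M : ℚ) - (N : ℚ)) / (r : ℚ)⌉ + 2) := by
  constructor
  · -- local recoverability
    intro i j a₀ a₀' a a' _ _ _ _ h
    have key := fiber_zero hr (P i) j (hP i j)
      (a₀.eval (t i) - a₀'.eval (t i))
      (fun ℓ => (a ℓ).eval (t i) - (a' ℓ).eval (t i))
      (fun j' hj' => by
        have hh := h j' hj'
        have hs : ∑ ℓ, ((a ℓ).eval (t i) - (a' ℓ).eval (t i)) * P i j' ℓ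
            = ∑ ℓ, (a ℓ).eval (t i) * P i j' ℓ
              - ∑ ℓ, (a' ℓ).eval (t i) * P i j' ℓ := by
          rw [← Finset.sum_sub_distrib]
          exact Finset.sum_congr rfl fun ℓ _ => by ring
        rw [hs]; linear_combination hh)
      (1, P i j)
    have hs : ∑ ℓ, ((a ℓ).eval (t i) - (a' ℓ).eval (t i)) * P i j ℓ
        = ∑ ℓ, (a ℓ).eval (t i) * P i j ℓ - ∑ ℓ, (a' ℓ).eval (t i) * P i j ℓ := by
      rw [← Finset.sum_sub_distrib]
      exact Finset.sum_congr rfl fun ℓ _ => by ring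
    simp only [hs] at key
    linear_combination key
  · -- minimum distance bound
    classical
    set K := M + (r - 1) * (N + 1) with hK
    have hr0 : 0 < r := by omega
    have hrb : K + 1 ≤ r * b := by
      have h1 : (r - 1) * (N + 1) ≤ (r - 1) * b := Nat.mul_le_mul_left _ hN
      have h2 : (r - 1) * b + b = r * b := by
        have h3 : r - 1 + 1 = r := by omega
        calc (r - 1) * b + b = (r - 1 + 1) * b := by ring
          _ = r * b := by rw [h3]
      omega
    obtain ⟨q, hqdef⟩ : ∃ q, q = K / r := ⟨_, rfl⟩
    obtain ⟨km, hkmdef⟩ : ∃ x, x = K % r := ⟨_, rfl⟩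
    have hmod : r * q + km = K := by rw [hqdef, hkmdef]; exact Nat.div_add_mod K r
    have hmodlt : km < r := by rw [hkmdef]; exact Nat.mod_lt K hr0
    have hqK : r * q ≤ K := by omega
    have hKq : K < r * q + r := by omega
    clear hqdef hkmdef
    have hqb : q < b := by
      have h1 : r * q < r * b := by omega
      exact lt_of_mul_lt_mul_left h1 (Nat.zero_le r)
    -- pigeonhole: two coefficient tuples with the same evaluations at K chosen points
    set g : ((Fin (M + 1) → F) × (Fin (r - 1) → Fin (N + 1) → F)) →
        (Fin b × Fin (r + 1)) → F := fun cd p =>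
      (polyOf cd.1).eval (t p.1)
        + ∑ ℓ, (polyOf (cd.2 ℓ)).eval (t p.1) * P p.1 p.2 ℓ with hg
    set e : Fin K → Fin b × Fin (r + 1) := fun x =>
      (⟨x / r, by
        have hx := x.2
        exact Nat.div_lt_of_lt_mul (by omega : (x : ℕ) < r * b)⟩,
       ⟨x % r, by have := Nat.mod_lt (x : ℕ) hr0; omega⟩) with he
    have hcardlt : Fintype.card (Fin K → F)
        < Fintype.card ((Fin (M + 1) → F) × (Fin (r - 1) → Fin (N + 1) → F)) := by
      simp only [Fintype.card_prod, Fintype.card_fun, Fintype.card_fin]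
      rw [← pow_mul, ← pow_add]
      refine Nat.pow_lt_pow_right Fintype.one_lt_card ?_
      have h1 : (N + 1) * (r - 1) = (r - 1) * (N + 1) := mul_comm _ _
      omega
    obtain ⟨cd, cd', hne, heq⟩ :=
      Fintype.exists_ne_map_eq_of_card_lt (fun cd => fun x : Fin K => g cd (e x)) hcardlt
    set a₀ : Polynomial F := polyOf (cd.1 - cd'.1) with ha₀
    set a : Fin (r - 1) → Polynomial F := fun ℓ => polyOf (cd.2 ℓ - cd'.2 ℓ) with ha
    set w : Fin b × Fin (r + 1) → F := fun p =>
      a₀.eval (t p.1) + ∑ ℓ, (a ℓ).eval (t p.1) * P p.1 p.2 ℓ with hw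
    have hwg : ∀ p, w p = g cd p - g cd' p := by
      intro p
      rw [hw, hg]
      simp only [ha₀, ha, polyOf_sub, Polynomial.eval_sub]
      have hs : ∑ ℓ, ((polyOf (cd.2 ℓ)).eval (t p.1) - (polyOf (cd'.2 ℓ)).eval (t p.1))
            * P p.1 p.2 ℓ
          = ∑ ℓ, (polyOf (cd.2 ℓ)).eval (t p.1) * P p.1 p.2 ℓ
            - ∑ ℓ, (polyOf (cd'.2 ℓ)).eval (t p.1) * P p.1 p.2 ℓ := by
        rw [← Finset.sum_sub_distrib]
        exact Finset.sum_congr rfl fun ℓ _ => by ring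
      rw [hs]; ring
    -- w vanishes at the chosen points
    have hwe : ∀ x : Fin K, w (e x) = 0 := by
      intro x
      rw [hwg, congrFun heq x]
      ring
    -- w vanishes on the zero set
    have hzero : ∀ p : Fin b × Fin (r + 1),
        ((p.1 : ℕ) < q ∨ ((p.1 : ℕ) = q ∧ (p.2 : ℕ) < km)) → w p = 0 := by
      rintro ⟨i, j⟩ hcase
      dsimp only at hcase
      have hsmall : ∀ j' : Fin (r + 1), ((i : ℕ) < q ∨ ((i : ℕ) = q ∧ (j' : ℕ) < km)) →
          (j' : ℕ) < r → w (i, j') = 0 := by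
        intro j' hc hjr
        have hxlt : r * (i : ℕ) + (j' : ℕ) < K := by
          rcases hc with hc | ⟨hc1, hc2⟩
          · have : r * ((i : ℕ) + 1) ≤ r * q := Nat.mul_le_mul_left r hc
            calc r * (i : ℕ) + (j' : ℕ) < r * (i : ℕ) + r := by omega
              _ = r * ((i : ℕ) + 1) := by ring
              _ ≤ r * q := this
              _ ≤ K := hqK
          · rw [hc1]; omega
        have hee : e ⟨r * (i : ℕ) + (j' : ℕ), hxlt⟩ = (i, j') := by
          rw [he]
          have hd : (r * (i : ℕ) + (j' : ℕ)) / r = (i : ℕ) := by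
            rw [Nat.mul_add_div hr0, Nat.div_eq_of_lt hjr, add_zero]
          have hm : (r * (i : ℕ) + (j' : ℕ)) % r = (j' : ℕ) := by
            rw [Nat.mul_add_mod, Nat.mod_eq_of_lt hjr]
          exact Prod.ext (Fin.ext hd) (Fin.ext hm)
        have := hwe ⟨r * (i : ℕ) + (j' : ℕ), hxlt⟩
        rwa [hee] at this
      by_cases hjr : (j : ℕ) < r
      · exact hsmall j hcase hjr
      · -- j is the last point of the fiber; use local recoverability
        rcases hcase with hc | ⟨_, hc2⟩
        · have hkey := fiber_zero hr (P i) j (hP i j)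
            (a₀.eval (t i)) (fun ℓ => (a ℓ).eval (t i))
            (fun j' hj' => by
              have hj'r : (j' : ℕ) < r := by
                have := j'.2
                rcases Nat.lt_or_ge (j' : ℕ) r with h | h
                · exact h
                · exfalso
                  apply hj'
                  apply Fin.ext
                  omega
              exact hsmall j' (Or.inl hc) hj'r)
            (1, P i j)
          simpa [hw] using hkey
        · omega
    -- w is a codeword
    have hdeg₀ : a₀.degree ≤ (M : ℕ) := polyOf_degree _
    have hdegℓ : ∀ ℓ, (a ℓ).degree ≤ (N : ℕ) := fun ℓ => polyOf_degree _
    refine ⟨w, Submodule.subset_span ⟨a₀, a, hdeg₀, hdegℓ, rfl⟩, ?_, ?_⟩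
    · -- w ≠ 0
      intro h0
      have hz : ∀ (i : Fin b) (v : F × (Fin (r - 1) → F)),
          a₀.eval (t i) * v.1 + ∑ ℓ, (a ℓ).eval (t i) * v.2 ℓ = 0 := by
        intro i v
        refine fiber_zero hr (P i) 0 (hP i 0)
          (a₀.eval (t i)) (fun ℓ => (a ℓ).eval (t i))
          (fun j' _ => ?_) v
        have := congrFun h0 (i, j')
        simpa [hw] using this
      have hz0 : ∀ i : Fin b, a₀.eval (t i) = 0 := by
        intro i
        have := hz i (1, 0)
        simpa using this
      have hzℓ : ∀ (ℓ₀ : Fin (r - 1)) (i : Fin b), (a ℓ₀).eval (t i) = 0 := by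
        intro ℓ₀ i
        have := hz i (0, Pi.single ℓ₀ 1)
        simp only [mul_zero, zero_add, Pi.single_apply, mul_ite, mul_one, mul_zero,
          Finset.sum_ite_eq', Finset.mem_univ, if_true] at this
        exact this
      have ha₀z : a₀ = 0 := by
        refine Polynomial.eq_zero_of_natDegree_lt_card_of_eval_eq_zero a₀ ht hz0 ?_
        have := Polynomial.natDegree_le_iff_degree_le.mpr hdeg₀
        simp only [Fintype.card_fin]
        omega
      have haz : ∀ ℓ, a ℓ = 0 := by
        intro ℓ
        refine Polynomial.eq_zero_of_natDegree_lt_card_of_eval_eq_zero (a ℓ) ht (hzℓ ℓ) ?_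
        have := Polynomial.natDegree_le_iff_degree_le.mpr (hdegℓ ℓ)
        simp only [Fintype.card_fin]
        omega
      apply hne
      have h1 : cd.1 = cd'.1 := sub_eq_zero.mp (polyOf_eq_zero ha₀z)
      have h2 : cd.2 = cd'.2 := by
        funext ℓ
        exact sub_eq_zero.mp (polyOf_eq_zero (haz ℓ))
      exact Prod.ext h1 h2
    · -- the weight bound
      -- count zeros
      set Zs : Finset (Fin b × Fin (r + 1)) :=
        Finset.univ.filter (fun p => (p.1 : ℕ) < q ∨ ((p.1 : ℕ) = q ∧ (p.2 : ℕ) < km))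
        with hZs
      have hZcard : q * (r + 1) + km ≤ Zs.card := by
        have hmap : ∀ x : Fin (q * (r + 1) + km), True → True := fun _ _ => trivial
        set ebar : Fin (q * (r + 1) + km) → Fin b × Fin (r + 1) := fun x =>
          (⟨(x : ℕ) / (r + 1), by
            refine Nat.div_lt_of_lt_mul ?_
            have hx := x.2
            have h1 : q * (r + 1) + km < (q + 1) * (r + 1) := by
              have : (q + 1) * (r + 1) = q * (r + 1) + (r + 1) := by ring
              omega
            have h2 : (q + 1) * (r + 1) ≤ b * (r + 1) := Nat.mul_le_mul_right _ hqb
            have h3 : b * (r + 1) = (r + 1) * b := mul_comm _ _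
            omega⟩,
           ⟨(x : ℕ) % (r + 1), Nat.mod_lt _ (by omega)⟩) with hebar
        calc q * (r + 1) + km
            = (Finset.univ : Finset (Fin (q * (r + 1) + km))).card := by simp
          _ ≤ Zs.card := by
              refine Finset.card_le_card_of_injOn ebar ?_ ?_
              · intro x _
                rw [Finset.mem_coe, hZs, Finset.mem_filter]
                refine ⟨Finset.mem_univ _, ?_⟩
                show (x : ℕ) / (r + 1) < q ∨ ((x : ℕ) / (r + 1) = q ∧ (x : ℕ) % (r + 1) < km)
                have hx := x.2
                have hdle : (x : ℕ) / (r + 1) ≤ q := by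
                  have h1 : (x : ℕ) < (r + 1) * (q + 1) := by
                    have e1 : (r + 1) * (q + 1) = q * (r + 1) + (r + 1) := by ring
                    omega
                  have h2 := Nat.div_lt_of_lt_mul h1
                  omega
                rcases Nat.lt_or_ge ((x : ℕ) / (r + 1)) q with h | h
                · exact Or.inl h
                · have hdq : (x : ℕ) / (r + 1) = q := by omega
                  refine Or.inr ⟨hdq, ?_⟩
                  have hdm := Nat.div_add_mod (x : ℕ) (r + 1)
                  rw [hdq] at hdm
                  have hcomm : (r + 1) * q = q * (r + 1) := mul_comm _ _
                  omega
              · intro x _ y _ hxy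
                have hx1 : ((ebar x).1 : ℕ) = ((ebar y).1 : ℕ) := by rw [hxy]
                have hx2 : ((ebar x).2 : ℕ) = ((ebar y).2 : ℕ) := by rw [hxy]
                simp only [hebar] at hx1 hx2
                have hdmx := Nat.div_add_mod (x : ℕ) (r + 1)
                have hdmy := Nat.div_add_mod (y : ℕ) (r + 1)
                have : (x : ℕ) = (y : ℕ) := by
                  rw [← hdmx, ← hdmy, hx1, hx2]
                exact Fin.ext this
      -- disjointness of support and zero set
      have hnorm : hammingNorm w = (Finset.univ.filter (fun p => w p ≠ 0)).card := rfl
      have hdisj : Disjoint (Finset.univ.filter (fun p => w p ≠ 0)) Zs := by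
        rw [Finset.disjoint_left]
        intro p hp hpz
        rw [Finset.mem_filter] at hp
        rw [hZs, Finset.mem_filter] at hpz
        exact hp.2 (hzero p hpz.2)
      have hcount : hammingNorm w + Zs.card ≤ b * (r + 1) := by
        rw [hnorm, ← Finset.card_union_of_disjoint hdisj]
        calc ((Finset.univ.filter (fun p => w p ≠ 0)) ∪ Zs).card
            ≤ Fintype.card (Fin b × Fin (r + 1)) := Finset.card_le_univ _
          _ = b * (r + 1) := by simp
      have hfin : hammingNorm w + (q * (r + 1) + km) ≤ b * (r + 1) := by omega
      -- identify the ceiling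
      have hKz : (K : ℤ) = (M : ℤ) + (r : ℤ) * (N : ℤ) + (r : ℤ) - (N : ℤ) - 1 := by
        rw [hK]
        push_cast [Nat.cast_sub (show 1 ≤ r by omega)]
        ring
      have zqK : (r : ℤ) * (q : ℤ) ≤ (K : ℤ) := by exact_mod_cast hqK
      have zKq : (K : ℤ) + 1 ≤ (r : ℤ) * (q : ℤ) + (r : ℤ) := by exact_mod_cast hKq
      have d1 : (r : ℤ) * (q : ℤ) - (r : ℤ) * (N : ℤ) - (r : ℤ) + 1 ≤ (M : ℤ) - (N : ℤ) := by
        linarith [zqK, hKz]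
      have d2 : (M : ℤ) - (N : ℤ) ≤ (r : ℤ) * (q : ℤ) - (r : ℤ) * (N : ℤ) := by
        linarith [zKq, hKz]
      have hrq : (0 : ℚ) < (r : ℚ) := by positivity
      have hm : (⌈((M : ℚ) - (N : ℚ)) / (r : ℚ)⌉ : ℤ) = (q : ℤ) - (N : ℤ) := by
        rw [Int.ceil_eq_iff]
        have d1' : (r : ℚ) * (q : ℚ) - (r : ℚ) * (N : ℚ) - (r : ℚ) + 1 ≤ (M : ℚ) - (N : ℚ) := by
          exact_mod_cast d1
        have d2' : (M : ℚ) - (N : ℚ) ≤ (r : ℚ) * (q : ℚ) - (r : ℚ) * (N : ℚ) := by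
          exact_mod_cast d2
        constructor
        · rw [lt_div_iff₀ hrq]
          push_cast
          nlinarith [d1']
        · rw [div_le_iff₀ hrq]
          push_cast
          nlinarith [d2']
      rw [hm]
      -- final arithmetic
      have hfinz : (hammingNorm w : ℤ) + ((q : ℤ) * ((r : ℤ) + 1) + (km : ℤ))
          ≤ (b : ℤ) * ((r : ℤ) + 1) := by exact_mod_cast hfin
      have hmodz : (r : ℤ) * (q : ℤ) + (km : ℤ) = (K : ℤ) := by exact_mod_cast hmod
      linarith [hfinz, hmodz, hKz]
end

section
/- Let F_q be a finite field, r ≥ 2 an integer, and g ∈ F_q[x] a polynomial of degree exactly r+1. Let t_1,…,t_b ∈ F_q be distinct elements such that for each i the equation g(x) = t_i has r+1 distinct roots x_{i,1},…,x_{i,r+1} in F_q (so the x_{i,j} are n = b(r+1) distinct elements of F_q). Let N ≥ 0 and let a_0,…,a_{r−1} ∈ F_q[t] be polynomials of degree at most N, not all zero. Then the polynomial h(x) = a_0(g(x)) + Σ_{ℓ=1}^{r−1} a_ℓ(g(x)) x^ℓ ∈ F_q[x] is nonzero of degree at most N(r+1) + r − 1, and consequently the number of pairs (i,j) with a_0(t_i)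 + Σ_{ℓ=1}^{r−1} a_ℓ(t_i) x_{i,j}^ℓ = 0 is at most N(r+1) + r − 1. In particular the Tamo–Barg evaluation code, obtained by evaluating all such tuples (a_0,…,a_{r−1}) at the n points (x_{i,j}, t_i), has minimum distance at least n − N(r+1) − r + 1. -/
/-- Tamo–Barg codes. If `g` has degree exactly `r+1`, the `t_i` are distinct
with `g(x) = t_i` having `r+1` distinct roots `x_{i,j}` in `F_q` (all the `x_{i,j}` being
distinct), and `a_0, …, a_{r-1}` are polynomials of degree at most `N`, not all zero, then
`h(x) = Σ_ℓ a_ℓ(g(x)) x^ℓ` is nonzero of degree at most `N(r+1) + r - 1`; consequently at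
most `N(r+1) + r - 1` of the evaluations `Σ_ℓ a_ℓ(t_i) x_{i,j}^ℓ` vanish, and the
Tamo–Barg code has minimum distance at least `n - N(r+1) - r + 1` where `n = b(r+1)`. -/
theorem stmt_8 (F : Type) [Field F] [Fintype F] [DecidableEq F]
    (r b N : ℕ) (hr : 2 ≤ r) (hb : 1 ≤ b)
    (g : Polynomial F) (hg : g.degree = ((r + 1 : ℕ) : WithBot ℕ))
    (t : Fin b → F) (ht : Function.Injective t)
    (x : Fin b → Fin (r + 1) → F)
    (hroot : ∀ i j, g.eval (x i j) = t i)
    (hx : Function.Injective (fun p : Fin b × Fin (r + 1) => x p.1 p.2))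
    (a : Fin r → Polynomial F)
    (ha : ∀ ℓ, (a ℓ).degree ≤ (N : ℕ))
    (hne : ¬ ∀ ℓ, a ℓ = 0) :
    (∑ ℓ : Fin r, (a ℓ).comp g * Polynomial.X ^ (ℓ : ℕ)) ≠ 0 ∧
    (∑ ℓ : Fin r, (a ℓ).comp g * Polynomial.X ^ (ℓ : ℕ)).natDegree
      ≤ N * (r + 1) + r - 1 ∧
    (Finset.univ.filter (fun p : Fin b × Fin (r + 1) =>
        ∑ ℓ : Fin r, (a ℓ).eval (t p.1) * (x p.1 p.2) ^ (ℓ : ℕ) = 0)).card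
      ≤ N * (r + 1) + r - 1 ∧
    b * (r + 1) - (N * (r + 1) + r - 1)
      ≤ hammingNorm (fun p : Fin b × Fin (r + 1) =>
          ∑ ℓ : Fin r, (a ℓ).eval (t p.1) * (x p.1 p.2) ^ (ℓ : ℕ)) := by
  classical
  set h : Polynomial F := ∑ ℓ : Fin r, (a ℓ).comp g * Polynomial.X ^ (ℓ : ℕ) with hh
  have hgnat : g.natDegree = r + 1 := Polynomial.natDegree_eq_of_degree_eq_some hg
  have hanat : ∀ ℓ, (a ℓ).natDegree ≤ N := fun ℓ =>
    Polynomial.natDegree_le_iff_degree_le.mpr (ha ℓ)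
  -- term facts
  have hterm : ∀ ℓ : Fin r, a ℓ ≠ 0 →
      ((a ℓ).comp g * Polynomial.X ^ (ℓ : ℕ)) ≠ 0 ∧
      ((a ℓ).comp g * Polynomial.X ^ (ℓ : ℕ)).natDegree
        = (a ℓ).natDegree * (r + 1) + (ℓ : ℕ) := by
    intro ℓ hℓ
    have hcompLC : ((a ℓ).comp g).leadingCoeff
        = (a ℓ).leadingCoeff * g.leadingCoeff ^ (a ℓ).natDegree :=
      Polynomial.leadingCoeff_comp (by omega)
    have hgne : g ≠ 0 := by
      intro h0; rw [h0, Polynomial.natDegree_zero] at hgnat; omega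
    have hcompne : (a ℓ).comp g ≠ 0 := by
      intro h0
      have : ((a ℓ).comp g).leadingCoeff = 0 := by simp [h0]
      rw [hcompLC] at this
      rcases mul_eq_zero.mp this with h1 | h1
      · exact hℓ (Polynomial.leadingCoeff_eq_zero.mp h1)
      · exact hgne (Polynomial.leadingCoeff_eq_zero.mp
          (pow_eq_zero_iff'.mp h1).1)
    refine ⟨mul_ne_zero hcompne (pow_ne_zero _ Polynomial.X_ne_zero), ?_⟩
    rw [Polynomial.natDegree_mul hcompne (pow_ne_zero _ Polynomial.X_ne_zero),
      Polynomial.natDegree_comp, hgnat, Polynomial.natDegree_X_pow]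
  -- injectivity of the degree map
  have hd_inj : ∀ ℓ ℓ' : Fin r,
      (a ℓ).natDegree * (r + 1) + (ℓ : ℕ) = (a ℓ').natDegree * (r + 1) + (ℓ' : ℕ)
      → ℓ = ℓ' := by
    intro ℓ ℓ' heq
    have h1 : ((a ℓ).natDegree * (r + 1) + (ℓ : ℕ)) % (r + 1) = (ℓ : ℕ) := by
      rw [add_comm, Nat.add_mul_mod_self_right, Nat.mod_eq_of_lt (by omega)]
    have h2 : ((a ℓ').natDegree * (r + 1) + (ℓ' : ℕ)) % (r + 1) = (ℓ' : ℕ) := by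
      rw [add_comm, Nat.add_mul_mod_self_right, Nat.mod_eq_of_lt (by omega)]
    exact Fin.ext (by rw [← h1, heq, h2])
  -- h ≠ 0
  have hne0 : h ≠ 0 := by
    push_neg at hne
    obtain ⟨ℓ₁, hℓ₁⟩ := hne
    set S : Finset (Fin r) := Finset.univ.filter (fun ℓ => a ℓ ≠ 0) with hS
    have hSne : S.Nonempty := ⟨ℓ₁, by simp [hS, hℓ₁]⟩
    obtain ⟨ℓ₀, hℓ₀S, hmax⟩ := S.exists_max_image
      (fun ℓ => (a ℓ).natDegree * (r + 1) + (ℓ : ℕ)) hSne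
    have hℓ₀ : a ℓ₀ ≠ 0 := (Finset.mem_filter.mp hℓ₀S).2
    set D : ℕ := (a ℓ₀).natDegree * (r + 1) + (ℓ₀ : ℕ) with hD
    have hcoeff : h.coeff D ≠ 0 := by
      rw [hh, Polynomial.finset_sum_coeff]
      rw [Finset.sum_eq_single ℓ₀]
      · rw [hD, ← (hterm ℓ₀ hℓ₀).2, Polynomial.coeff_natDegree]
        exact Polynomial.leadingCoeff_ne_zero.mpr (hterm ℓ₀ hℓ₀).1
      · intro ℓ _ hℓne
        by_cases hz : a ℓ = 0
        · simp [hz]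
        · have hlt : ((a ℓ).comp g * Polynomial.X ^ (ℓ : ℕ)).natDegree < D := by
            rw [(hterm ℓ hz).2]
            have hle := hmax ℓ (by simp [hS, hz])
            have : (a ℓ).natDegree * (r + 1) + (ℓ : ℕ) ≠ D :=
              fun hEq => hℓne (hd_inj ℓ ℓ₀ hEq)
            omega
          exact Polynomial.coeff_eq_zero_of_natDegree_lt hlt
      · intro habs; exact absurd (Finset.mem_univ ℓ₀) habs
    exact fun h0 => hcoeff (by simp [h0])
  -- degree bound
  have hdeg : h.natDegree ≤ N * (r + 1) + r - 1 := by
    refine Polynomial.natDegree_sum_le_of_forall_le _ _ ?_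
    intro ℓ _
    calc ((a ℓ).comp g * Polynomial.X ^ (ℓ : ℕ)).natDegree
        ≤ ((a ℓ).comp g).natDegree + (Polynomial.X ^ (ℓ : ℕ) : Polynomial F).natDegree :=
          Polynomial.natDegree_mul_le
      _ ≤ N * (r + 1) + r - 1 := by
          rw [Polynomial.natDegree_comp, hgnat, Polynomial.natDegree_X_pow]
          have := hanat ℓ
          have hℓlt : (ℓ : ℕ) < r := ℓ.isLt
          have : (a ℓ).natDegree * (r + 1) ≤ N * (r + 1) :=
            Nat.mul_le_mul_right _ (hanat ℓ)
          omega
  -- roots argument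
  have hcard : (Finset.univ.filter (fun p : Fin b × Fin (r + 1) =>
        ∑ ℓ : Fin r, (a ℓ).eval (t p.1) * (x p.1 p.2) ^ (ℓ : ℕ) = 0)).card
      ≤ N * (r + 1) + r - 1 := by
    set Z := Finset.univ.filter (fun p : Fin b × Fin (r + 1) =>
        ∑ ℓ : Fin r, (a ℓ).eval (t p.1) * (x p.1 p.2) ^ (ℓ : ℕ) = 0) with hZ
    have hcardeq : Z.card = (Z.image (fun p : Fin b × Fin (r + 1) => x p.1 p.2)).card :=
      (Finset.card_image_of_injective _ hx).symm
    have hsub : Z.image (fun p : Fin b × Fin (r + 1) => x p.1 p.2) ⊆ h.roots.toFinset := by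
      intro y hy
      obtain ⟨p, hp, rfl⟩ := Finset.mem_image.mp hy
      have hp0 : ∑ ℓ : Fin r, (a ℓ).eval (t p.1) * (x p.1 p.2) ^ (ℓ : ℕ) = 0 :=
        (Finset.mem_filter.mp hp).2
      have heval : h.eval (x p.1 p.2) = 0 := by
        rw [hh, Polynomial.eval_finset_sum]
        simpa [Polynomial.eval_comp, hroot] using hp0
      rw [Multiset.mem_toFinset, Polynomial.mem_roots hne0]
      exact heval
    calc Z.card = (Z.image _).card := hcardeq
      _ ≤ h.roots.toFinset.card := Finset.card_le_card hsub
      _ ≤ Multiset.card h.roots := h.roots.toFinset_card_le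
      _ ≤ h.natDegree := Polynomial.card_roots' h
      _ ≤ N * (r + 1) + r - 1 := hdeg
  refine ⟨hne0, hdeg, hcard, ?_⟩
  -- hammingNorm
  have htot := Finset.card_filter_add_card_filter_not
    (s := (Finset.univ : Finset (Fin b × Fin (r + 1))))
    (p := fun p => ∑ ℓ : Fin r, (a ℓ).eval (t p.1) * (x p.1 p.2) ^ (ℓ : ℕ) = 0)
  have hcu : (Finset.univ : Finset (Fin b × Fin (r + 1))).card = b * (r + 1) := by
    simp [Finset.card_univ]
  rw [hcu] at htot
  have : hammingNorm (fun p : Fin b × Fin (r + 1) =>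
      ∑ ℓ : Fin r, (a ℓ).eval (t p.1) * (x p.1 p.2) ^ (ℓ : ℕ))
      = (Finset.univ.filter (fun p : Fin b × Fin (r + 1) =>
        ¬ ∑ ℓ : Fin r, (a ℓ).eval (t p.1) * (x p.1 p.2) ^ (ℓ : ℕ) = 0)).card := rfl
  omega
end

section
/- Let α and r be positive integers with α dividing r+1 and α < r+1. Then Σ_{i=0}^{r−1} ⌈αi/(r+1)⌉ = (α+1)(r+1)/2 − 2α (in particular (α+1)(r+1) is even under these hypotheses). -/
lemma block_sum (m : ℕ) (hm : 0 < m) :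
    ∑ j ∈ Finset.range m, ⌈((j : ℚ)) / (m : ℚ)⌉ = (m : ℤ) - 1 := by
  have hm' : (0 : ℚ) < (m : ℚ) := by exact_mod_cast hm
  have hc : ∀ j ∈ Finset.range m, ⌈((j : ℚ)) / (m : ℚ)⌉ = if j = 0 then 0 else 1 := by
    intro j hj
    rcases Nat.eq_zero_or_pos j with h0 | h1
    · simp [h0]
    · have hjm : j < m := Finset.mem_range.mp hj
      simp only [if_neg h1.ne']
      rw [Int.ceil_eq_iff]
      constructor
      · have hj0 : (0:ℚ) < (j:ℚ) := by exact_mod_cast h1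
        push_cast
        nlinarith [div_pos hj0 hm']
      · push_cast [div_le_one hm']
        exact_mod_cast hjm.le
  rw [Finset.sum_congr rfl hc]
  have h1 : ∀ x : ℕ, (if x = 0 then (0:ℤ) else 1) = 1 - (if x = 0 then 1 else 0) := by
    intro x; split <;> simp
  simp only [h1, Finset.sum_sub_distrib, Finset.sum_const, Finset.card_range, nsmul_eq_mul,
    mul_one, Finset.sum_ite_eq' (Finset.range m) 0 (fun _ => (1:ℤ)),
    Finset.mem_range.mpr hm, if_pos]

lemma key_sum (m : ℕ) (hm : 0 < m) : ∀ a : ℕ,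
    2 * ∑ i ∈ Finset.range (a * m), ⌈((i : ℚ)) / (m : ℚ)⌉
      = (m : ℤ) * a * ((a : ℤ) - 1) + 2 * a * ((m : ℤ) - 1) := by
  intro a
  induction a with
  | zero => simp
  | succ a ih =>
    have hterm : ∀ j ∈ Finset.range m,
        ⌈(((a * m + j : ℕ) : ℚ)) / (m : ℚ)⌉ = ⌈((j : ℚ)) / (m : ℚ)⌉ + (a : ℤ) := by
      intro j hj
      have hm' : (m : ℚ) ≠ 0 := by exact_mod_cast hm.ne'
      have h2 : (((a * m + j : ℕ) : ℚ)) / (m : ℚ) = ((j : ℚ)) / (m : ℚ) + ((a : ℤ) : ℚ) := by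
        field_simp
        push_cast
        ring
      rw [h2, Int.ceil_add_intCast]
    rw [Nat.succ_mul, Finset.sum_range_add, Finset.sum_congr rfl hterm,
      Finset.sum_add_distrib, block_sum m hm, Finset.sum_const, Finset.card_range,
      nsmul_eq_mul]
    push_cast
    linear_combination ih

/-- for positive integers `α, r` with `α ∣ (r+1)` and `α < r+1`, the sum
`Σ_{i=0}^{r-1} ⌈αi/(r+1)⌉` equals `(α+1)(r+1)/2 - 2α` (and `(α+1)(r+1)` is even). -/
theorem stmt_10 (α r : ℕ) (hα : 0 < α) (hr : 0 < r)
    (hdvd : α ∣ (r + 1)) (hlt : α < r + 1) :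
    Even ((α + 1) * (r + 1)) ∧
    (∑ i ∈ Finset.range r, ⌈((α : ℚ) * (i : ℚ)) / ((r : ℚ) + 1)⌉)
      = ((α : ℤ) + 1) * ((r : ℤ) + 1) / 2 - 2 * (α : ℤ) := by
  obtain ⟨m, hm⟩ := hdvd
  have hm0 : 0 < m := by nlinarith
  have hm2 : 2 ≤ m := by nlinarith
  have heven : Even ((α + 1) * (r + 1)) := by
    rcases Nat.even_or_odd α with he | ho
    · exact Even.mul_left (hm ▸ he.mul_right m) (α + 1)
    · exact Even.mul_right ho.add_one (r + 1)
  refine ⟨heven, ?_⟩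
  have hαQ : (α : ℚ) ≠ 0 := by exact_mod_cast hα.ne'
  have hrw : ∀ i : ℕ, ⌈((α : ℚ) * (i : ℚ)) / ((r : ℚ) + 1)⌉ = ⌈((i : ℚ)) / (m : ℚ)⌉ := by
    intro i
    have h1 : ((r : ℚ) + 1) = (α : ℚ) * (m : ℚ) := by exact_mod_cast congrArg (Nat.cast : ℕ → ℚ) hm
    rw [h1, mul_div_mul_left _ _ hαQ]
  simp only [hrw]
  have hfull := key_sum m hm0 α
  have hrm : α * m = r + 1 := hm.symm
  rw [hrm, Finset.sum_range_succ] at hfull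
  have hmQ : (0 : ℚ) < (m : ℚ) := by exact_mod_cast hm0
  have h1 : (α : ℚ) * m = (r : ℚ) + 1 := by
    exact_mod_cast (congrArg (Nat.cast : ℕ → ℚ) hm).symm
  have hlast : ⌈((r : ℚ)) / (m : ℚ)⌉ = (α : ℤ) := by
    rw [Int.ceil_eq_iff]
    constructor
    · rw [lt_div_iff₀ hmQ]
      have h2 : ((α : ℚ) - 1) * m = (α : ℚ) * m - m := by ring
      have h3 : (1 : ℚ) < m := by exact_mod_cast hm2.trans_lt' one_lt_two
      push_cast
      rw [h2, h1]
      linarith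
    · rw [div_le_iff₀ hmQ]
      push_cast
      linarith
  rw [hlast] at hfull
  obtain ⟨k, hk⟩ := heven
  have hkZ : ((α : ℤ) + 1) * ((r : ℤ) + 1) = 2 * k := by
    have h4 := congrArg (Nat.cast : ℕ → ℤ) hk
    push_cast at h4
    linarith
  rw [hkZ, Int.mul_ediv_cancel_left _ (by norm_num)]
  have hmr : (m : ℤ) * α = (r : ℤ) + 1 := by
    have h5 := congrArg (Nat.cast : ℕ → ℤ) hm
    push_cast at h5
    linarith
  have h2 : (2:ℤ) * ∑ i ∈ Finset.range r, ⌈((i : ℚ)) / (m : ℚ)⌉ = 2 * ((k : ℤ) - 2 * α) := by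
    linear_combination hfull + ((α : ℤ) + 1) * hmr + hkZ
  linarith
end

section
/- Assume the refined P¹×P¹ setup. Then for every σ ∈ V with not all coefficient polynomials a_0,…,a_{r−1} zero, the number of pairs (i,j), 1 ≤ i ≤ b, 1 ≤ j ≤ r+1, with σ(x_{i,j}, t_i) = 0 is at most N(r+1) = n − 𝔡. Equivalently, every nonzero codeword of the evaluation code C = {(σ(x_{i,j}, t_i))_{i,j} : σ ∈ V} ⊆ F_q^n has Hamming weight at least 𝔡, so the minimum distance of C is at least 𝔡. -/
open Polynomial Finset

private lemma key_sum_s11 {R : Type*} [CommRing R] (r : ℕ) (A : ℕ → R) (cR ξ : R)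
    (hξ : ξ ^ (r + 1) = cR) (k : ℕ) (hk : k ≤ r) :
    ∑ j ∈ Finset.range (r + 1),
        ξ ^ j * (if k ≤ j then A (j - k) else cR * A (j + (r + 1) - k))
      = (∑ i ∈ Finset.range (r + 1), A i * ξ ^ i) * ξ ^ k := by
  rw [Finset.sum_mul]
  rw [Finset.range_eq_Ico, ← Finset.sum_Ico_consecutive _ (Nat.zero_le k) (by omega : k ≤ r + 1),
    ← Finset.sum_Ico_consecutive (fun i => A i * ξ ^ i * ξ ^ k) (Nat.zero_le (r + 1 - k))
      (by omega : r + 1 - k ≤ r + 1)]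
  have h1 : ∑ j ∈ Finset.Ico k (r + 1),
      ξ ^ j * (if k ≤ j then A (j - k) else cR * A (j + (r + 1) - k))
      = ∑ i ∈ Finset.Ico 0 (r + 1 - k), A i * ξ ^ i * ξ ^ k := by
    rw [Finset.sum_Ico_eq_sum_range, Finset.sum_Ico_eq_sum_range]
    simp only [Nat.sub_zero, Nat.zero_add]
    apply Finset.sum_congr rfl
    intro l hl
    rw [if_pos (Nat.le_add_right k l), Nat.add_sub_cancel_left, mul_assoc, ← pow_add]
    rw [mul_comm, Nat.add_comm k l]
  have h2 : ∑ j ∈ Finset.Ico 0 k,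
      ξ ^ j * (if k ≤ j then A (j - k) else cR * A (j + (r + 1) - k))
      = ∑ i ∈ Finset.Ico (r + 1 - k) (r + 1), A i * ξ ^ i * ξ ^ k := by
    rw [Finset.sum_Ico_eq_sum_range, Finset.sum_Ico_eq_sum_range]
    have hc : r + 1 - (r + 1 - k) = k := by omega
    rw [hc]
    simp only [Nat.sub_zero, Nat.zero_add]
    apply Finset.sum_congr rfl
    intro l hl
    simp only [Finset.mem_range] at hl
    rw [if_neg (by omega)]
    have hm : l + (r + 1) - k = r + 1 - k + l := by omega
    rw [hm, ← hξ]
    have e1 : ξ ^ l * (ξ ^ (r + 1) * A (r + 1 - k + l)) = A (r + 1 - k + l) * ξ ^ (l + (r + 1)) := by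
      rw [pow_add]; ring
    have e2 : A (r + 1 - k + l) * ξ ^ (r + 1 - k + l) * ξ ^ k
        = A (r + 1 - k + l) * ξ ^ (l + (r + 1)) := by
      rw [mul_assoc, ← pow_add]
      congr 2
      omega
    rw [e1, e2]
  rw [h1, h2]
  ring

private lemma hensel_root {F : Type*} [Field F] (r : ℕ) (c : Polynomial F) (t0 x0 : F)
    (h0 : x0 ^ (r + 1) = c.eval t0) (hd : ((r : F) + 1) * x0 ^ r ≠ 0) :
    ∀ m : ℕ, 1 ≤ m → ∃ ξ : Polynomial F, ξ.eval t0 = x0 ∧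
      (X - C t0) ^ m ∣ (ξ ^ (r + 1) - c) := by
  intro m hm
  induction m with
  | zero => omega
  | succ m ih =>
    rcases Nat.eq_or_lt_of_le hm with h1 | h1
    · -- m + 1 = 1, base case
      refine ⟨C x0, eval_C, ?_⟩
      have : (m : ℕ) = 0 := by omega
      subst this
      rw [pow_one, dvd_iff_isRoot]
      simp [IsRoot, h0]
    · obtain ⟨ξ, he, g, hg⟩ := ih (by omega)
      set p : Polynomial F := X - C t0 with hp
      set δ : F := -(g.eval t0) / (((r : F) + 1) * x0 ^ r) with hδ
      refine ⟨ξ + C δ * p ^ m, ?_, ?_⟩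
      · simp [hp, eval_pow, zero_pow (by omega : m ≠ 0), he]
      · have hexp := add_pow ξ (C δ * p ^ m) (r + 1)
        -- peel off the last two terms
        rw [Finset.sum_range_succ, Finset.sum_range_succ] at hexp
        have hbin : ((r + 1).choose r : Polynomial F) = (C ((r : F) + 1)) := by
          rw [Nat.choose_succ_self_right]
          push_cast
          simp [C_add, C_1]
        rw [Nat.sub_self, pow_zero, Nat.choose_self, Nat.cast_one, mul_one, mul_one,
          Nat.add_sub_cancel_left, pow_one, hbin] at hexp
        have key : (ξ + C δ * p ^ m) ^ (r + 1) - c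
            = (∑ k ∈ Finset.range r, ξ ^ k * (C δ * p ^ m) ^ (r + 1 - k) * ((r+1).choose k : Polynomial F))
              + (p ^ m * (g + ξ ^ r * C δ * C ((r:F)+1))) := by
          rw [hexp]
          have : ξ ^ (r + 1) - c = p ^ m * g := hg
          ring_nf
          ring_nf at this ⊢
          linear_combination this
        rw [key]
        apply dvd_add
        · apply Finset.dvd_sum
          intro k hk
          simp only [Finset.mem_range] at hk
          have hk2 : 2 ≤ r + 1 - k := by omega
          have hm1 : 1 ≤ m := by omega
          have h2 : m + 1 ≤ m * (r + 1 - k) := by nlinarith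
          calc p ^ (m + 1) ∣ p ^ (m * (r + 1 - k)) := pow_dvd_pow p h2
            _ = (p ^ m) ^ (r + 1 - k) := by rw [← pow_mul]
            _ ∣ ξ ^ k * (C δ * p ^ m) ^ (r + 1 - k) * ((r+1).choose k : Polynomial F) := by
                rw [mul_pow]
                exact dvd_mul_of_dvd_left (dvd_mul_of_dvd_right (dvd_mul_left _ _) _) _
        · rw [pow_succ]
          apply mul_dvd_mul_left
          rw [hp, dvd_iff_isRoot]
          simp only [IsRoot, eval_add, eval_mul, eval_pow, eval_C, he]
          have : δ * (((r : F) + 1) * x0 ^ r) = -(g.eval t0) := div_mul_cancel₀ _ hd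
          linear_combination this

private lemma deriv_ne_zero {F : Type*} [Field F] (r : ℕ) (c0 : F) (x : Fin (r + 1) → F)
    (hinj : Function.Injective x) (hroot : ∀ j, x j ^ (r + 1) = c0) (j : Fin (r + 1)) :
    ((r : F) + 1) * x j ^ r ≠ 0 := by
  set Q : Polynomial F := X ^ (r + 1) - C c0 with hQ
  set P : Polynomial F := ∏ j : Fin (r + 1), (X - C (x j)) with hP
  have hPdvd : P ∣ Q := by
    apply Finset.prod_dvd_of_coprime
    · intro u hu v hv huv
      exact (Polynomial.pairwise_coprime_X_sub_C hinj) huv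
    · intro u hu
      rw [dvd_iff_isRoot]
      simp [IsRoot, hQ, hroot u]
  have hQmonic : Q.Monic := monic_X_pow_sub_C c0 (by omega)
  have hPmonic : P.Monic := monic_prod_of_monic _ _ (fun j _ => monic_X_sub_C (x j))
  have hQdeg : Q.natDegree = r + 1 := natDegree_X_pow_sub_C
  have hPdeg : P.natDegree = r + 1 := by
    rw [hP, natDegree_prod _ _ (fun j _ => X_sub_C_ne_zero (x j))]
    simp [natDegree_X_sub_C]
  have hQP : Q = P := by
    obtain ⟨u, hu⟩ := hPdvd
    have hu0 : u ≠ 0 := by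
      rintro rfl; rw [mul_zero] at hu; exact hQmonic.ne_zero hu
    have hdeg : u.natDegree = 0 := by
      have := natDegree_mul (hPmonic.ne_zero) hu0
      rw [← hu, hQdeg, hPdeg] at this
      omega
    obtain ⟨e, he⟩ := natDegree_eq_zero.mp hdeg
    have : Q.leadingCoeff = P.leadingCoeff * u.leadingCoeff := by
      rw [hu, leadingCoeff_mul]
    rw [hQmonic.leadingCoeff, hPmonic.leadingCoeff, one_mul] at this
    have he2 : u = C e := he.symm
    rw [he2, leadingCoeff_C] at this
    rw [hu, he2, ← this, map_one, mul_one]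
  have hsep : Q.Separable := by
    rw [hQP, hP]
    exact (Polynomial.separable_prod_X_sub_C_iff).mpr hinj
  obtain ⟨u, v, huv⟩ := hsep
  have hder : derivative Q = C ((r : F) + 1) * X ^ r := by
    rw [hQ]
    simp only [derivative_sub, derivative_C, sub_zero, derivative_X_pow]
    push_cast
    simp
  intro hzero
  have := congrArg (eval (x j)) huv
  rw [hder] at this
  simp only [eval_add, eval_mul, eval_one, eval_pow, eval_C, eval_X] at this
  rw [hzero] at this
  have hQj : Q.eval (x j) = 0 := by simp [hQ, hroot j]
  rw [hQj] at this
  simp at this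

private lemma det_deg_bound {F : Type*} [Field F] (r α N : ℕ)
    (A : ℕ → Polynomial F) (c : Polynomial F)
    (hc : c.degree ≤ (α : WithBot ℕ))
    (hA0 : ∀ d, r ≤ d → A d = 0)
    (hAdeg : ∀ d, d < r → (A d).degree ≤ ((N - (α * d + r) / (r + 1) : ℕ) : WithBot ℕ))
    (hεN : ∀ d, d < r → (α * d + r) / (r + 1) ≤ N) :
    (Matrix.det (Matrix.of fun j k : Fin (r + 1) =>
        if (k : ℕ) ≤ (j : ℕ) then A ((j : ℕ) - (k : ℕ))
        else c * A ((j : ℕ) + (r + 1) - (k : ℕ)))).degree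
      ≤ ((N * (r + 1) : ℕ) : WithBot ℕ) := by
  rw [Matrix.det_apply]
  refine le_trans (degree_sum_le _ _) ?_
  rw [Finset.sup_le_iff]
  intro π _
  have hsmul : ∀ p : Polynomial F, (Equiv.Perm.sign π • p).degree ≤ p.degree := by
    intro p
    rcases Int.units_eq_one_or (Equiv.Perm.sign π) with h | h <;>
      simp [h, Units.smul_def]
  refine le_trans (hsmul _) ?_
  set dd : Fin (r + 1) → ℕ := fun j =>
    if (j : ℕ) ≤ ((π j : Fin (r+1)) : ℕ) then ((π j : Fin (r+1)) : ℕ) - (j : ℕ)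
    else ((π j : Fin (r+1)) : ℕ) + (r + 1) - (j : ℕ) with hdd
  by_cases hcase : ∀ j, dd j < r
  · -- all indices small; use the weighted degree count
    refine le_trans (degree_prod_le _ _) ?_
    have hb : ∀ j : Fin (r + 1),
        (Matrix.of (fun j k : Fin (r + 1) =>
          if (k : ℕ) ≤ (j : ℕ) then A ((j : ℕ) - (k : ℕ))
          else c * A ((j : ℕ) + (r + 1) - (k : ℕ))) (π j) j).degree
        ≤ (((if (j : ℕ) ≤ ((π j : Fin (r+1)) : ℕ) then 0 else α)
            + (N - (α * dd j + r) / (r + 1)) : ℕ) : WithBot ℕ) := by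
      intro j
      by_cases h : (j : ℕ) ≤ ((π j : Fin (r+1)) : ℕ)
      · have hdj : dd j = ((π j : Fin (r+1)) : ℕ) - (j : ℕ) := by
          simp only [hdd]; rw [if_pos h]
        simp only [Matrix.of_apply, if_pos h, zero_add, ← hdj]
        exact hAdeg _ (hcase j)
      · have hdj : dd j = ((π j : Fin (r+1)) : ℕ) + (r + 1) - (j : ℕ) := by
          simp only [hdd]; rw [if_neg h]
        simp only [Matrix.of_apply, if_neg h, ← hdj]
        refine le_trans (degree_mul_le _ _) ?_
        refine le_trans (add_le_add hc (hAdeg _ (hcase j))) ?_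
        rw [← Nat.cast_add]
    refine le_trans (Finset.sum_le_sum (fun j _ => hb j)) ?_
    rw [← Nat.cast_sum]
    rw [Nat.cast_le]
    -- now pure ℕ arithmetic
    set W : ℕ := (Finset.univ.filter fun j : Fin (r + 1) =>
      ¬ ((j : ℕ) ≤ ((π j : Fin (r+1)) : ℕ))).card with hW
    have h1 : ∑ j : Fin (r + 1), (if (j : ℕ) ≤ ((π j : Fin (r+1)) : ℕ) then 0 else α)
        = α * W := by
      rw [Finset.sum_ite, Finset.sum_const, Finset.sum_const]
      simp [hW, mul_comm]
    have h2 : ∑ j : Fin (r + 1), dd j = (r + 1) * W := by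
      have hcast : ∀ j : Fin (r + 1), (dd j : ℤ)
          = ((π j : Fin (r+1)) : ℕ) - ((j : ℕ) : ℤ)
            + (if (j : ℕ) ≤ ((π j : Fin (r+1)) : ℕ) then 0 else (r + 1 : ℤ)) := by
        intro j
        have hj : (j : ℕ) ≤ r := by omega
        by_cases h : (j : ℕ) ≤ ((π j : Fin (r+1)) : ℕ) <;> simp [hdd, h] <;> omega
      have : (↑(∑ j : Fin (r + 1), dd j) : ℤ) = ((r + 1) * W : ℕ) := by
        push_cast
        rw [Finset.sum_congr rfl (fun j _ => hcast j)]
        rw [Finset.sum_add_distrib]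
        have hz : ∑ j : Fin (r + 1), (((π j : Fin (r+1)) : ℕ) - ((j : ℕ) : ℤ)) = 0 := by
          rw [Finset.sum_sub_distrib]
          rw [Equiv.sum_comp π (fun j : Fin (r + 1) => ((j : ℕ) : ℤ))]
          ring
        rw [hz, zero_add, Finset.sum_ite, Finset.sum_const, Finset.sum_const, ← hW]
        simp only [smul_zero, zero_add, nsmul_eq_mul]
        push_cast
        ring
      exact_mod_cast this
    have h3 : ∀ j : Fin (r + 1), α * dd j ≤ (r + 1) * ((α * dd j + r) / (r + 1)) := by
      intro j
      have := Nat.div_add_mod (α * dd j + r) (r + 1)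
      have := Nat.mod_lt (α * dd j + r) (show 0 < r + 1 by omega)
      omega
    have h4 : α * W ≤ ∑ j : Fin (r + 1), (α * dd j + r) / (r + 1) := by
      have hs : (r + 1) * (α * W) ≤ (r + 1) * ∑ j : Fin (r + 1), (α * dd j + r) / (r + 1) := by
        rw [Finset.mul_sum]
        calc (r + 1) * (α * W) = α * ((r + 1) * W) := by ring
          _ = α * ∑ j : Fin (r + 1), dd j := by rw [h2]
          _ = ∑ j : Fin (r + 1), α * dd j := by rw [Finset.mul_sum]
          _ ≤ _ := Finset.sum_le_sum (fun j _ => h3 j)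
      exact Nat.le_of_mul_le_mul_left hs (by omega)
    have h5 : ∀ j : Fin (r + 1), (α * dd j + r) / (r + 1) ≤ N :=
      fun j => hεN _ (hcase j)
    have h6 : ∑ j : Fin (r + 1), (N - (α * dd j + r) / (r + 1))
        = (r + 1) * N - ∑ j : Fin (r + 1), (α * dd j + r) / (r + 1) := by
      rw [Finset.sum_tsub_distrib Finset.univ (fun j _ => h5 j)]
      simp [Finset.sum_const, mul_comm]
    have h7 : ∑ j : Fin (r + 1), (α * dd j + r) / (r + 1) ≤ (r + 1) * N := by
      calc _ ≤ ∑ _j : Fin (r + 1), N := Finset.sum_le_sum (fun j _ => h5 j)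
        _ = (r + 1) * N := by simp [Finset.sum_const, mul_comm]
    rw [Finset.sum_add_distrib, h1, h6, Nat.mul_comm N (r + 1)]
    have final : ∀ aw s p : ℕ, aw ≤ s → s ≤ p → aw + (p - s) ≤ p := by
      intro aw s p hh hh'; omega
    exact final _ _ _ h4 h7
  · -- some index is ≥ r : the corresponding entry vanishes
    push_neg at hcase
    obtain ⟨j, hj⟩ := hcase
    have hzero : (Matrix.of (fun j k : Fin (r + 1) =>
          if (k : ℕ) ≤ (j : ℕ) then A ((j : ℕ) - (k : ℕ))
          else c * A ((j : ℕ) + (r + 1) - (k : ℕ))) (π j) j) = 0 := by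
      by_cases h : (j : ℕ) ≤ ((π j : Fin (r+1)) : ℕ)
      · have hdj : dd j = ((π j : Fin (r+1)) : ℕ) - (j : ℕ) := by
          simp only [hdd]; rw [if_pos h]
        simp only [Matrix.of_apply, if_pos h, ← hdj]
        exact hA0 _ hj
      · have hdj : dd j = ((π j : Fin (r+1)) : ℕ) + (r + 1) - (j : ℕ) := by
          simp only [hdd]; rw [if_neg h]
        simp only [Matrix.of_apply, if_neg h, ← hdj]
        rw [hA0 _ hj, mul_zero]
    have hp0 : (∏ i : Fin (r + 1), Matrix.of (fun j k : Fin (r + 1) =>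
          if (k : ℕ) ≤ (j : ℕ) then A ((j : ℕ) - (k : ℕ))
          else c * A ((j : ℕ) + (r + 1) - (k : ℕ))) (π i) i) = 0 :=
      Finset.prod_eq_zero (Finset.mem_univ j) hzero
    rw [hp0]
    simp

private lemma det_ne_zero {F : Type*} [Field F] (r : ℕ) (A : ℕ → Polynomial F)
    (hA0 : ∀ d, r ≤ d → A d = 0) (hAne : ∃ d, A d ≠ 0) (c : Polynomial F)
    (hirr : Irreducible (X ^ (r + 1) - Polynomial.C c : Polynomial (Polynomial F))) :
    (Matrix.det (Matrix.of fun j k : Fin (r + 1) =>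
        if (k : ℕ) ≤ (j : ℕ) then A ((j : ℕ) - (k : ℕ))
        else c * A ((j : ℕ) + (r + 1) - (k : ℕ)))) ≠ 0 := by
  intro hdet
  obtain ⟨v, hv0, hv⟩ := Matrix.exists_mulVec_eq_zero_iff.mpr hdet
  set f : Polynomial (Polynomial F) := X ^ (r + 1) - C c with hf
  set σP : Polynomial (Polynomial F) := ∑ i ∈ Finset.range (r + 1), C (A i) * X ^ i with hσP
  set τ : Polynomial (Polynomial F) := ∑ k : Fin (r + 1), C (v k) * X ^ (k : ℕ) with hτ
  -- σP ≠ 0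
  have hσco : ∀ m, m < r + 1 → σP.coeff m = A m := by
    intro m hm
    rw [hσP, Polynomial.finset_sum_coeff]
    rw [Finset.sum_eq_single m]
    · simp [coeff_C_mul, coeff_X_pow]
    · intro i _ hne2
      simp [coeff_C_mul, coeff_X_pow, (Ne.symm hne2 : m ≠ i)]
    · intro h; exact absurd (Finset.mem_range.mpr hm) h
  have hσne : σP ≠ 0 := by
    obtain ⟨d, hd⟩ := hAne
    have hdr : d < r + 1 := by
      by_contra h; exact hd (hA0 d (by omega))
    intro h0
    apply hd
    rw [← hσco d hdr, h0, coeff_zero]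
  -- τ ≠ 0
  have hτco : ∀ m : Fin (r + 1), τ.coeff (m : ℕ) = v m := by
    intro m
    rw [hτ, Polynomial.finset_sum_coeff]
    rw [Finset.sum_eq_single m]
    · simp [coeff_C_mul, coeff_X_pow]
    · intro i _ hne2
      have : (m : ℕ) ≠ (i : ℕ) := fun h => hne2 (Fin.ext h.symm)
      simp [coeff_C_mul, coeff_X_pow, this]
    · intro h; exact absurd (Finset.mem_univ m) h
  have hτne : τ ≠ 0 := by
    intro h0
    apply hv0
    funext m
    rw [← hτco m, h0, coeff_zero, Pi.zero_apply]
  -- degrees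
  have hfdeg : f.degree = ((r + 1 : ℕ) : WithBot ℕ) := by
    rw [hf]; exact_mod_cast degree_X_pow_sub_C (by omega) c
  have hσdeg : σP.degree ≤ ((r : ℕ) : WithBot ℕ) := by
    rw [hσP]
    refine le_trans (degree_sum_le _ _) ?_
    rw [Finset.sup_le_iff]
    intro i hi
    refine le_trans (degree_mul_le _ _) ?_
    refine le_trans (add_le_add degree_C_le (le_of_eq (degree_X_pow i))) ?_
    rw [zero_add, Nat.cast_le]
    exact Nat.lt_succ_iff.mp (Finset.mem_range.mp hi)
  have hτdeg : τ.degree ≤ ((r : ℕ) : WithBot ℕ) := by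
    rw [hτ]
    refine le_trans (degree_sum_le _ _) ?_
    rw [Finset.sup_le_iff]
    intro k _
    refine le_trans (degree_mul_le _ _) ?_
    refine le_trans (add_le_add degree_C_le (le_of_eq (degree_X_pow _))) ?_
    rw [zero_add, Nat.cast_le]
    omega
  -- quotient ring computation
  set φ0 : Polynomial (Polynomial F) →+* (Polynomial (Polynomial F)) ⧸ Ideal.span {f} :=
    Ideal.Quotient.mk (Ideal.span {f}) with hφ0
  set φ : Polynomial F →+* (Polynomial (Polynomial F)) ⧸ Ideal.span {f} :=
    φ0.comp Polynomial.C with hφ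
  set ξ : (Polynomial (Polynomial F)) ⧸ Ideal.span {f} := φ0 X with hξdef
  have hfz : φ0 f = 0 := Ideal.Quotient.eq_zero_iff_mem.mpr (Ideal.mem_span_singleton_self f)
  have hξ : ξ ^ (r + 1) = φ c := by
    have h2 : φ0 (X ^ (r + 1) - C c) = 0 := hfz
    rw [map_sub, map_pow, sub_eq_zero] at h2
    exact h2
  have hkey : ∀ k : Fin (r + 1),
      (∑ i ∈ Finset.range (r + 1), φ (A i) * ξ ^ i) * ξ ^ (k : ℕ)
        = ∑ j ∈ Finset.range (r + 1), ξ ^ j *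
            φ (if (k : ℕ) ≤ j then A (j - (k : ℕ)) else c * A (j + (r + 1) - (k : ℕ))) := by
    intro k
    rw [← key_sum_s11 r (fun d => φ (A d)) (φ c) ξ hξ (k : ℕ) (by omega)]
    apply Finset.sum_congr rfl
    intro j _
    by_cases h : (k : ℕ) ≤ j
    · rw [if_pos h, if_pos h]
    · rw [if_neg h, if_neg h, map_mul]
  have hmain : φ0 (σP * τ) = 0 := by
    rw [map_mul]
    have hσφ : φ0 σP = ∑ i ∈ Finset.range (r + 1), φ (A i) * ξ ^ i := by
      rw [hσP, map_sum]
      apply Finset.sum_congr rfl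
      intro i _
      rw [map_mul, map_pow]
      rfl
    have hτφ : φ0 τ = ∑ k : Fin (r + 1), φ (v k) * ξ ^ (k : ℕ) := by
      rw [hτ, map_sum]
      apply Finset.sum_congr rfl
      intro k _
      rw [map_mul, map_pow]
      rfl
    rw [hσφ, hτφ]
    rw [Finset.mul_sum (Finset.univ : Finset (Fin (r + 1))) (fun k => φ (v k) * ξ ^ (k : ℕ))
      (∑ i ∈ Finset.range (r + 1), φ (A i) * ξ ^ i)]
    have step1 : ∀ k : Fin (r + 1),
        (∑ i ∈ Finset.range (r + 1), φ (A i) * ξ ^ i) * (φ (v k) * ξ ^ (k : ℕ))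
        = ∑ j : Fin (r + 1), ξ ^ (j : ℕ) *
            (φ (if (k : ℕ) ≤ (j : ℕ) then A ((j : ℕ) - (k : ℕ))
                else c * A ((j : ℕ) + (r + 1) - (k : ℕ))) * φ (v k)) := by
      intro k
      have e1 : (∑ i ∈ Finset.range (r + 1), φ (A i) * ξ ^ i) * (φ (v k) * ξ ^ (k : ℕ))
          = ((∑ i ∈ Finset.range (r + 1), φ (A i) * ξ ^ i) * ξ ^ (k : ℕ)) * φ (v k) := by ring
      rw [e1, hkey k, Finset.sum_mul (Finset.range (r + 1)) (fun j => ξ ^ j *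
          φ (if (k : ℕ) ≤ j then A (j - (k : ℕ)) else c * A (j + (r + 1) - (k : ℕ)))) (φ (v k)),
        ← Fin.sum_univ_eq_sum_range (fun j => ξ ^ j *
            φ (if (k : ℕ) ≤ j then A (j - (k : ℕ)) else c * A (j + (r + 1) - (k : ℕ))) * φ (v k))
          (r + 1)]
      apply Finset.sum_congr rfl
      intro j _
      ring
    rw [Finset.sum_congr rfl (fun k _ => step1 k), Finset.sum_comm]
    have step3 : ∀ j : Fin (r + 1),
        (∑ k : Fin (r + 1), ξ ^ (j : ℕ) *
          (φ (if (k : ℕ) ≤ (j : ℕ) then A ((j : ℕ) - (k : ℕ))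
              else c * A ((j : ℕ) + (r + 1) - (k : ℕ))) * φ (v k))) = 0 := by
      intro j
      have hsum : (∑ k : Fin (r + 1),
          (φ (if (k : ℕ) ≤ (j : ℕ) then A ((j : ℕ) - (k : ℕ))
              else c * A ((j : ℕ) + (r + 1) - (k : ℕ))) * φ (v k)))
          = φ (∑ k : Fin (r + 1),
              (if (k : ℕ) ≤ (j : ℕ) then A ((j : ℕ) - (k : ℕ))
                else c * A ((j : ℕ) + (r + 1) - (k : ℕ))) * v k) := by
        rw [map_sum]
        apply Finset.sum_congr rfl
        intro k _
        rw [map_mul]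
      rw [← Finset.mul_sum (Finset.univ : Finset (Fin (r + 1))) (fun k : Fin (r + 1) =>
          φ (if (k : ℕ) ≤ (j : ℕ) then A ((j : ℕ) - (k : ℕ))
            else c * A ((j : ℕ) + (r + 1) - (k : ℕ))) * φ (v k)) (ξ ^ (j : ℕ)), hsum]
      have hvj := congrFun hv j
      simp only [Matrix.mulVec, dotProduct, Matrix.of_apply, Pi.zero_apply] at hvj
      rw [hvj, map_zero]
      exact mul_zero (ξ ^ (j : ℕ))
    rw [Finset.sum_congr rfl (fun j _ => step3 j), Finset.sum_const_zero]
  have hdvd' : f ∣ σP * τ := Ideal.mem_span_singleton.mp (Ideal.Quotient.eq_zero_iff_mem.mp hmain)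
  have hprime : Prime f := UniqueFactorizationMonoid.irreducible_iff_prime.mp hirr
  have hcontra : ∀ g : Polynomial (Polynomial F), g ≠ 0 →
      g.degree ≤ ((r : ℕ) : WithBot ℕ) → ¬ f ∣ g := by
    intro g hg hdeg hdvd2
    have := Polynomial.degree_le_of_dvd hdvd2 hg
    rw [hfdeg] at this
    have := le_trans this hdeg
    rw [Nat.cast_le] at this
    omega
  rcases hprime.2.2 _ _ hdvd' with h | h
  · exact hcontra σP hσne hσdeg h
  · exact hcontra τ hτne hτdeg h

private lemma isUnit_finset_prod {ι M : Type*} [CommMonoid M] (s : Finset ι) (f : ι → M)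
    (h : ∀ i ∈ s, IsUnit (f i)) : IsUnit (∏ i ∈ s, f i) := by
  induction s using Finset.cons_induction with
  | empty => simp
  | cons a s ha ih =>
    rw [Finset.prod_cons]
    exact (h a (Finset.mem_cons_self a s)).mul (ih fun i hi => h i (Finset.mem_cons.mpr (Or.inr hi)))

private lemma pow_card_dvd_det {F : Type*} [Field F] [DecidableEq F] (r : ℕ)
    (A : ℕ → Polynomial F) (c : Polynomial F)
    (t0 : F) (x0 : Fin (r + 1) → F) (hinj : Function.Injective x0)
    (hroot : ∀ j, (x0 j) ^ (r + 1) = c.eval t0) :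
    (X - C t0) ^ ((Finset.univ.filter fun j : Fin (r + 1) =>
        ∑ i ∈ Finset.range (r + 1), (A i).eval t0 * (x0 j) ^ i = 0).card)
      ∣ (Matrix.det (Matrix.of fun j k : Fin (r + 1) =>
        if (k : ℕ) ≤ (j : ℕ) then A ((j : ℕ) - (k : ℕ))
        else c * A ((j : ℕ) + (r + 1) - (k : ℕ)))) := by
  set S : Finset (Fin (r + 1)) := Finset.univ.filter fun j : Fin (r + 1) =>
      ∑ i ∈ Finset.range (r + 1), (A i).eval t0 * (x0 j) ^ i = 0 with hS
  set K := S.card with hK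
  set p : Polynomial F := X - C t0 with hp
  rcases Nat.eq_zero_or_pos K with hK0 | hK1
  · rw [hK0, pow_zero]; exact one_dvd _
  -- Hensel roots
  have hd := deriv_ne_zero r (c.eval t0) x0 hinj hroot
  have hξ : ∀ j : Fin (r + 1), ∃ ξ : Polynomial F, ξ.eval t0 = x0 j ∧
      p ^ K ∣ (ξ ^ (r + 1) - c) := fun j =>
    hensel_root r c t0 (x0 j) (hroot j) (hd j) K hK1
  choose ξ hξeval hξdvd using hξ
  -- quotient ring
  set ψ : Polynomial F →+* (Polynomial F ⧸ Ideal.span {p ^ K}) :=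
    Ideal.Quotient.mk (Ideal.span {p ^ K}) with hψ
  have hξR : ∀ j, (ψ (ξ j)) ^ (r + 1) = ψ c := by
    intro j
    have : ψ (ξ j ^ (r + 1) - c) = 0 :=
      Ideal.Quotient.eq_zero_iff_mem.mpr (Ideal.mem_span_singleton.mpr (hξdvd j))
    rw [map_sub, map_pow, sub_eq_zero] at this
    exact this
  set σt : Fin (r + 1) → Polynomial F := fun j =>
    ∑ i ∈ Finset.range (r + 1), A i * (ξ j) ^ i with hσt
  set M : Matrix (Fin (r + 1)) (Fin (r + 1)) (Polynomial F) :=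
    Matrix.of fun j k : Fin (r + 1) =>
      if (k : ℕ) ≤ (j : ℕ) then A ((j : ℕ) - (k : ℕ))
      else c * A ((j : ℕ) + (r + 1) - (k : ℕ)) with hM
  set U : Matrix (Fin (r + 1)) (Fin (r + 1)) (Polynomial F ⧸ Ideal.span {p ^ K}) :=
    Matrix.of fun j k : Fin (r + 1) => (ψ (ξ j)) ^ (k : ℕ) with hU
  -- the matrix identity
  have hUM : U * M.map ψ = Matrix.diagonal (fun j => ψ (σt j)) * U := by
    ext j k
    rw [Matrix.mul_apply, Matrix.diagonal_mul]
    have lhs : ∑ l : Fin (r + 1), U j l * (M.map ψ) l k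
        = ∑ l ∈ Finset.range (r + 1), (ψ (ξ j)) ^ l *
            (if (k : ℕ) ≤ l then ψ (A (l - (k : ℕ)))
             else ψ c * ψ (A (l + (r + 1) - (k : ℕ)))) := by
      rw [← Fin.sum_univ_eq_sum_range (fun l => (ψ (ξ j)) ^ l *
          (if (k : ℕ) ≤ l then ψ (A (l - (k : ℕ)))
           else ψ c * ψ (A (l + (r + 1) - (k : ℕ))))) (r + 1)]
      apply Finset.sum_congr rfl
      intro l _
      rw [hU, hM]
      simp only [Matrix.of_apply, Matrix.map_apply]
      by_cases h : (k : ℕ) ≤ (l : ℕ)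
      · rw [if_pos h, if_pos h]
      · rw [if_neg h, if_neg h, map_mul]
    rw [lhs]
    have := key_sum_s11 r (fun d => ψ (A d)) (ψ c) (ψ (ξ j)) (hξR j) (k : ℕ) (by omega)
    rw [this]
    have : ψ (σt j) = ∑ i ∈ Finset.range (r + 1), ψ (A i) * (ψ (ξ j)) ^ i := by
      rw [hσt, map_sum]
      apply Finset.sum_congr rfl
      intro i _
      rw [map_mul, map_pow]
    rw [this, hU]
    rfl
  -- determinant of U is a unit
  have hUdet : IsUnit (Matrix.det U) := by
    have : U = Matrix.vandermonde (fun j => ψ (ξ j)) := by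
      ext j k; rfl
    rw [this, Matrix.det_vandermonde]
    apply isUnit_finset_prod
    intro i _
    apply isUnit_finset_prod
    intro j hj
    have hij : i ≠ j := by
      intro h
      rw [h] at hj
      exact absurd (Finset.mem_Ioi.mp hj) (lt_irrefl j)
    -- ψ (ξ j) - ψ (ξ i) is a unit
    rw [← map_sub]
    set z : Polynomial F := ξ j - ξ i with hz
    have hze : z.eval t0 = x0 j - x0 i := by rw [hz, eval_sub, hξeval, hξeval]
    have hzne : z.eval t0 ≠ 0 := by
      rw [hze, sub_ne_zero]
      exact fun h => hij (hinj h.symm)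
    have hnil : IsNilpotent (ψ (z - C (z.eval t0))) := by
      refine ⟨K, ?_⟩
      rw [← map_pow, Ideal.Quotient.eq_zero_iff_mem]
      apply Ideal.mem_span_singleton.mpr
      apply pow_dvd_pow_of_dvd
      rw [hp, dvd_iff_isRoot]
      simp [IsRoot]
    have hunit : IsUnit (ψ (C (z.eval t0))) :=
      (isUnit_C.mpr (isUnit_iff_ne_zero.mpr hzne)).map ψ
    have : ψ z = ψ (C (z.eval t0)) + ψ (z - C (z.eval t0)) := by
      rw [← map_add]; ring_nf
    rw [this]
    exact IsNilpotent.isUnit_add_left_of_commute hnil hunit (Commute.all _ _)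
  -- take determinants
  have hdets : ψ (Matrix.det M) = ψ (∏ j : Fin (r + 1), σt j) := by
    have h1 : Matrix.det U * Matrix.det (M.map ψ)
        = (∏ j : Fin (r + 1), ψ (σt j)) * Matrix.det U := by
      rw [← Matrix.det_mul, hUM, Matrix.det_mul, Matrix.det_diagonal]
    rw [← RingHom.mapMatrix_apply, ← RingHom.map_det] at h1
    have h2 : Matrix.det U * ψ (Matrix.det M)
        = Matrix.det U * ψ (∏ j : Fin (r + 1), σt j) := by
      rw [h1, map_prod]
      ring
    exact hUdet.mul_left_cancel h2
  -- p^K divides the product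
  have hprod : p ^ K ∣ ∏ j : Fin (r + 1), σt j := by
    have h1 : ∏ _j ∈ S, p ∣ ∏ j ∈ S, σt j := by
      apply Finset.prod_dvd_prod_of_dvd
      intro j hj
      rw [hp, dvd_iff_isRoot]
      have hj2 := (Finset.mem_filter.mp hj).2
      simp only [IsRoot, hσt, eval_finset_sum, eval_mul, eval_pow, hξeval]
      exact hj2
    rw [Finset.prod_const, ← hK] at h1
    exact dvd_trans h1 (Finset.prod_dvd_prod_of_subset S Finset.univ σt (Finset.subset_univ S))
  -- combine
  have hdiff : p ^ K ∣ (Matrix.det M - ∏ j : Fin (r + 1), σt j) :=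
    Ideal.mem_span_singleton.mp (Ideal.Quotient.eq.mp hdets)
  have := dvd_add hdiff hprod
  rwa [sub_add_cancel] at this


/-- refined `ℙ¹×ℙ¹` setup. For every `σ ∈ V` with not all coefficient
polynomials zero, the number of evaluation points `(x_{i,j}, t_i)` at which `σ`
vanishes is at most `N(r+1) = n - 𝔡`; equivalently every nonzero codeword of the
evaluation code has Hamming weight at least `𝔡 = n - N(r+1)`.

Here the ceiling `⌈αi/(r+1)⌉` is written as the natural-number division
`(α*i + r)/(r+1)`, which is exactly the ceiling of `αi/(r+1)`. -/
theorem stmt_11 (F : Type) [Field F] [Fintype F] [DecidableEq F]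
    (r α b N : ℕ) (hr : 2 ≤ r) (hα : 1 ≤ α) (hb : 1 ≤ b)
    (hdvd : α ∣ (r + 1))
    -- N ≥ ⌈α(r-1)/(r+1)⌉
    (hN : (α * (r - 1) + r) / (r + 1) ≤ N)
    -- x^{r+1} - t^α - 1 is irreducible in F_q[x,t] = (F_q[t])[x]
    (hirr : Irreducible (Polynomial.X ^ (r + 1)
        - Polynomial.C (Polynomial.X ^ α + 1) : Polynomial (Polynomial F)))
    (t : Fin b → F) (ht : Function.Injective t)
    (x : Fin b → Fin (r + 1) → F)
    -- the fiber over t_i consists of the r+1 distinct points x_{i,1}, …, x_{i,r+1}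
    (hcurve : ∀ i j, (x i j) ^ (r + 1) = (t i) ^ α + 1)
    (hxinj : ∀ i, Function.Injective (x i))
    -- σ = Σ_i a_i(t) x^i ∈ V, with deg a_i ≤ N - ε_i, ε_i = ⌈αi/(r+1)⌉, not all a_i zero
    (a : Fin r → Polynomial F)
    (ha : ∀ i : Fin r, (a i).degree ≤ ((N - (α * (i : ℕ) + r) / (r + 1) : ℕ) : WithBot ℕ))
    (hne : ¬ ∀ i, a i = 0) :
    (Finset.univ.filter (fun p : Fin b × Fin (r + 1) =>
        ∑ i : Fin r, (a i).eval (t p.1) * (x p.1 p.2) ^ (i : ℕ) = 0)).card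
      ≤ N * (r + 1) ∧
    b * (r + 1) - N * (r + 1)
      ≤ hammingNorm (fun p : Fin b × Fin (r + 1) =>
          ∑ i : Fin r, (a i).eval (t p.1) * (x p.1 p.2) ^ (i : ℕ)) := by
  classical
  -- extended coefficient family
  set A : ℕ → Polynomial F := fun d => if h : d < r then a ⟨d, h⟩ else 0 with hA
  have hA0 : ∀ d, r ≤ d → A d = 0 := by
    intro d hd
    have he : A d = if h : d < r then a ⟨d, h⟩ else 0 := rfl
    rw [he, dif_neg (by omega)]
  have hAval : ∀ (d : ℕ) (h : d < r), A d = a ⟨d, h⟩ := by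
    intro d h
    have he : A d = if h : d < r then a ⟨d, h⟩ else 0 := rfl
    rw [he, dif_pos h]
  have hAne : ∃ d, A d ≠ 0 := by
    push_neg at hne
    obtain ⟨i, hi⟩ := hne
    exact ⟨(i : ℕ), by rw [hAval _ i.isLt, Fin.eta]; exact hi⟩
  -- the curve coefficient
  set c : Polynomial F := Polynomial.X ^ α + 1 with hc
  have hcdeg : c.degree ≤ (α : WithBot ℕ) := by
    rw [hc]
    refine le_trans (Polynomial.degree_add_le _ _) (max_le (le_of_eq (Polynomial.degree_X_pow α)) ?_)
    refine le_trans Polynomial.degree_one_le ?_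
    rw [← Nat.cast_zero, Nat.cast_le]
    omega
  have hceval : ∀ i : Fin b, c.eval (t i) = (t i) ^ α + 1 := by
    intro i
    rw [hc]
    simp
  -- degree hypotheses
  have hεN : ∀ d, d < r → (α * d + r) / (r + 1) ≤ N := by
    intro d hd
    refine le_trans (Nat.div_le_div_right (Nat.add_le_add_right
      (Nat.mul_le_mul_left α (by omega : d ≤ r - 1)) r)) hN
  have hAdeg : ∀ d, d < r → (A d).degree ≤ ((N - (α * d + r) / (r + 1) : ℕ) : WithBot ℕ) := by
    intro d hd
    rw [hAval _ hd]
    exact ha ⟨d, hd⟩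
  -- the matrix and its determinant
  set M : Matrix (Fin (r + 1)) (Fin (r + 1)) (Polynomial F) :=
    Matrix.of (fun j k : Fin (r + 1) =>
      if (k : ℕ) ≤ (j : ℕ) then A ((j : ℕ) - (k : ℕ))
      else c * A ((j : ℕ) + (r + 1) - (k : ℕ))) with hM
  have hDne : M.det ≠ 0 := det_ne_zero r A hA0 hAne c hirr
  have hDdeg : M.det.degree ≤ ((N * (r + 1) : ℕ) : WithBot ℕ) :=
    det_deg_bound r α N A c hcdeg hA0 hAdeg hεN
  have hDnat : M.det.natDegree ≤ N * (r + 1) := Polynomial.natDegree_le_iff_degree_le.mpr hDdeg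
  -- fiberwise zero counts
  set ki : Fin b → ℕ := fun i => (Finset.univ.filter fun j : Fin (r + 1) =>
      ∑ i' : Fin r, (a i').eval (t i) * (x i j) ^ (i' : ℕ) = 0).card with hki
  have hsum_eq : ∀ (i : Fin b) (j : Fin (r + 1)),
      (∑ i' ∈ Finset.range (r + 1), (A i').eval (t i) * (x i j) ^ i')
        = ∑ i' : Fin r, (a i').eval (t i) * (x i j) ^ (i' : ℕ) := by
    intro i j
    rw [Finset.sum_range_succ, hA0 r (le_refl r), Polynomial.eval_zero, zero_mul, add_zero]
    rw [← Fin.sum_univ_eq_sum_range (fun i' => (A i').eval (t i) * (x i j) ^ i') r]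
    apply Finset.sum_congr rfl
    intro i' _
    rw [hAval _ i'.isLt, Fin.eta]
  have hdvd_i : ∀ i : Fin b, (Polynomial.X - Polynomial.C (t i)) ^ (ki i) ∣ M.det := by
    intro i
    have hroot : ∀ j, (x i j) ^ (r + 1) = c.eval (t i) := by
      intro j
      rw [hceval i]
      exact hcurve i j
    have h := pow_card_dvd_det r A c (t i) (x i) (hxinj i) hroot
    have hfeq : (Finset.univ.filter fun j : Fin (r + 1) =>
        ∑ i' ∈ Finset.range (r + 1), (A i').eval (t i) * (x i j) ^ i' = 0)
        = (Finset.univ.filter fun j : Fin (r + 1) =>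
        ∑ i' : Fin r, (a i').eval (t i) * (x i j) ^ (i' : ℕ) = 0) := by
      apply Finset.filter_congr
      intro j _
      rw [hsum_eq i j]
    rw [hfeq] at h
    exact h
  -- combine divisibilities
  have hcop : (∏ i : Fin b, (Polynomial.X - Polynomial.C (t i)) ^ (ki i)) ∣ M.det := by
    apply Finset.prod_dvd_of_coprime
    · intro u _ v _ huv
      exact ((Polynomial.pairwise_coprime_X_sub_C ht) huv).pow
    · intro u _
      exact hdvd_i u
  have hprodnat : (∏ i : Fin b, (Polynomial.X - Polynomial.C (t i)) ^ (ki i)).natDegree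
      = ∑ i : Fin b, ki i := by
    rw [Polynomial.natDegree_prod _ _ (fun i _ =>
      pow_ne_zero _ (Polynomial.X_sub_C_ne_zero (t i)))]
    apply Finset.sum_congr rfl
    intro i _
    rw [Polynomial.natDegree_pow, Polynomial.natDegree_X_sub_C, mul_one]
  have hsumki : ∑ i : Fin b, ki i ≤ N * (r + 1) := by
    rw [← hprodnat]
    exact le_trans (Polynomial.natDegree_le_of_dvd hcop hDne) hDnat
  -- total count
  have hcard : (Finset.univ.filter (fun p : Fin b × Fin (r + 1) =>
      ∑ i : Fin r, (a i).eval (t p.1) * (x p.1 p.2) ^ (i : ℕ) = 0)).card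
      = ∑ i : Fin b, ki i := by
    rw [Finset.card_filter, ← Finset.univ_product_univ, Finset.sum_product]
    apply Finset.sum_congr rfl
    intro i _
    exact (Finset.card_filter _ _).symm
  constructor
  · rw [hcard]
    exact hsumki
  · have hham : hammingNorm (fun p : Fin b × Fin (r + 1) =>
        ∑ i : Fin r, (a i).eval (t p.1) * (x p.1 p.2) ^ (i : ℕ))
        = (Finset.univ.filter (fun p : Fin b × Fin (r + 1) =>
          ¬ (∑ i : Fin r, (a i).eval (t p.1) * (x p.1 p.2) ^ (i : ℕ) = 0))).card := by
      rw [hammingNorm]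
    have htotal := Finset.card_filter_add_card_filter_not
      (s := (Finset.univ : Finset (Fin b × Fin (r + 1))))
      (p := fun p : Fin b × Fin (r + 1) =>
        ∑ i : Fin r, (a i).eval (t p.1) * (x p.1 p.2) ^ (i : ℕ) = 0)
    have huniv : (Finset.univ : Finset (Fin b × Fin (r + 1))).card = b * (r + 1) := by
      simp [Finset.card_univ]
    rw [hham]
    rw [hcard, huniv] at htotal
    omega
end

section
/- Assume the refined P¹×P¹ setup, with additionally α < r+1 and 𝔡 ≥ 1 (i.e., N(r+1) < n). Then the evaluation map V → F_q^n, σ ↦ (σ(x_{i,j}, t_i))_{1≤i≤b, 1≤j≤r+1}, is injective, and dim_{F_q} V = r(N+1) + 2α − (α+1)(r+1)/2; consequently the evaluation code C has dimension k = r(N+1) + 2α − (α+1)(r+1)/2. -/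
open Finset

section Aux

lemma aux_div (a m k : ℕ) (ha : 1 ≤ a) (hm : 1 ≤ m) (hk : 1 ≤ k) :
    (a * k - 1) / (a * m) = (k - 1) / m := by
  obtain ⟨q, s, hsm, hk1⟩ : ∃ q s, s < m ∧ k = m * q + s + 1 :=
    ⟨(k - 1) / m, (k - 1) % m, Nat.mod_lt _ hm,
      by have := Nat.div_add_mod (k - 1) m; omega⟩
  have hq : (k - 1) / m = q := by
    rw [show k - 1 = s + m * q by omega, Nat.add_mul_div_left _ _ hm,
      Nat.div_eq_of_lt hsm, zero_add]
  have h1 : 1 ≤ a * s + a := le_add_self.trans' ha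
  have e2 : a * k - 1 = (a * s + a - 1) + q * (a * m) := by
    have e1 : a * k = (a * s + a) + q * (a * m) := by rw [hk1]; ring
    omega
  have hrem : a * s + a - 1 < a * m :=
    calc a * s + a - 1 < a * s + a := Nat.sub_lt (by omega) one_pos
      _ = a * (s + 1) := by ring
      _ ≤ a * m := Nat.mul_le_mul_left a hsm
  rw [e2, Nat.add_mul_div_right _ _ (by positivity : 0 < a * m),
    Nat.div_eq_of_lt hrem, zero_add, hq]

lemma aux_inner (m : ℕ) (hm : 1 ≤ m) :
    ∑ i ∈ range m, (i + m - 1) / m = m - 1 := by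
  have h : ∀ i ∈ range m, (i + m - 1) / m = if i = 0 then 0 else 1 := by
    intro i hi
    rw [mem_range] at hi
    rcases Nat.eq_zero_or_pos i with h0 | h0
    · subst h0; rw [if_pos rfl]; exact Nat.div_eq_of_lt (by omega)
    · have h2 : i + m - 1 = (i - 1) + 1 * m := by omega
      rw [h2, Nat.add_mul_div_right _ _ hm, Nat.div_eq_of_lt (by omega),
        if_neg (by omega)]
  rw [Finset.sum_congr rfl h]
  obtain ⟨c, rfl⟩ : ∃ c, m = c + 1 := ⟨m - 1, by omega⟩
  simp [Finset.sum_range_succ']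

lemma aux_T (m : ℕ) (hm : 2 ≤ m) : ∀ c : ℕ,
    2 * ((∑ i ∈ range (c * m), (i + m - 1) / m : ℕ) : ℤ)
      = m * c * c + 2 * c * m - m * c - 2 * c := by
  intro c
  induction c with
  | zero => simp
  | succ c IH =>
    have hstep : (∑ i ∈ range ((c + 1) * m), (i + m - 1) / m) + 1
        = (∑ i ∈ range (c * m), (i + m - 1) / m) + m * c + m := by
      rw [show (c + 1) * m = c * m + m by ring, Finset.sum_range_add]
      have h1 : ∀ i ∈ range m, (c * m + i + m - 1) / m = c + (i + m - 1) / m := by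
        intro i _
        rw [show c * m + i + m - 1 = (i + m - 1) + m * c by
          have : m * c = c * m := by ring
          omega, Nat.add_mul_div_left _ _ (by omega : 0 < m), add_comm]
      rw [Finset.sum_congr rfl h1, Finset.sum_add_distrib, Finset.sum_const,
        card_range, smul_eq_mul, aux_inner m (by omega)]
      omega
    have hstepZ := congrArg (Nat.cast (R := ℤ)) hstep
    push_cast at hstepZ IH ⊢
    linear_combination IH + 2 * hstepZ

lemma aux_sum (r a m : ℕ) (ha : 1 ≤ a) (hm : 2 ≤ m) (hrm : r + 1 = a * m) :
    2 * ((∑ i ∈ range r, (a * i + r) / (r + 1) : ℕ) : ℤ) + 4 * a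
      = (a + 1) * (r + 1) := by
  have hterm : ∀ i, (a * i + r) / (r + 1) = (i + m - 1) / m := by
    intro i
    have h2 : a * (i + m) = a * i + a * m := by ring
    have h3 : a * i + r = a * (i + m) - 1 := by omega
    rw [h3, hrm, aux_div a m (i + m) ha (by omega) (by omega)]
  have hlast : (r + m - 1) / m = a := by
    have h4 : a * m = m * a := by ring
    rw [show r + m - 1 = (m - 2) + m * a by omega,
      Nat.add_mul_div_left _ _ (by omega : 0 < m), Nat.div_eq_of_lt (by omega), zero_add]
  have hsplit : (∑ i ∈ range (a * m), (i + m - 1) / m)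
      = (∑ i ∈ range r, (i + m - 1) / m) + a := by
    rw [← hrm, Finset.sum_range_succ, hlast]
  have hT := aux_T m hm a
  rw [hsplit] at hT
  rw [Finset.sum_congr rfl (fun i _ => hterm i)]
  have hrmZ : (r : ℤ) + 1 = (a : ℤ) * m := by exact_mod_cast hrm
  push_cast at hT ⊢
  rw [hrmZ]
  linear_combination hT

open Polynomial in
lemma aux_vdm {F : Type} [Field F] {r : ℕ} (c : Fin r → F) (y : Fin (r + 1) → F)
    (hy : Function.Injective y) (h : ∀ j, ∑ ℓ : Fin r, c ℓ * y j ^ (ℓ : ℕ) = 0) :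
    c = 0 := by
  set p : F[X] := ∑ ℓ : Fin r, C (c ℓ) * X ^ (ℓ : ℕ) with hp
  have heval : ∀ j, p.eval (y j) = 0 := by
    intro j
    rw [hp]
    simpa [eval_finset_sum] using h j
  have hdeg : p.natDegree < Fintype.card (Fin (r + 1)) := by
    rw [Fintype.card_fin]
    refine lt_of_le_of_lt (natDegree_sum_le_of_forall_le _ _ fun ℓ _ => ?_)
      (by omega : r - 0 < r + 1)
    exact (natDegree_C_mul_X_pow_le _ _).trans (by omega)
  have hp0 : p = 0 :=
    Polynomial.eq_zero_of_natDegree_lt_card_of_eval_eq_zero p hy heval hdeg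
  funext ℓ
  have hcoeff := congrArg (fun q : F[X] => q.coeff (ℓ : ℕ)) hp0
  simp only [hp, finset_sum_coeff, coeff_C_mul, coeff_X_pow, coeff_zero,
    mul_ite, mul_one, mul_zero] at hcoeff
  rw [Finset.sum_eq_single ℓ (fun j _ hj => if_neg fun hc => hj (Fin.ext hc.symm))
    (by simp), if_pos rfl] at hcoeff
  simpa using hcoeff

end Aux

/-- refined `ℙ¹×ℙ¹` setup with `α < r+1` and `𝔡 ≥ 1` (i.e. `N < b`).
The evaluation map `V → F_q^n` is injective and
`dim V = k = r(N+1) + 2α - (α+1)(r+1)/2`, which is then the dimension of the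
evaluation code.

Here the ceiling `⌈αi/(r+1)⌉` is written as the natural-number division
`(α*i + r)/(r+1)`, which is exactly the ceiling of `αi/(r+1)`. -/
theorem stmt_12 (F : Type) [Field F] [Fintype F] [DecidableEq F]
    (r α b N : ℕ) (hr : 2 ≤ r) (hα : 1 ≤ α) (hb : 1 ≤ b)
    (hdvd : α ∣ (r + 1)) (hαlt : α < r + 1)
    -- N ≥ ⌈α(r-1)/(r+1)⌉
    (hN : (α * (r - 1) + r) / (r + 1) ≤ N)
    -- 𝔡 = n - N(r+1) ≥ 1
    (hNb : N < b)
    -- x^{r+1} - t^α - 1 is irreducible in F_q[x,t] = (F_q[t])[x]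
    (hirr : Irreducible (Polynomial.X ^ (r + 1)
        - Polynomial.C (Polynomial.X ^ α + 1) : Polynomial (Polynomial F)))
    (t : Fin b → F) (ht : Function.Injective t)
    (x : Fin b → Fin (r + 1) → F)
    -- the fiber over t_i consists of the r+1 distinct points x_{i,1}, …, x_{i,r+1}
    (hcurve : ∀ i j, (x i j) ^ (r + 1) = (t i) ^ α + 1)
    (hxinj : ∀ i, Function.Injective (x i)) :
    -- the evaluation map on V is injective
    (∀ a a' : Fin r → Polynomial F,
      (∀ i : Fin r,
        (a i).degree ≤ ((N - (α * (i : ℕ) + r) / (r + 1) : ℕ) : WithBot ℕ)) →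
      (∀ i : Fin r,
        (a' i).degree ≤ ((N - (α * (i : ℕ) + r) / (r + 1) : ℕ) : WithBot ℕ)) →
      (∀ (i : Fin b) (j : Fin (r + 1)),
        ∑ ℓ : Fin r, (a ℓ).eval (t i) * (x i j) ^ (ℓ : ℕ)
          = ∑ ℓ : Fin r, (a' ℓ).eval (t i) * (x i j) ^ (ℓ : ℕ)) →
      a = a') ∧
    -- dimension of the evaluation code: k = r(N+1) + 2α - (α+1)(r+1)/2
    ((Module.finrank F (Submodule.span F
      {w : Fin b × Fin (r + 1) → F |
        ∃ a : Fin r → Polynomial F,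
          (∀ i : Fin r,
            (a i).degree ≤ ((N - (α * (i : ℕ) + r) / (r + 1) : ℕ) : WithBot ℕ)) ∧
          w = fun p => ∑ ℓ : Fin r, (a ℓ).eval (t p.1) * (x p.1 p.2) ^ (ℓ : ℕ)}) : ℤ)
      = (r : ℤ) * ((N : ℤ) + 1) + 2 * (α : ℤ)
        - ((α : ℤ) + 1) * ((r : ℤ) + 1) / 2) := by
  classical
  -- Part 1: injectivity of the evaluation map
  have hinj : ∀ a a' : Fin r → Polynomial F,
      (∀ i : Fin r,
        (a i).degree ≤ ((N - (α * (i : ℕ) + r) / (r + 1) : ℕ) : WithBot ℕ)) →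
      (∀ i : Fin r,
        (a' i).degree ≤ ((N - (α * (i : ℕ) + r) / (r + 1) : ℕ) : WithBot ℕ)) →
      (∀ (i : Fin b) (j : Fin (r + 1)),
        ∑ ℓ : Fin r, (a ℓ).eval (t i) * (x i j) ^ (ℓ : ℕ)
          = ∑ ℓ : Fin r, (a' ℓ).eval (t i) * (x i j) ^ (ℓ : ℕ)) →
      a = a' := by
    intro a a' hA hA' hE
    have hd : ∀ (i : Fin b) (ℓ : Fin r), (a ℓ - a' ℓ).eval (t i) = 0 := by
      intro i
      have h0 : ∀ j, ∑ ℓ : Fin r, (a ℓ - a' ℓ).eval (t i) * x i j ^ (ℓ : ℕ) = 0 := by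
        intro j
        simp only [Polynomial.eval_sub, sub_mul, Finset.sum_sub_distrib]
        exact sub_eq_zero.mpr (hE i j)
      have hz := aux_vdm _ (x i) (hxinj i) h0
      intro ℓ
      exact congrFun hz ℓ
    have key : ∀ ℓ : Fin r, a ℓ - a' ℓ = 0 := by
      intro ℓ
      have h1 : (a ℓ - a' ℓ).degree ≤ (N : WithBot ℕ) := by
        refine le_trans (Polynomial.degree_sub_le _ _) (max_le ?_ ?_)
        · exact le_trans (hA ℓ) (Nat.cast_le.mpr (Nat.sub_le _ _))
        · exact le_trans (hA' ℓ) (Nat.cast_le.mpr (Nat.sub_le _ _))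
      have hdeg : (a ℓ - a' ℓ).natDegree < Fintype.card (Fin b) := by
        rw [Fintype.card_fin]
        exact lt_of_le_of_lt (Polynomial.natDegree_le_iff_degree_le.mpr h1) hNb
      exact Polynomial.eq_zero_of_natDegree_lt_card_of_eval_eq_zero _ ht
        (fun i => hd i ℓ) hdeg
    funext ℓ
    exact sub_eq_zero.mp (key ℓ)
  refine ⟨hinj, ?_⟩
  -- Part 2: the dimension computation
  -- the evaluation linear map
  set E : (∀ ℓ : Fin r, Polynomial.degreeLT F (N - (α * (ℓ : ℕ) + r) / (r + 1) + 1))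
      →ₗ[F] (Fin b × Fin (r + 1) → F) :=
    { toFun := fun v p => ∑ ℓ : Fin r,
        ((v ℓ : Polynomial F).eval (t p.1)) * x p.1 p.2 ^ (ℓ : ℕ)
      map_add' := by
        intro v w
        funext p
        simp [add_mul, Finset.sum_add_distrib]
      map_smul' := by
        intro s v
        funext p
        simp [Finset.mul_sum, mul_assoc] } with hEdef
  have hmem : ∀ (q : Polynomial F) (ℓ : Fin r),
      q ∈ Polynomial.degreeLT F (N - (α * (ℓ : ℕ) + r) / (r + 1) + 1) ↔
        q.degree ≤ ((N - (α * (ℓ : ℕ) + r) / (r + 1) : ℕ) : WithBot ℕ) := by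
    intro q ℓ
    rw [Polynomial.degreeLT_succ_eq_degreeLE, Polynomial.mem_degreeLE]
  have hset : {w : Fin b × Fin (r + 1) → F |
      ∃ a : Fin r → Polynomial F,
        (∀ i : Fin r,
          (a i).degree ≤ ((N - (α * (i : ℕ) + r) / (r + 1) : ℕ) : WithBot ℕ)) ∧
        w = fun p => ∑ ℓ : Fin r, (a ℓ).eval (t p.1) * (x p.1 p.2) ^ (ℓ : ℕ)}
      = ↑(LinearMap.range E) := by
    ext w
    constructor
    · rintro ⟨a, hA, rfl⟩
      exact ⟨fun ℓ => ⟨a ℓ, (hmem _ ℓ).mpr (hA ℓ)⟩, rfl⟩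
    · rintro ⟨v, rfl⟩
      exact ⟨fun ℓ => (v ℓ : Polynomial F), fun ℓ => (hmem _ ℓ).mp (v ℓ).2, rfl⟩
  rw [hset, Submodule.span_eq]
  have hEinj : Function.Injective E := by
    intro v w hvw
    have h2 : (fun ℓ => (v ℓ : Polynomial F)) = fun ℓ => (w ℓ : Polynomial F) :=
      hinj _ _ (fun ℓ => (hmem _ ℓ).mp (v ℓ).2) (fun ℓ => (hmem _ ℓ).mp (w ℓ).2)
        (fun i j => congrFun hvw (i, j))
    funext ℓ
    exact Subtype.ext (congrFun h2 ℓ)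
  haveI : ∀ ℓ : Fin r,
      Module.Finite F (Polynomial.degreeLT F (N - (α * (ℓ : ℕ) + r) / (r + 1) + 1)) :=
    fun ℓ => Module.Finite.equiv (Polynomial.degreeLTEquiv F _).symm
  have hrank : Module.finrank F (LinearMap.range E)
      = ∑ ℓ : Fin r, (N - (α * (ℓ : ℕ) + r) / (r + 1) + 1) := by
    rw [LinearMap.finrank_range_of_inj hEinj, Module.finrank_pi_fintype]
    exact Finset.sum_congr rfl fun ℓ _ => by
      rw [(Polynomial.degreeLTEquiv F _).finrank_eq, Module.finrank_fin_fun]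
  rw [hrank]
  -- final arithmetic
  obtain ⟨m, hm⟩ := hdvd
  have hm2 : 2 ≤ m := by
    by_contra hcon
    push_neg at hcon
    have : α * m ≤ α * 1 := Nat.mul_le_mul_left α (by omega)
    omega
  have hkey := aux_sum r α m hα hm2 hm
  have hεN : ∀ i ∈ range r, (α * i + r) / (r + 1) ≤ N := by
    intro i hi
    rw [mem_range] at hi
    refine le_trans (Nat.div_le_div_right ?_) hN
    have h3 : α * i ≤ α * (r - 1) := Nat.mul_le_mul_left α (by omega)
    omega
  have hsum : (∑ ℓ : Fin r, (N - (α * (ℓ : ℕ) + r) / (r + 1) + 1))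
      = ∑ i ∈ range r, (N - (α * i + r) / (r + 1) + 1) := by
    rw [Finset.sum_range]
  have hnat : (∑ i ∈ range r, (N - (α * i + r) / (r + 1) + 1))
      + (∑ i ∈ range r, (α * i + r) / (r + 1)) = r * (N + 1) := by
    rw [← Finset.sum_add_distrib,
      Finset.sum_congr rfl (fun i hi => by have := hεN i hi; omega : ∀ i ∈ range r,
        (N - (α * i + r) / (r + 1) + 1) + (α * i + r) / (r + 1) = N + 1),
      Finset.sum_const, card_range, smul_eq_mul]
  rw [hsum]
  have e1 : ((∑ i ∈ range r, (N - (α * i + r) / (r + 1) + 1) : ℕ) : ℤ)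
      + ((∑ i ∈ range r, (α * i + r) / (r + 1) : ℕ) : ℤ)
      = (r : ℤ) * ((N : ℤ) + 1) := by exact_mod_cast hnat
  generalize hP : (r : ℤ) * ((N : ℤ) + 1) = P at e1 ⊢
  generalize hQ : ((α : ℤ) + 1) * ((r : ℤ) + 1) = Q at hkey ⊢
  generalize hS : ((∑ i ∈ range r, (α * i + r) / (r + 1) : ℕ) : ℤ) = S at e1 hkey
  omega
end

section
/- Let F_q be a finite field, r ≥ 2 and α ≥ 1 integers, and g ∈ F_q[x,t] an irreducible polynomial with deg_x g = r+1 and deg_t g ≤ α. Let t_1,…,t_b ∈ F_q be distinct elements such that for each i the polynomial g(x, t_i) ∈ F_q[x] has r+1 distinct roots x_{i,1},…,x_{i,r+1} in F_q, and set n = b(r+1). Let N ≥ 0 and let a_0,…,a_{r−1} ∈ F_q[t] be polynomials of degree at most N, not all zero. Then the number of pairs (i,j), 1 ≤ i ≤ b, 1 ≤ j ≤ r+1, with Σ_{ℓ=0}^{r−1} a_ℓ(t_i) x_{i,j}^ℓ = 0 is at most N(r+1) + α(r−1). Consequently, setting 𝔡 = n − N(r+1), the evaluation code obtained by evaluating all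 such polynomial tuples at the points (x_{i,j}, t_i) has minimum distance at least 𝔡 − α(r−1). -/
open Polynomial Matrix Finset

noncomputable def sylv {A : Type*} [Semiring A] (s₁ s₂ : ℕ) (G Fp : Polynomial A) :
    Matrix (Fin (s₁ + s₂)) (Fin (s₁ + s₂)) A :=
  fun i j => if (j : ℕ) < s₁ then (G * X ^ (j : ℕ)).coeff i else (Fp * X ^ ((j : ℕ) - s₁)).coeff i

lemma sylv_mulVec {A : Type*} [CommRing A] (s₁ s₂ : ℕ) (G Fp : Polynomial A)
    (w : Fin (s₁ + s₂) → A) (i : Fin (s₁ + s₂)) :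
    (sylv s₁ s₂ G Fp).mulVec w i
      = ((∑ j : Fin s₁, C (w (Fin.castAdd s₂ j)) * X ^ (j : ℕ)) * G
        + (∑ j : Fin s₂, C (w (Fin.natAdd s₁ j)) * X ^ (j : ℕ)) * Fp).coeff i := by
  rw [Matrix.mulVec, dotProduct, Fin.sum_univ_add, coeff_add, Finset.sum_mul, Finset.sum_mul,
    finset_sum_coeff, finset_sum_coeff]
  congr 1
  · refine Finset.sum_congr rfl fun j _ => ?_
    rw [mul_assoc, coeff_C_mul]
    have h1 : ((Fin.castAdd s₂ j : Fin (s₁ + s₂)) : ℕ) = (j : ℕ) := rfl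
    rw [show (X : Polynomial A) ^ (j:ℕ) * G = G * X ^ (j:ℕ) from mul_comm _ _]
    simp only [sylv, h1, j.isLt, if_pos]
    ring
  · refine Finset.sum_congr rfl fun j _ => ?_
    rw [mul_assoc, coeff_C_mul]
    have h1 : ((Fin.natAdd s₁ j : Fin (s₁ + s₂)) : ℕ) = s₁ + (j : ℕ) := rfl
    rw [show (X : Polynomial A) ^ (j:ℕ) * Fp = Fp * X ^ (j:ℕ) from mul_comm _ _]
    simp only [sylv, h1]
    rw [if_neg (by omega), Nat.add_sub_cancel_left]
    ring

lemma sylv_map {A B : Type*} [CommRing A] [CommRing B] (φ : A →+* B) (s₁ s₂ : ℕ)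
    (G Fp : Polynomial A) :
    (sylv s₁ s₂ G Fp).map φ = sylv s₁ s₂ (G.map φ) (Fp.map φ) := by
  ext i j
  simp only [sylv, Matrix.map_apply, apply_ite φ, ← coeff_map, Polynomial.map_mul,
    Polynomial.map_pow, Polynomial.map_X]

lemma natDegree_det_le {A : Type*} [CommRing A] {d : ℕ}
    (M : Matrix (Fin d) (Fin d) (Polynomial A)) (bnd : Fin d → ℕ)
    (h : ∀ i j, (M i j).natDegree ≤ bnd j) : M.det.natDegree ≤ ∑ j, bnd j := by
  rw [Matrix.det_apply]
  apply natDegree_sum_le_of_forall_le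
  intro σ _
  calc (Equiv.Perm.sign σ • ∏ i, M (σ i) i).natDegree
      ≤ (∏ i, M (σ i) i).natDegree := by
        rw [Units.smul_def, zsmul_eq_mul]
        refine le_trans (natDegree_mul_le) ?_
        simp [Polynomial.natDegree_intCast]
    _ ≤ ∑ i, (M (σ i) i).natDegree := natDegree_prod_le _ _
    _ ≤ ∑ i, bnd i := Finset.sum_le_sum fun i _ => h _ _

lemma coeff_sum_C_X {A : Type*} [Semiring A] (s : ℕ) (c : Fin s → A) (k : Fin s) :
    (∑ j : Fin s, C (c j) * X ^ (j : ℕ)).coeff (k : ℕ) = c k := by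
  rw [finset_sum_coeff, Finset.sum_eq_single k]
  · simp [coeff_C_mul, coeff_X_pow]
  · intro j _ hj
    have : (k : ℕ) ≠ (j : ℕ) := fun h => hj (Fin.ext h.symm)
    simp [coeff_C_mul, coeff_X_pow, this]
  · simp

lemma sum_C_X_eq {A : Type*} [Semiring A] {s : ℕ} {p : Polynomial A} (hp : p.natDegree < s) :
    (∑ j : Fin s, C (p.coeff j) * X ^ (j : ℕ)) = p := by
  conv_rhs => rw [p.as_sum_range' s hp]
  rw [Fin.sum_univ_eq_sum_range (fun j => C (p.coeff j) * X ^ j)]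
  exact Finset.sum_congr rfl fun j _ => C_mul_X_pow_eq_monomial

lemma pow_dvd_det {A : Type*} [CommRing A] [DecidableEq A] {d : ℕ}
    (M : Matrix (Fin d) (Fin d) (Polynomial A)) (c : A) (J : Finset (Fin d))
    (h : ∀ i j, j ∈ J → (X - C c) ∣ M i j) :
    (X - C c) ^ J.card ∣ M.det := by
  classical
  set q : Polynomial A := X - C c with hqdef
  have hq : q.Monic := monic_X_sub_C c
  set M' : Matrix (Fin d) (Fin d) (Polynomial A) :=
    fun i j => if j ∈ J then M i j /ₘ q else M i j with hM'
  have hfact : M = M' * Matrix.diagonal (fun j => if j ∈ J then q else 1) := by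
    ext i j
    rw [Matrix.mul_diagonal]
    by_cases hj : j ∈ J
    · simp only [hM', if_pos hj]
      obtain ⟨e, he⟩ := h i j hj
      rw [he, mul_divByMonic_cancel_left _ hq, mul_comm]
    · simp [hM', hj]
  rw [hfact, Matrix.det_mul, Matrix.det_diagonal]
  have huniv : Finset.univ.filter (· ∈ J) = J := by ext j; simp
  have : (∏ j, (if j ∈ J then q else 1)) = q ^ J.card := by
    rw [← Finset.prod_filter_mul_prod_filter_not Finset.univ (· ∈ J),
      Finset.prod_congr huniv (fun j hj => if_pos hj), Finset.prod_const,
      Finset.prod_eq_one (fun j hj => by simp [(Finset.mem_filter.mp hj).2]), mul_one]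
  rw [this]
  exact dvd_mul_left _ _

lemma sylv_det_ne_zero {F : Type} [Field F] {s₁ s₂ : ℕ} (hs₁ : 1 ≤ s₁) (hs : s₁ < s₂)
    (g f : Polynomial (Polynomial F)) (hgirr : Irreducible g) (hgdeg : g.natDegree = s₂)
    (hf : f ≠ 0) (hfdeg : f.natDegree ≤ s₁) :
    (sylv s₁ s₂ g f).det ≠ 0 := by
  intro hdet
  obtain ⟨v, hv, hker⟩ := Matrix.exists_mulVec_eq_zero_iff.mpr hdet
  set U := ∑ j : Fin s₁, C (v (Fin.castAdd s₂ j)) * X ^ (j : ℕ) with hU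
  set V := ∑ j : Fin s₂, C (v (Fin.natAdd s₁ j)) * X ^ (j : ℕ) with hV
  have hUdeg : U.natDegree ≤ s₁ - 1 := by
    apply natDegree_sum_le_of_forall_le
    intro j _
    refine le_trans natDegree_mul_le ?_
    have := j.isLt
    simp only [natDegree_C, natDegree_X_pow]
    omega
  have hVdeg : V.natDegree ≤ s₂ - 1 := by
    apply natDegree_sum_le_of_forall_le
    intro j _
    refine le_trans natDegree_mul_le ?_
    have := j.isLt
    simp only [natDegree_C, natDegree_X_pow]
    omega
  have hE : U * g + V * f = 0 := by
    refine Polynomial.ext fun n => ?_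
    rw [coeff_zero]
    by_cases hn : n < s₁ + s₂
    · have := congrFun hker ⟨n, hn⟩
      rw [sylv_mulVec, Pi.zero_apply] at this
      exact this
    · apply coeff_eq_zero_of_natDegree_lt
      have h1 : (U * g).natDegree ≤ s₁ - 1 + s₂ :=
        le_trans natDegree_mul_le (add_le_add hUdeg hgdeg.le)
      have h2 : (V * f).natDegree ≤ s₂ - 1 + s₁ :=
        le_trans natDegree_mul_le (add_le_add hVdeg hfdeg)
      refine lt_of_le_of_lt (natDegree_add_le _ _) ?_
      omega
  have hgne : g ≠ 0 := hgirr.ne_zero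
  have hcomp : ∀ (hU0 : U = 0) (hV0 : V = 0), False := by
    intro hU0 hV0
    apply hv
    funext i
    refine Fin.addCases (fun j => ?_) (fun j => ?_) i
    · have := coeff_sum_C_X s₁ (fun j => v (Fin.castAdd s₂ j)) j
      rw [← hU, hU0, coeff_zero] at this
      exact this.symm
    · have := coeff_sum_C_X s₂ (fun j => v (Fin.natAdd s₁ j)) j
      rw [← hV, hV0, coeff_zero] at this
      exact this.symm
  rcases eq_or_ne V 0 with h0 | h0
  · rw [h0, zero_mul, add_zero, mul_eq_zero] at hE
    exact hcomp (hE.resolve_right hgne) h0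
  · have hprime : Prime g := hgirr.prime
    have hdvd : g ∣ V * f := by
      refine ⟨-U, ?_⟩
      have : V * f = -(U * g) := by linear_combination hE
      rw [this]; ring
    rcases hprime.2.2 V f hdvd with hd | hd
    · have := natDegree_le_of_dvd hd h0
      omega
    · have := natDegree_le_of_dvd hd hf
      omega

lemma sylv_multiplicity {F : Type} [Field F] [DecidableEq F] {s₁ s₂ m : ℕ} (hs₁ : 1 ≤ s₁)
    (g f : Polynomial (Polynomial F)) (hfdeg : f.natDegree ≤ s₁) (c : F)
    (hgcne : g.map (evalRingHom c) ≠ 0) (hgcdeg : (g.map (evalRingHom c)).natDegree = s₂)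
    (y : Fin m → F) (hy : Function.Injective y)
    (hyg : ∀ k, (g.map (evalRingHom c)).eval (y k) = 0)
    (hyf : ∀ k, (f.map (evalRingHom c)).eval (y k) = 0) :
    (X - C c) ^ m ∣ (sylv s₁ s₂ g f).det := by
  classical
  set gc : Polynomial F := g.map (evalRingHom c) with hgc
  set fc : Polynomial F := f.map (evalRingHom c) with hfc
  set p : Polynomial F := ∏ k : Fin m, (X - C (y k)) with hp
  have hpm : p.Monic := monic_prod_of_monic _ _ fun k _ => monic_X_sub_C _
  have hpdeg : p.natDegree = m := by
    rw [hp, natDegree_prod_of_monic _ _ fun k _ => monic_X_sub_C _]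
    simp
  have hpg : p ∣ gc :=
    Fintype.prod_dvd_of_coprime (Polynomial.pairwise_coprime_X_sub_C hy)
      fun k => dvd_iff_isRoot.mpr (hyg k)
  have hpf : p ∣ fc :=
    Fintype.prod_dvd_of_coprime (Polynomial.pairwise_coprime_X_sub_C hy)
      fun k => dvd_iff_isRoot.mpr (hyf k)
  set qg : Polynomial F := gc /ₘ p with hqg
  set qf : Polynomial F := fc /ₘ p with hqf
  have hgfact : gc = p * qg := by
    conv_lhs => rw [← modByMonic_add_div gc p]
    rw [(modByMonic_eq_zero_iff_dvd hpm).mpr hpg, zero_add]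
  have hffact : fc = p * qf := by
    conv_lhs => rw [← modByMonic_add_div fc p]
    rw [(modByMonic_eq_zero_iff_dvd hpm).mpr hpf, zero_add]
  have hqgne : qg ≠ 0 := by
    intro h0; rw [h0, mul_zero] at hgfact; exact hgcne hgfact
  have hdegsplit : s₂ = m + qg.natDegree := by
    rw [← hgcdeg, hgfact, natDegree_mul hpm.ne_zero hqgne, hpdeg]
  have hm2 : m ≤ s₂ := by omega
  have hqgdeg : qg.natDegree = s₂ - m := by omega
  set u : Fin m → Polynomial F := fun k => qf * X ^ (k : ℕ) with hu
  set v : Fin m → Polynomial F := fun k => -(qg * X ^ (k : ℕ)) with hv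
  have hudeg : ∀ k : Fin m, (u k).natDegree < s₁ := by
    intro k
    by_cases hfc0 : fc = 0
    · have : qf = 0 := by rw [hqf, hfc0, zero_divByMonic]
      rw [hu]; simp only [this, zero_mul, natDegree_zero]; omega
    · have hqfne : qf ≠ 0 := by
        intro h0; rw [h0, mul_zero] at hffact; exact hfc0 hffact
      have hfsplit : fc.natDegree = m + qf.natDegree := by
        rw [hffact, natDegree_mul hpm.ne_zero hqfne, hpdeg]
      have hfcd : fc.natDegree ≤ s₁ := le_trans natDegree_map_le hfdeg
      have hk := k.isLt
      have : (u k).natDegree ≤ qf.natDegree + (k : ℕ) := by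
        refine le_trans natDegree_mul_le ?_
        simp [natDegree_X_pow]
      omega
  have hvdeg : ∀ k : Fin m, (v k).natDegree ≤ s₂ - m + (k : ℕ) := by
    intro k
    rw [hv]
    simp only [natDegree_neg]
    refine le_trans natDegree_mul_le ?_
    simp [natDegree_X_pow, hqgdeg]
  have hvcoeff : ∀ k : Fin m, (v k).coeff (s₂ - m + (k : ℕ)) = -qg.leadingCoeff := by
    intro k
    rw [hv]
    simp only [coeff_neg, neg_inj]
    rw [coeff_mul_X_pow', if_pos (by omega), Nat.add_sub_cancel]
    rw [leadingCoeff, hqgdeg]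
  set w : Fin m → Fin (s₁ + s₂) → F := fun k i =>
    if (i : ℕ) < s₁ then (u k).coeff i else (v k).coeff ((i : ℕ) - s₁) with hw
  have hker : ∀ k, (sylv s₁ s₂ gc fc).mulVec (w k) = 0 := by
    intro k
    funext i
    rw [sylv_mulVec, Pi.zero_apply]
    have hUeq : (∑ j : Fin s₁, C (w k (Fin.castAdd s₂ j)) * X ^ (j : ℕ)) = u k := by
      have h1 : ∀ j : Fin s₁, w k (Fin.castAdd s₂ j) = (u k).coeff j := by
        intro j; rw [hw]; simp only [Fin.coe_castAdd]; rw [if_pos j.isLt]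
      simp_rw [h1]
      exact sum_C_X_eq (hudeg k)
    have hVeq : (∑ j : Fin s₂, C (w k (Fin.natAdd s₁ j)) * X ^ (j : ℕ)) = v k := by
      have h1 : ∀ j : Fin s₂, w k (Fin.natAdd s₁ j) = (v k).coeff j := by
        intro j; rw [hw]; simp only [Fin.coe_natAdd]
        rw [if_neg (by omega), Nat.add_sub_cancel_left]
      simp_rw [h1]
      refine sum_C_X_eq ?_
      have := hvdeg k
      have := k.isLt
      omega
    rw [hUeq, hVeq]
    have : u k * gc + v k * fc = 0 := by
      rw [hgfact, hffact, hu, hv]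
      ring
    rw [this, coeff_zero]
  set Vm : Matrix (Fin (s₁ + s₂)) (Fin (s₁ + s₂)) F := fun i j =>
    if h : s₁ + s₂ - m ≤ (j : ℕ) then
      w ⟨(j : ℕ) - (s₁ + s₂ - m), by have := j.isLt; omega⟩ i
    else if i = j then 1 else 0 with hVm
  have hVtri : Vm.BlockTriangular id := by
    intro i j hij
    simp only [id] at hij
    simp only [hVm]
    by_cases hj : s₁ + s₂ - m ≤ (j : ℕ)
    · rw [dif_pos hj]
      have hij' : (j : ℕ) < (i : ℕ) := hij
      have his : ¬ (i : ℕ) < s₁ := by omega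
      simp only [hw]
      rw [if_neg his]
      apply coeff_eq_zero_of_natDegree_lt
      have := hvdeg ⟨(j : ℕ) - (s₁ + s₂ - m), by have := j.isLt; omega⟩
      simp only at this
      have := i.isLt
      omega
    · rw [dif_neg hj, if_neg (by intro h; rw [h] at hij; exact lt_irrefl _ hij)]
  have hVdiag : ∀ j, Vm j j ≠ 0 := by
    intro j
    simp only [hVm]
    by_cases hj : s₁ + s₂ - m ≤ (j : ℕ)
    · rw [dif_pos hj]
      have hjs : ¬ (j : ℕ) < s₁ := by omega
      simp only [hw]
      rw [if_neg hjs]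
      have harg : (j : ℕ) - s₁ = s₂ - m + ((j : ℕ) - (s₁ + s₂ - m)) := by
        have := j.isLt; omega
      rw [harg]
      have := hvcoeff ⟨(j : ℕ) - (s₁ + s₂ - m), by have := j.isLt; omega⟩
      simp only at this
      rw [this]
      simp only [ne_eq, neg_eq_zero]
      exact leadingCoeff_ne_zero.mpr hqgne
    · rw [dif_neg hj]
      simp
  have hVdet : Vm.det ≠ 0 := by
    rw [Matrix.det_of_upperTriangular hVtri]
    exact Finset.prod_ne_zero_iff.mpr fun j _ => hVdiag j
  set J : Finset (Fin (s₁ + s₂)) := Finset.univ.filter fun j => s₁ + s₂ - m ≤ (j : ℕ) with hJ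
  have hJcard : J.card = m := by
    rw [hJ, ← Finset.card_image_of_injective _ Fin.val_injective]
    have himg : (Finset.univ.filter fun j : Fin (s₁ + s₂) => s₁ + s₂ - m ≤ (j : ℕ)).image
        Fin.val = Finset.Ico (s₁ + s₂ - m) (s₁ + s₂) := by
      ext n
      simp only [Finset.mem_image, Finset.mem_filter, Finset.mem_univ, true_and,
        Finset.mem_Ico]
      constructor
      · rintro ⟨j, hj1, rfl⟩; exact ⟨hj1, j.isLt⟩
      · rintro ⟨h1, h2⟩; exact ⟨⟨n, h2⟩, h1, rfl⟩
    rw [himg, Nat.card_Ico]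
    omega
  have hcol : ∀ i j, j ∈ J → (X - C c) ∣ ((sylv s₁ s₂ g f) * Vm.map Polynomial.C) i j := by
    intro i j hj
    rw [hJ, Finset.mem_filter] at hj
    set k : Fin m := ⟨(j : ℕ) - (s₁ + s₂ - m), by have := j.isLt; omega⟩ with hk
    rw [dvd_iff_isRoot, IsRoot, Matrix.mul_apply]
    have heval : Polynomial.eval c (∑ l, (sylv s₁ s₂ g f) i l * (Vm.map Polynomial.C) l j)
        = ∑ l, ((sylv s₁ s₂ g f) i l).eval c * Vm l j := by
      rw [eval_finset_sum]
      refine Finset.sum_congr rfl fun l _ => ?_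
      rw [Matrix.map_apply, eval_mul, eval_C]
    rw [heval]
    have hmapped : ∀ l, ((sylv s₁ s₂ g f) i l).eval c = (sylv s₁ s₂ gc fc) i l := by
      intro l
      have := congrFun (congrFun (sylv_map (evalRingHom c) s₁ s₂ g f) i) l
      rw [Matrix.map_apply] at this
      rw [← hgc, ← hfc] at this
      exact this
    have hVmw : ∀ l, Vm l j = w k l := by
      intro l
      simp only [hVm]
      rw [dif_pos hj.2]
    calc (∑ l, ((sylv s₁ s₂ g f) i l).eval c * Vm l j)
        = ∑ l, (sylv s₁ s₂ gc fc) i l * w k l := by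
          refine Finset.sum_congr rfl fun l _ => ?_
          rw [hmapped, hVmw]
      _ = (sylv s₁ s₂ gc fc).mulVec (w k) i := rfl
      _ = 0 := by rw [hker k, Pi.zero_apply]
  have hdvd : (X - C c) ^ m ∣ ((sylv s₁ s₂ g f) * Vm.map Polynomial.C).det := by
    have := pow_dvd_det ((sylv s₁ s₂ g f) * Vm.map Polynomial.C) c J hcol
    rwa [hJcard] at this
  rw [Matrix.det_mul] at hdvd
  have hdetmap : (Vm.map (⇑(Polynomial.C : F →+* Polynomial F))).det = Polynomial.C Vm.det := by
    rw [show Vm.map (⇑(Polynomial.C : F →+* Polynomial F))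
        = (Polynomial.C : F →+* Polynomial F).mapMatrix Vm from rfl, ← RingHom.map_det]
  rw [hdetmap] at hdvd
  have hunit : IsUnit (Polynomial.C Vm.det) :=
    Polynomial.isUnit_C.mpr (isUnit_iff_ne_zero.mpr hVdet)
  exact (hunit.dvd_mul_right).mp hdvd


/-- coarse bound on `ℙ¹×ℙ¹`. Let `g ∈ F_q[x,t] = (F_q[t])[x]` be
irreducible with `deg_x g = r+1` and `deg_t g ≤ α`, let `t_1, …, t_b` be distinct with
`g(x, t_i)` having `r+1` distinct roots `x_{i,1}, …, x_{i,r+1}` in `F_q`, and let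
`a_0, …, a_{r-1}` have degree at most `N`, not all zero. Then the number of pairs
`(i,j)` with `Σ_ℓ a_ℓ(t_i) x_{i,j}^ℓ = 0` is at most `N(r+1) + α(r-1)`, so the
evaluation code has minimum distance at least `𝔡 - α(r-1)` where `𝔡 = n - N(r+1)`,
`n = b(r+1)`. -/
theorem stmt_13 (F : Type) [Field F] [Fintype F] [DecidableEq F]
    (r α b N : ℕ) (hr : 2 ≤ r) (hα : 1 ≤ α) (hb : 1 ≤ b)
    (g : Polynomial (Polynomial F))
    (hgirr : Irreducible g)
    (hgx : g.natDegree = r + 1)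
    (hgt : ∀ i, (g.coeff i).natDegree ≤ α)
    (t : Fin b → F) (ht : Function.Injective t)
    (x : Fin b → Fin (r + 1) → F)
    (hroot : ∀ i j, (g.map (Polynomial.evalRingHom (t i))).eval (x i j) = 0)
    (hxinj : ∀ i, Function.Injective (x i))
    (a : Fin r → Polynomial F)
    (ha : ∀ ℓ, (a ℓ).degree ≤ (N : ℕ))
    (hne : ¬ ∀ ℓ, a ℓ = 0) :
    (Finset.univ.filter (fun p : Fin b × Fin (r + 1) =>
        ∑ ℓ : Fin r, (a ℓ).eval (t p.1) * (x p.1 p.2) ^ (ℓ : ℕ) = 0)).card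
      ≤ N * (r + 1) + α * (r - 1) ∧
    (b * (r + 1) - N * (r + 1)) - α * (r - 1)
      ≤ hammingNorm (fun p : Fin b × Fin (r + 1) =>
          ∑ ℓ : Fin r, (a ℓ).eval (t p.1) * (x p.1 p.2) ^ (ℓ : ℕ)) := by
  classical
  set f : Polynomial (Polynomial F) := ∑ ℓ : Fin r, Polynomial.C (a ℓ) * X ^ (ℓ : ℕ) with hfdef
  have hfcoeff : ∀ ℓ : Fin r, f.coeff ℓ = a ℓ := fun ℓ => coeff_sum_C_X r a ℓ
  have hfne : f ≠ 0 := by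
    obtain ⟨ℓ0, hℓ0⟩ := not_forall.mp hne
    intro h; apply hℓ0; rw [← hfcoeff ℓ0, h, coeff_zero]
  have hfdeg : f.natDegree ≤ r - 1 := by
    apply natDegree_sum_le_of_forall_le
    intro ℓ _
    refine le_trans natDegree_mul_le ?_
    have := ℓ.isLt
    simp only [natDegree_C, natDegree_X_pow]
    omega
  have hfcN : ∀ k, (f.coeff k).natDegree ≤ N := by
    intro k
    by_cases hk : k < r
    · rw [show k = ((⟨k, hk⟩ : Fin r) : ℕ) from rfl, hfcoeff]
      exact natDegree_le_iff_degree_le.mpr (ha _)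
    · rw [coeff_eq_zero_of_natDegree_lt (lt_of_le_of_lt hfdeg (by omega))]
      simp
  have hprim : ∀ q : Polynomial F, Polynomial.C q ∣ g → IsUnit q := by
    intro q hq
    obtain ⟨h', hh⟩ := hq
    rcases hgirr.isUnit_or_isUnit hh with hu | hu
    · exact Polynomial.isUnit_C.mp hu
    · exfalso
      have h0 : h'.natDegree = 0 := natDegree_eq_zero_of_isUnit hu
      have : g.natDegree ≤ 0 := by
        rw [hh]
        refine le_trans natDegree_mul_le ?_
        simp [h0]
      omega
  have hgcne : ∀ i : Fin b, g.map (Polynomial.evalRingHom (t i)) ≠ 0 := by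
    intro i h0
    have hco : ∀ n, (X - Polynomial.C (t i) : Polynomial F) ∣ g.coeff n := by
      intro n
      rw [dvd_iff_isRoot, IsRoot]
      have h1 : (g.map (Polynomial.evalRingHom (t i))).coeff n = 0 := by rw [h0]; simp
      rwa [Polynomial.coeff_map] at h1
    have := hprim _ ((Polynomial.C_dvd_iff_dvd_coeff _ _).mpr hco)
    exact Polynomial.not_isUnit_X_sub_C _ this
  have hgcdeg : ∀ i : Fin b, (g.map (Polynomial.evalRingHom (t i))).natDegree = r + 1 := by
    intro i
    have hle : (g.map (Polynomial.evalRingHom (t i))).natDegree ≤ r + 1 :=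
      le_trans natDegree_map_le hgx.le
    have hdvd : (∏ j : Fin (r+1), (X - Polynomial.C (x i j)))
        ∣ g.map (Polynomial.evalRingHom (t i)) :=
      Fintype.prod_dvd_of_coprime (Polynomial.pairwise_coprime_X_sub_C (hxinj i))
        fun j => dvd_iff_isRoot.mpr (hroot i j)
    have hge := natDegree_le_of_dvd hdvd (hgcne i)
    rw [natDegree_prod_of_monic _ _ (fun j _ => monic_X_sub_C _)] at hge
    simp only [natDegree_X_sub_C, Finset.sum_const, Finset.card_univ, Fintype.card_fin,
      smul_eq_mul, mul_one] at hge
    omega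
  set mm : Fin b → ℕ := fun i =>
    (Finset.univ.filter fun j : Fin (r+1) =>
      (f.map (Polynomial.evalRingHom (t i))).eval (x i j) = 0).card with hmm
  have hpred : ∀ (i : Fin b) (j : Fin (r+1)),
      (∑ ℓ : Fin r, (a ℓ).eval (t i) * (x i j) ^ (ℓ : ℕ))
        = (f.map (Polynomial.evalRingHom (t i))).eval (x i j) := by
    intro i j
    rw [hfdef]
    simp [Polynomial.map_sum, Polynomial.eval_finset_sum]
  have key : ∀ i : Fin b, (X - Polynomial.C (t i)) ^ (mm i) ∣ (sylv (r-1) (r+1) g f).det := by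
    intro i
    set W := Finset.univ.filter fun j : Fin (r+1) =>
      (f.map (Polynomial.evalRingHom (t i))).eval (x i j) = 0 with hW
    have hWcard : W.card = mm i := rfl
    set y : Fin (mm i) → F := fun k => x i ((W.orderIsoOfFin hWcard k : W) : Fin (r+1)) with hy
    have hyinj : Function.Injective y := by
      intro k1 k2 hk
      have h1 := hxinj i hk
      exact (W.orderIsoOfFin hWcard).injective (Subtype.ext h1)
    have hyg : ∀ k, (g.map (Polynomial.evalRingHom (t i))).eval (y k) = 0 := fun k =>
      hroot i _
    have hyf : ∀ k, (f.map (Polynomial.evalRingHom (t i))).eval (y k) = 0 := by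
      intro k
      exact (Finset.mem_filter.mp (W.orderIsoOfFin hWcard k).2).2
    exact sylv_multiplicity (by omega) g f hfdeg (t i) (hgcne i) (hgcdeg i) y hyinj hyg hyf
  have hdetne : (sylv (r-1) (r+1) g f).det ≠ 0 :=
    sylv_det_ne_zero (by omega) (by omega) g f hgirr hgx hfne hfdeg
  have hdeg : (sylv (r-1) (r+1) g f).det.natDegree ≤ (r-1) * α + (r+1) * N := by
    have hb1 : ∀ (i j : Fin ((r-1) + (r+1))),
        ((sylv (r-1) (r+1) g f) i j).natDegree
          ≤ (fun j : Fin ((r-1) + (r+1)) => if (j : ℕ) < r - 1 then α else N) j := by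
      intro i j
      by_cases hj : (j : ℕ) < r - 1
      · simp only [sylv, if_pos hj]
        rw [Polynomial.coeff_mul_X_pow']
        split
        · exact hgt _
        · simp
      · simp only [sylv, if_neg hj]
        rw [Polynomial.coeff_mul_X_pow']
        split
        · exact hfcN _
        · simp
    refine le_trans (natDegree_det_le _ _ hb1) ?_
    rw [Fin.sum_univ_add]
    have h1 : (∑ j : Fin (r-1), if ((Fin.castAdd (r+1) j : Fin ((r-1)+(r+1))) : ℕ) < r - 1
        then α else N) = (r-1) * α := by
      rw [Finset.sum_congr rfl fun j _ => if_pos j.isLt]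
      simp [mul_comm]
    have h2 : (∑ j : Fin (r+1), if ((Fin.natAdd (r-1) j : Fin ((r-1)+(r+1))) : ℕ) < r - 1
        then α else N) = (r+1) * N := by
      rw [Finset.sum_congr rfl fun j _ => if_neg (by simp only [Fin.coe_natAdd]; omega)]
      simp [mul_comm]
    rw [h1, h2]
  have hprodd : (∏ i : Fin b, (X - Polynomial.C (t i)) ^ (mm i)) ∣ (sylv (r-1) (r+1) g f).det :=
    Fintype.prod_dvd_of_coprime
      (fun i j hij => ((Polynomial.pairwise_coprime_X_sub_C ht) hij).pow) key
  have hsum : ∑ i, mm i ≤ (r-1) * α + (r+1) * N := by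
    have hdd := natDegree_le_of_dvd hprodd hdetne
    rw [Polynomial.natDegree_prod _ _
      (fun i _ => pow_ne_zero _ (Polynomial.X_sub_C_ne_zero _))] at hdd
    simp only [natDegree_pow, natDegree_X_sub_C, mul_one] at hdd
    omega
  have hcount : (Finset.univ.filter (fun p : Fin b × Fin (r + 1) =>
        ∑ ℓ : Fin r, (a ℓ).eval (t p.1) * (x p.1 p.2) ^ (ℓ : ℕ) = 0)).card = ∑ i, mm i := by
    rw [Finset.card_filter, Fintype.sum_prod_type]
    refine Finset.sum_congr rfl fun i _ => ?_
    show _ = (Finset.univ.filter fun j : Fin (r+1) =>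
      (f.map (Polynomial.evalRingHom (t i))).eval (x i j) = 0).card
    rw [Finset.card_filter]
    refine Finset.sum_congr rfl fun j _ => ?_
    rw [hpred i j]
  have hbound1 : (Finset.univ.filter (fun p : Fin b × Fin (r + 1) =>
        ∑ ℓ : Fin r, (a ℓ).eval (t p.1) * (x p.1 p.2) ^ (ℓ : ℕ) = 0)).card
      ≤ N * (r + 1) + α * (r - 1) := by
    rw [hcount]
    calc ∑ i, mm i ≤ (r-1) * α + (r+1) * N := hsum
      _ = N * (r + 1) + α * (r - 1) := by ring
  refine ⟨hbound1, ?_⟩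
  have htotal : (Finset.univ.filter (fun p : Fin b × Fin (r + 1) =>
        ∑ ℓ : Fin r, (a ℓ).eval (t p.1) * (x p.1 p.2) ^ (ℓ : ℕ) = 0)).card
      + (Finset.univ.filter (fun p : Fin b × Fin (r + 1) =>
        ¬ (∑ ℓ : Fin r, (a ℓ).eval (t p.1) * (x p.1 p.2) ^ (ℓ : ℕ) = 0))).card
      = b * (r + 1) := by
    rw [Finset.card_filter_add_card_filter_not]
    simp
  have hham : hammingNorm (fun p : Fin b × Fin (r + 1) =>
        ∑ ℓ : Fin r, (a ℓ).eval (t p.1) * (x p.1 p.2) ^ (ℓ : ℕ))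
      = (Finset.univ.filter (fun p : Fin b × Fin (r + 1) =>
        ¬ (∑ ℓ : Fin r, (a ℓ).eval (t p.1) * (x p.1 p.2) ^ (ℓ : ℕ) = 0))).card := by
    rfl
  omega
end

section
/- Let m ≥ 0 be an integer and let α, r be positive integers with α dividing r+1 and α < r+1. Then Σ_{i=0}^{r−1} ⌈i(α + m(r+1))/(r+1)⌉ = (α+1)(r+1)/2 − 2α + m·r(r−1)/2. -/
lemma ceil_small (k i : ℕ) (h0 : 0 < i) (h1 : i < k) : ⌈(i:ℚ)/k⌉ = 1 := by
  have hk : (0:ℚ) < k := by exact_mod_cast h0.trans h1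
  rw [Int.ceil_eq_iff]
  refine ⟨by simpa using div_pos (by exact_mod_cast h0) hk, ?_⟩
  push_cast
  rw [div_le_one hk]; exact_mod_cast h1.le

lemma ceil_shift (k a i : ℕ) (hk : 0 < k) :
    ⌈((a*k+i:ℕ):ℚ)/k⌉ = a + ⌈(i:ℚ)/k⌉ := by
  have hk' : (k:ℚ) ≠ 0 := by positivity
  have : ((a*k+i:ℕ):ℚ)/k = (i:ℚ)/k + (a:ℤ) := by
    push_cast; field_simp; ring
  rw [this, Int.ceil_add_intCast]; ring

lemma block_sum_s14 (k : ℕ) (hk : 0 < k) (a : ℕ) :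
    ∑ i ∈ Finset.range k, ⌈((a*k+i:ℕ):ℚ)/k⌉ = a*k + (k-1) := by
  have h1 : ∀ i ∈ Finset.range k, ⌈((a*k+i:ℕ):ℚ)/k⌉
      = (a:ℤ) + (1 - if i = 0 then 1 else 0) := by
    intro i hi
    rw [ceil_shift k a i hk]
    congr 1
    rcases Nat.eq_zero_or_pos i with h | h
    · simp [h]
    · rw [if_neg h.ne', ceil_small k i h (Finset.mem_range.mp hi)]; ring
  rw [Finset.sum_congr rfl h1, Finset.sum_add_distrib, Finset.sum_sub_distrib,
    Finset.sum_const, Finset.sum_const,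
    Finset.sum_ite_eq' (Finset.range k) 0 (fun _ => (1:ℤ))]
  simp [Finset.mem_range.mpr hk]
  ring

lemma main_sum (k : ℕ) (hk : 0 < k) : ∀ a : ℕ,
    (2:ℤ) * ∑ i ∈ Finset.range (a*k), ⌈(i:ℚ)/k⌉ = k*a*((a:ℤ)-1) + 2*a*(k-1) := by
  intro a
  induction a with
  | zero => simp
  | succ a ih =>
    rw [Nat.succ_mul, Finset.sum_range_add, block_sum_s14 k hk a, mul_add, ih]
    push_cast; ring

/-- for `m ≥ 0` and positive integers `α, r` with `α ∣ (r+1)` and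
`α < r+1`, the sum `Σ_{i=0}^{r-1} ⌈i(α + m(r+1))/(r+1)⌉` equals
`(α+1)(r+1)/2 - 2α + m·r(r-1)/2`. -/
theorem stmt_14 (m α r : ℕ) (hα : 0 < α) (hr : 0 < r)
    (hdvd : α ∣ (r + 1)) (hlt : α < r + 1) :
    (∑ i ∈ Finset.range r,
        ⌈((i : ℚ) * ((α : ℚ) + (m : ℚ) * ((r : ℚ) + 1))) / ((r : ℚ) + 1)⌉)
      = ((α : ℤ) + 1) * ((r : ℤ) + 1) / 2 - 2 * (α : ℤ)
        + (m : ℤ) * ((r : ℤ) * ((r : ℤ) - 1)) / 2 := by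
  obtain ⟨k, hk⟩ := hdvd
  have hk1 : 0 < k := by
    rcases Nat.eq_zero_or_pos k with h | h
    · subst h; simp at hk
    · exact h
  have hk2 : 2 ≤ k := by
    have h1 : α * 1 < α * k := by rw [Nat.mul_one]; exact hlt.trans_eq hk
    have := Nat.lt_of_mul_lt_mul_left h1
    omega
  obtain ⟨a, rfl⟩ : ∃ a, α = a + 1 := ⟨α - 1, by omega⟩
  have hrz : (r:ℤ) + 1 = ((a:ℤ) + 1) * k := by exact_mod_cast hk
  have hrq : (r:ℚ) + 1 = ((a:ℚ) + 1) * k := by exact_mod_cast hk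
  have hkq : (k:ℚ) ≠ 0 := by positivity
  -- split each ceiling
  have hterm : ∀ i ∈ Finset.range r,
      ⌈((i : ℚ) * (((a+1 : ℕ) : ℚ) + (m : ℚ) * ((r : ℚ) + 1))) / ((r : ℚ) + 1)⌉
        = ((i*m : ℕ) : ℤ) + ⌈(i:ℚ)/k⌉ := by
    intro i _
    have h1 : ((i : ℚ) * (((a+1 : ℕ) : ℚ) + (m : ℚ) * ((r : ℚ) + 1))) / ((r : ℚ) + 1)
        = (i:ℚ)/k + ((i*m : ℕ) : ℤ) := by
      rw [hrq]
      have ha1 : ((a:ℚ) + 1) ≠ 0 := by positivity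
      push_cast
      field_simp
    rw [h1, Int.ceil_add_intCast]; ring
  rw [Finset.sum_congr rfl hterm, Finset.sum_add_distrib]
  -- ceiling at r
  have hceil_r : ⌈(r:ℚ)/k⌉ = (a:ℤ) + 1 := by
    have h1 : a*k + (k-1) = r := by
      have h2 : r + 1 = a*k + k := by rw [hk]; ring
      set t := a*k with ht
      omega
    rw [← h1, ceil_shift k a (k-1) hk1, ceil_small k (k-1) (by omega) (by omega)]
  -- sum of ceilings over range r
  have hS : 2 * ∑ i ∈ Finset.range r, ⌈(i:ℚ)/k⌉
      = (k:ℤ)*((a:ℤ)+1)*(a:ℤ) + 2*((a:ℤ)+1)*((k:ℤ)-1) - 2*((a:ℤ)+1) := by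
    have h := main_sum k hk1 (a+1)
    rw [show (a+1)*k = r+1 from hk.symm, Finset.sum_range_succ, hceil_r] at h
    push_cast at h ⊢
    linarith
  -- Gauss sum
  have hG : (2:ℤ) * ∑ i ∈ Finset.range r, ((i*m : ℕ) : ℤ) = (m:ℤ)*((r:ℤ)*((r:ℤ)-1)) := by
    have h := Finset.sum_range_id_mul_two r
    have h2 := congrArg (fun n : ℕ => (n:ℤ)) h
    push_cast [Nat.cast_sub (by omega : 1 ≤ r)] at h2 ⊢
    have h3 : (∑ x ∈ Finset.range r, (x:ℤ)) * (m:ℤ) = ∑ x ∈ Finset.range r, (x:ℤ)*(m:ℤ) :=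
      Finset.sum_mul ..
    rw [← h3]
    linear_combination (m:ℤ) * h2
  have key : 2 * (∑ i ∈ Finset.range r, ((i*m : ℕ) : ℤ) + ∑ i ∈ Finset.range r, ⌈(i:ℚ)/k⌉)
      = (((a:ℤ)+1)+1)*((r:ℤ)+1) - 4*((a:ℤ)+1) + (m:ℤ)*((r:ℤ)*((r:ℤ)-1)) := by
    rw [mul_add, hG, hS, hrz]; ring
  have hA : (2:ℤ) ∣ (((a:ℤ)+1)+1)*((r:ℤ)+1) := by
    obtain ⟨c, hc⟩ := Int.even_mul_succ_self ((a:ℤ)+1)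
    exact ⟨c*k, by rw [hrz]; linear_combination (k:ℤ)*hc⟩
  have hB : (2:ℤ) ∣ (m:ℤ)*((r:ℤ)*((r:ℤ)-1)) := by
    obtain ⟨c, hc⟩ := Int.even_mul_succ_self ((r:ℤ)-1)
    exact ⟨(m:ℤ)*c, by linear_combination (m:ℤ)*hc⟩
  obtain ⟨x, hx⟩ := hA
  obtain ⟨y, hy⟩ := hB
  push_cast
  rw [show ((a:ℤ)+1+1)*((r:ℤ)+1) = 2*x from hx, show (m:ℤ)*((r:ℤ)*((r:ℤ)-1)) = 2*y from hy,
    Int.mul_ediv_cancel_left x (by norm_num), Int.mul_ediv_cancel_left y (by norm_num)]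
  rw [hx, hy] at key
  push_cast at key
  linarith [key]
end
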